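/- arXiv:1404.0715 — 9 statements merged into one kernel-verified Lean document; each statement's English description precedes it below -/
import Mathlib

section
/- Let g be a finite-dimensional simple Lie algebra with sl2-triple {e,h=2x,f} and r ∈ g_{≥0}. The map ad(f+r) restricted to [e,g] is injective, hence a bijection from [e,g] onto [f+r,[e,g]]. -/
open Module LieAlgebra
open scoped TensorProduct

section Core
set_option linter.unusedSectionVars false

variable {K : Type*} [Field K] [CharZero K]
variable {L : Type*} [LieRing L] [LieAlgebra K L] [Module.Finite K L]

lemma aux_shift_single (x b : L) (c : K) (hb : ⁅x, b⁆ = c • b) (μ : K) (u : L) :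
    (ad K L x - (μ + c) • 1) ⁅b, u⁆ = ⁅b, (ad K L x - μ • 1) u⁆ := by
  have h := leibniz_lie x b u
  simp only [LinearMap.sub_apply, LinearMap.add_apply, LinearMap.smul_apply, Module.End.one_apply,
    ad_apply, h, hb, smul_lie, lie_sub, lie_smul, add_smul]
  module

lemma aux_pow_shift (x b : L) (c : K) (hb : ⁅x, b⁆ = c • b) (μ : K) (k : ℕ) (v : L) :
    ((ad K L x - (μ + c) • 1) ^ k) ⁅b, v⁆ = ⁅b, ((ad K L x - μ • 1) ^ k) v⁆ := by
  induction k with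
  | zero => simp
  | succ k ih =>
    rw [pow_succ', pow_succ', Module.End.mul_apply, Module.End.mul_apply, ih,
      aux_shift_single x b c hb μ]

lemma aux_maxGen_shift (x b : L) (c : K) (hb : ⁅x, b⁆ = c • b) {μ : K} {v : L}
    (hv : v ∈ (ad K L x).maxGenEigenspace μ) :
    ⁅b, v⁆ ∈ (ad K L x).maxGenEigenspace (μ + c) := by
  rw [Module.End.mem_maxGenEigenspace] at hv ⊢
  obtain ⟨k, hk⟩ := hv
  exact ⟨k, by rw [aux_pow_shift x b c hb μ k v, hk, lie_zero]⟩

end Core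

section Core2
set_option linter.unusedSectionVars false

variable {K : Type*} [Field K] [CharZero K]
variable {L : Type*} [LieRing L] [LieAlgebra K L] [Module.Finite K L]

lemma aux_prim_e (x e f : L) (ht : IsSl2Triple ((2:K) • x) e f) {v : L} {ν : K}
    (hv0 : v ≠ 0) (hxv : ⁅x, v⁆ = ν • v) (hev : ⁅e, v⁆ = 0) : ∃ n : ℕ, 2 * ν = (n : K) := by
  have hP : ht.HasPrimitiveVectorWith v (2 * ν) :=
    ⟨hv0, by rw [smul_lie, hxv, smul_smul], hev⟩
  exact hP.exists_nat

lemma aux_prim_f (x e f : L) (ht : IsSl2Triple ((2:K) • x) e f) {v : L} {ν : K}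
    (hv0 : v ≠ 0) (hxv : ⁅x, v⁆ = ν • v) (hfv : ⁅f, v⁆ = 0) : ∃ n : ℕ, -(2 * ν) = (n : K) := by
  have hP : ht.symm.HasPrimitiveVectorWith v (-(2 * ν)) :=
    ⟨hv0, by rw [neg_lie, smul_lie, hxv, smul_smul, neg_smul], hfv⟩
  exact hP.exists_nat

lemma aux_exists_eigenvector (x : L) (W : Submodule K L) (hW : W ≠ ⊥)
    (hWx : ∀ w ∈ W, ⁅x, w⁆ ∈ W) (μ : K)
    (hWμ : ∀ w ∈ W, w ∈ (ad K L x).maxGenEigenspace μ) :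
    ∃ v ∈ W, v ≠ 0 ∧ ⁅x, v⁆ = μ • v := by
  classical
  set A : Module.End K L := ad K L x - μ • 1 with hA
  obtain ⟨u, huW, hu0⟩ := Submodule.exists_mem_ne_zero_of_ne_bot hW
  obtain ⟨k, hk⟩ := (Module.End.mem_maxGenEigenspace _ _ _).mp (hWμ u huW)
  have hex : ∃ j, (A ^ j) u = 0 := ⟨k, hk⟩
  have hj : (A ^ (Nat.find hex)) u = 0 := Nat.find_spec hex
  have hj1 : 1 ≤ Nat.find hex := by
    rcases Nat.eq_zero_or_pos (Nat.find hex) with h0 | h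
    · exfalso; apply hu0; simpa [h0] using hj
    · exact h
  have hlt : (A ^ (Nat.find hex - 1)) u ≠ 0 := Nat.find_min hex (by omega)
  have hmem : ∀ i, (A ^ i) u ∈ W := by
    intro i; induction i with
    | zero => simpa using huW
    | succ i ih =>
      rw [pow_succ', Module.End.mul_apply]
      have h1 := hWx _ ih
      simpa [hA, LinearMap.sub_apply, ad_apply] using W.sub_mem h1 (W.smul_mem μ ih)
  refine ⟨(A ^ (Nat.find hex - 1)) u, hmem _, hlt, ?_⟩
  have h2 : A ((A ^ (Nat.find hex - 1)) u) = 0 := by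
    rw [← Module.End.mul_apply, ← pow_succ']
    have h3 : Nat.find hex - 1 + 1 = Nat.find hex := by omega
    rw [h3]; exact hj
  have key : ∀ v' : L, A v' = 0 → ⁅x, v'⁆ = μ • v' := by
    intro v' hv'
    simp only [hA, LinearMap.sub_apply, LinearMap.smul_apply, Module.End.one_apply, ad_apply,
      sub_eq_zero] at hv'
    exact hv'
  exact key _ h2


lemma aux_sub_apply (x : L) (μ : K) (u : L) :
    (ad K L x - μ • 1) u = ⁅x, u⁆ - μ • u := by
  simp [LinearMap.sub_apply, ad_apply]

lemma aux_lemA [IsAlgClosed K] (x e f : L) (ht : IsSl2Triple ((2:K) • x) e f)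
    (hxe : ⁅x, e⁆ = e) (hxf : ⁅x, f⁆ = -f)
    (μ : K) (v : L) (hv : v ∈ (ad K L x).maxGenEigenspace μ)
    (hfv : ⁅f, v⁆ = 0) (hev : v ∈ LinearMap.range (ad K L e)) : v = 0 := by
  classical
  by_contra hv0
  have hxe' : ⁅x, e⁆ = (1:K) • e := by rw [one_smul]; exact hxe
  have hxf' : ⁅x, f⁆ = (-1:K) • f := by rw [neg_one_smul]; exact hxf
  set G : K → Submodule K L := (ad K L x).maxGenEigenspace with hG
  set W := LinearMap.range (ad K L e) ⊓ LinearMap.ker (ad K L f) ⊓ G μ with hW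
  have hvW : v ∈ W := ⟨⟨hev, by simpa [LinearMap.mem_ker, ad_apply] using hfv⟩, hv⟩
  have hWne : W ≠ ⊥ := fun h => hv0 (by rw [h] at hvW; simpa using hvW)
  have hWx : ∀ w ∈ W, ⁅x, w⁆ ∈ W := by
    rintro w ⟨⟨⟨u, hu⟩, hker⟩, hg⟩
    rw [ad_apply] at hu
    refine ⟨⟨⟨u + ⁅x, u⁆, ?_⟩, ?_⟩, ?_⟩
    · have h1 : ⁅x, ⁅e, u⁆⁆ = ⁅e, u⁆ + ⁅e, ⁅x, u⁆⁆ := by rw [leibniz_lie x e u, hxe]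
      rw [ad_apply, lie_add, ← hu, h1]
    · have hkf : ⁅f, w⁆ = 0 := by simpa [LinearMap.mem_ker, ad_apply] using hker
      have h2 : ⁅f, x⁆ = f := by rw [← lie_skew, hxf, neg_neg]
      have h3 : ⁅f, ⁅x, w⁆⁆ = 0 := by rw [leibniz_lie f x w, h2, hkf, lie_zero, add_zero]
      simpa [LinearMap.mem_ker, ad_apply] using h3
    · have hg' : w ∈ (ad K L x).maxGenEigenspace μ := hg
      have h6 := aux_maxGen_shift x x (0:K) (by simp) hg'
      rw [add_zero] at h6
      exact h6
  have hWμ : ∀ w ∈ W, w ∈ (ad K L x).maxGenEigenspace μ := fun w hw => hw.2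
  obtain ⟨v₀, hv₀W, hv₀0, hxv₀⟩ := aux_exists_eigenvector x W hWne hWx μ hWμ
  have hv₀f : ⁅f, v₀⁆ = 0 := by
    have h1 := hv₀W.1.2; simpa [LinearMap.mem_ker, ad_apply] using h1
  have hv₀e : v₀ ∈ LinearMap.range (ad K L e) := hv₀W.1.1
  obtain ⟨m, hm⟩ := aux_prim_f x e f ht hv₀0 hxv₀ hv₀f
  -- get w ∈ G (μ - 1) with ⁅e, w⁆ = v₀
  have span_le : (K ∙ v₀) ≤ G μ := by
    rw [Submodule.span_singleton_le_iff_mem]; exact hv₀W.2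
  set P := Submodule.comap (ad K L e) (K ∙ v₀) with hP
  have hPx : ∀ u ∈ P, (ad K L x) u ∈ P := by
    intro u hu
    rw [Submodule.mem_comap, ad_apply] at hu ⊢
    rw [ad_apply]
    have h1 : ⁅e, ⁅x, u⁆⁆ = ⁅x, ⁅e, u⁆⁆ - ⁅⁅x, e⁆, u⁆ := by
      rw [leibniz_lie x e u]; abel
    rw [h1, hxe]
    obtain ⟨c, hc⟩ := Submodule.mem_span_singleton.mp hu
    refine Submodule.sub_mem _ ?_ hu
    rw [← hc, lie_smul, hxv₀]
    exact Submodule.smul_mem _ _ (Submodule.smul_mem _ _ (Submodule.mem_span_singleton_self v₀))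
  have htop : ⨆ ν, (ad K L x).genEigenspace ν ⊤ = ⊤ :=
    Module.End.iSup_maxGenEigenspace_eq_top (ad K L x)
  have hPdec := Submodule.eq_iSup_inf_genEigenspace (p := P) (f := ad K L x) ⊤ hPx htop
  obtain ⟨w', hw'⟩ := hv₀e
  rw [ad_apply] at hw'
  have hw'P : w' ∈ P := by
    rw [hP, Submodule.mem_comap, ad_apply, hw']
    exact Submodule.mem_span_singleton_self v₀
  rw [hPdec] at hw'P
  obtain ⟨c, hc, hcsum⟩ := (Submodule.mem_iSup_iff_exists_finsupp _ _).mp hw'P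
  have hv₀sum : v₀ = ∑ ν ∈ c.support, ⁅e, c ν⁆ := by
    rw [← hw', ← hcsum, Finsupp.sum, ← ad_apply (R := K), map_sum]
    simp only [ad_apply]
  have hterm : ∀ ν ∈ c.support, ν ≠ μ - 1 → ⁅e, c ν⁆ = 0 := by
    intro ν _ hν
    have h1 : ⁅e, c ν⁆ ∈ K ∙ v₀ := by
      have h1' := (hc ν).1
      simp only [SetLike.mem_coe, Submodule.mem_comap, ad_apply, P] at h1'
      exact h1'
    have hcν : c ν ∈ (ad K L x).maxGenEigenspace ν := (hc ν).2
    have h2 : ⁅e, c ν⁆ ∈ G (ν + 1) := aux_maxGen_shift x e 1 hxe' hcν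
    have h3 : ν + 1 ≠ μ := fun h => hν (by rw [← h]; ring)
    have h4 := Module.End.disjoint_genEigenspace (ad K L x) h3 ⊤ ⊤
    exact h4.le_bot ⟨h2, span_le h1⟩
  have hkey : v₀ = ⁅e, c (μ - 1)⁆ := by
    rw [hv₀sum]
    apply Finset.sum_eq_single
    · intro b hb hbne; exact hterm b hb hbne
    · intro hnot
      rw [Finsupp.notMem_support_iff.mp hnot, lie_zero]
  set w := c (μ - 1) with hwdef
  have hwG : w ∈ G (μ - 1) := (hc (μ - 1)).2
  have hw0 : w ≠ 0 := fun h => hv₀0 (by rw [hkey, h, lie_zero])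
  -- nilpotency analysis
  set A : Module.End K L := ad K L x - (μ - 1) • 1 with hA
  have hex : ∃ j, (A ^ j) w = 0 := (Module.End.mem_maxGenEigenspace _ _ _).mp hwG
  have hjspec : (A ^ (Nat.find hex)) w = 0 := Nat.find_spec hex
  have hj1 : 1 ≤ Nat.find hex := by
    rcases Nat.eq_zero_or_pos (Nat.find hex) with h0 | h
    · exfalso; apply hw0; simpa [h0] using hjspec
    · exact h
  have hv₀pow : ∀ i, 1 ≤ i → ((ad K L x - μ • 1) ^ i) v₀ = 0 := by
    intro i hi
    obtain ⟨i', rfl⟩ : ∃ i', i = i' + 1 := ⟨i - 1, by omega⟩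
    rw [pow_succ, Module.End.mul_apply, aux_sub_apply, hxv₀, sub_self, map_zero]
  by_cases hj2 : 2 ≤ Nat.find hex
  · -- generalized case
    set u₀ := (A ^ (Nat.find hex - 1)) w with hu₀
    have hu₀0 : u₀ ≠ 0 := Nat.find_min hex (by omega)
    have hu₀x : ⁅x, u₀⁆ = (μ - 1) • u₀ := by
      have h2 : A u₀ = 0 := by
        rw [hu₀, ← Module.End.mul_apply, ← pow_succ']
        have h3 : Nat.find hex - 1 + 1 = Nat.find hex := by omega
        rw [h3]; exact hjspec
      rw [hA, aux_sub_apply, sub_eq_zero] at h2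
      exact h2
    have hu₀e : ⁅e, u₀⁆ = 0 := by
      have h5 := aux_pow_shift x e 1 hxe' (μ - 1) (Nat.find hex - 1) w
      rw [← hkey] at h5
      have h6 : μ - 1 + 1 = μ := by ring
      rw [h6] at h5
      rw [← hu₀] at h5
      rw [← h5]
      exact hv₀pow _ (by omega)
    obtain ⟨n, hn⟩ := aux_prim_e x e f ht hu₀0 hu₀x hu₀e
    have hzero : ((n + m + 2 : ℕ) : K) = 0 := by
      push_cast
      linear_combination -hn - hm
    exact absurd (Nat.cast_eq_zero.mp hzero) (by omega)
  · -- honest eigenvector case: Nat.find hex = 1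
    have hjeq : Nat.find hex = 1 := by omega
    have hwx : ⁅x, w⁆ = (μ - 1) • w := by
      have h2 : A w = 0 := by
        have := hjspec; rw [hjeq, pow_one] at this; exact this
      rw [hA, aux_sub_apply, sub_eq_zero] at h2
      exact h2
    set wseq : ℕ → L := fun i => ((ad K L f) ^ i) w with hwseq
    have hwseq_succ : ∀ i, wseq (i + 1) = ⁅f, wseq i⁆ := by
      intro i
      rw [hwseq]
      simp only [pow_succ', Module.End.mul_apply, ad_apply]
    have hstep : ∀ (u : L) (ν : K), ⁅x, u⁆ = ν • u → ⁅x, ⁅f, u⁆⁆ = (ν - 1) • ⁅f, u⁆ := by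
      intro u ν hu
      rw [leibniz_lie x f u, hxf, hu, lie_smul, neg_lie, sub_smul, one_smul]
      abel
    have ha : ∀ i, ⁅x, wseq i⁆ = (μ - 1 - i) • wseq i := by
      intro i; induction i with
      | zero => simpa [hwseq] using hwx
      | succ i ih =>
        rw [hwseq_succ i]
        have := hstep _ _ ih
        rw [this]
        have : (μ - 1 - i - 1 : K) = μ - 1 - (i + 1 : ℕ) := by push_cast; ring
        rw [← this]
    have hb : ∀ i, ⁅e, wseq (i + 1)⁆ = ((i + 1 : ℕ) * (2 * μ - 2 - i)) • wseq i := by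
      intro i; induction i with
      | zero =>
        rw [hwseq_succ 0, leibniz_lie e f, ht.lie_e_f, smul_lie]
        have h0 : ⁅e, wseq 0⁆ = v₀ := by rw [hwseq]; simpa using hkey.symm
        rw [h0, hv₀f, add_zero]
        have h1 : ⁅x, wseq 0⁆ = (μ - 1) • wseq 0 := by simpa using ha 0
        rw [h1]
        rw [smul_smul]
        congr 1
        push_cast; ring
      | succ i ih =>
        rw [hwseq_succ (i + 1), leibniz_lie e f, ht.lie_e_f, smul_lie, ha (i + 1), ih,
          lie_smul, ← hwseq_succ i, smul_smul, ← add_smul]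
        congr 1
        push_cast; ring
    by_cases hall : ∀ i, wseq i ≠ 0
    · -- infinitely many eigenvectors
      have hinj : Function.Injective (fun i : ℕ => (μ - 1 - i : K)) := by
        intro a b hab
        simp only at hab
        have : (a : K) = b := by linear_combination -hab
        exact_mod_cast this
      have hli : LinearIndependent K wseq :=
        Module.End.eigenvectors_linearIndependent' (ad K L x) _ hinj wseq
          (fun i => ⟨Module.End.mem_eigenspace_iff.mpr (by rw [ad_apply]; exact ha i), hall i⟩)
      haveI : Finite ℕ := hli.finite
      exact not_finite ℕ
    · push_neg at hall
      have hex2 : ∃ i, wseq i = 0 := hall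
      have hi0 : wseq (Nat.find hex2) = 0 := Nat.find_spec hex2
      have hi1 : 1 ≤ Nat.find hex2 := by
        rcases Nat.eq_zero_or_pos (Nat.find hex2) with h0 | h
        · exfalso; apply hw0; simpa [h0, hwseq] using hi0
        · exact h
      obtain ⟨i', hi'⟩ : ∃ i', Nat.find hex2 = i' + 1 := ⟨Nat.find hex2 - 1, by omega⟩
      have hprev : wseq i' ≠ 0 := Nat.find_min hex2 (by omega)
      have h7 : ((i' + 1 : ℕ) * (2 * μ - 2 - i') : K) • wseq i' = 0 := by
        rw [← hb i', ← hi', hi0, lie_zero]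
      rcases smul_eq_zero.mp h7 with h8 | h8
      · rcases mul_eq_zero.mp h8 with h9 | h9
        · exact absurd h9 (Nat.cast_ne_zero.mpr (by omega))
        · -- 2μ - 2 - i' = 0, but 2μ = -m
          have hzero : ((m + i' + 2 : ℕ) : K) = 0 := by
            push_cast
            linear_combination -h9 - hm
          exact absurd (Nat.cast_eq_zero.mp hzero) (by omega)
      · exact absurd h8 hprev

theorem aux_core [IsAlgClosed K] (e x f : L)
    (hxe : ⁅x, e⁆ = e) (hxf : ⁅x, f⁆ = -f) (hef : ⁅e, f⁆ = (2 : K) • x)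
    (r : L)
    (hr : r ∈ ⨆ k : ℚ, ⨆ _ : (0:ℚ) ≤ k, Module.End.eigenspace (ad K L x) (k : K))
    (y : L) (hy : y ∈ LinearMap.range (ad K L e)) (hy0 : ⁅f + r, y⁆ = 0) : y = 0 := by
  classical
  by_cases hx0 : x = 0
  · obtain ⟨z, hz⟩ := hy
    have he0 : e = 0 := by rw [← hxe, hx0, zero_lie]
    rw [← hz, ad_apply, he0, zero_lie]
  have ht : IsSl2Triple ((2:K) • x) e f := by
    refine ⟨smul_ne_zero two_ne_zero hx0, hef, ?_, ?_⟩
    · rw [smul_lie, hxe, ← Nat.cast_smul_eq_nsmul K 2 e, Nat.cast_ofNat]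
    · rw [smul_lie, hxf, smul_neg, ← Nat.cast_smul_eq_nsmul K 2 f, Nat.cast_ofNat]
  have hxe' : ⁅x, e⁆ = (1:K) • e := by rw [one_smul]; exact hxe
  have hxf' : ⁅x, f⁆ = (-1:K) • f := by rw [neg_one_smul]; exact hxf
  by_contra hy0'
  set G : K → Submodule K L := (ad K L x).maxGenEigenspace with hG
  have htop : ⨆ ν, (ad K L x).genEigenspace ν ⊤ = ⊤ :=
    Module.End.iSup_maxGenEigenspace_eq_top (ad K L x)
  set V := LinearMap.range (ad K L e) with hV
  have hVx : ∀ u ∈ V, (ad K L x) u ∈ V := by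
    rintro u ⟨z, hz⟩
    rw [ad_apply] at hz
    refine ⟨z + ⁅x, z⁆, ?_⟩
    have h1 : ⁅x, ⁅e, z⁆⁆ = ⁅e, z⁆ + ⁅e, ⁅x, z⁆⁆ := by rw [leibniz_lie x e z, hxe]
    rw [ad_apply, ad_apply, lie_add, ← h1, hz]
  have hdec := Submodule.eq_iSup_inf_genEigenspace (p := V) (f := ad K L x) ⊤ hVx htop
  rw [hdec] at hy
  obtain ⟨c, hc, hcsum⟩ := (Submodule.mem_iSup_iff_exists_finsupp _ _).mp hy
  have hsupp_ne : c.support.Nonempty := by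
    rw [Finsupp.support_nonempty_iff]
    intro h
    apply hy0'
    rw [← hcsum, h, Finsupp.sum_zero_index]
  obtain ⟨ν₁, hν₁⟩ := hsupp_ne
  set S : Set ℚ := {q : ℚ | ν₁ + (q : K) ∈ c.support} with hS
  have hSfin : S.Finite := by
    have hinj : Set.InjOn (fun q : ℚ => ν₁ + (q : K)) ((fun q : ℚ => ν₁ + (q : K)) ⁻¹' c.support) := by
      intro a _ b _ hab
      simp only [add_right_inj] at hab
      exact_mod_cast hab
    exact Set.Finite.preimage hinj c.support.finite_toSet
  have h0S : (0:ℚ) ∈ S := by simpa [hS] using hν₁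
  obtain ⟨q₀, hq₀S, hq₀min⟩ := Set.exists_min_image S id hSfin ⟨0, h0S⟩
  set ν₀ : K := ν₁ + (q₀ : K) with hν₀def
  have hν₀ : ν₀ ∈ c.support := hq₀S
  have hmin : ∀ q : ℚ, 0 < q → (ν₀ - (q : K)) ∉ (c.support : Set K) := by
    intro q hq hmem
    have hmem' : (q₀ - q) ∈ S := by
      rw [hS]
      have : ν₁ + ((q₀ - q : ℚ) : K) = ν₀ - (q : K) := by push_cast; ring
      rw [Set.mem_setOf_eq, this]
      exact hmem
    have := hq₀min _ hmem'
    simp only [id] at this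
    linarith
  set Z : Submodule K L := ⨆ (ν : K) (_ : ν ≠ ν₀ - 1), G ν with hZ
  have hGle : ∀ ν : K, ν ≠ ν₀ - 1 → G ν ≤ Z := by
    intro ν hν
    rw [hZ]
    exact le_iSup_of_le ν (le_iSup_of_le hν le_rfl)
  have hfe : ∀ ν, ν ∈ c.support → ν ≠ ν₀ → ⁅f, c ν⁆ ∈ Z := by
    intro ν _ hν
    have hcν : c ν ∈ (ad K L x).maxGenEigenspace ν := (hc ν).2
    have h2 : ⁅f, c ν⁆ ∈ G (ν + (-1)) := aux_maxGen_shift x f (-1) hxf' hcν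
    refine hGle _ ?_ h2
    intro h
    apply hν
    have : ν = ν₀ - 1 + 1 := by linear_combination h
    rw [this]; ring
  have hre : ∀ ν, ν ∈ c.support → ⁅r, c ν⁆ ∈ Z := by
    intro ν hνs
    have hcν : c ν ∈ (ad K L x).maxGenEigenspace ν := (hc ν).2
    refine Submodule.iSup_induction _ (motive := fun s => ⁅s, c ν⁆ ∈ Z) hr ?_ (by simp) ?_
    · intro k s hs
      refine Submodule.iSup_induction _ (motive := fun s => ⁅s, c ν⁆ ∈ Z) hs ?_ (by simp) ?_
      · intro hk0 s' hs'
        have hxs : ⁅x, s'⁆ = (k : K) • s' := by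
          have := Module.End.mem_eigenspace_iff.mp hs'
          rwa [ad_apply] at this
        have h2 : ⁅s', c ν⁆ ∈ G (ν + (k : K)) := aux_maxGen_shift x s' (k : K) hxs hcν
        refine hGle _ ?_ h2
        intro hcontra
        refine hmin (1 + k) (by linarith) ?_
        have : ν₀ - ((1 + k : ℚ) : K) = ν := by push_cast; linear_combination -hcontra
        rw [this]
        exact hνs
      · intro a b ha hb
        rw [add_lie]
        exact Submodule.add_mem _ ha hb
    · intro a b ha hb
      rw [add_lie]
      exact Submodule.add_mem _ ha hb
  have hfν₀ : ⁅f, c ν₀⁆ = 0 := by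
    have hsum : ⁅f + r, y⁆ = ∑ ν ∈ c.support, ⁅f + r, c ν⁆ := by
      rw [← hcsum, Finsupp.sum, ← ad_apply (R := K), map_sum]
      simp only [ad_apply]
    have hsplit : ∑ ν ∈ c.support, ⁅f + r, c ν⁆ =
        ⁅f, c ν₀⁆ + ((∑ ν ∈ c.support.erase ν₀, ⁅f, c ν⁆) + ∑ ν ∈ c.support, ⁅r, c ν⁆) := by
      simp only [add_lie]
      rw [Finset.sum_add_distrib, ← Finset.add_sum_erase _ _ hν₀]
      abel
    have hzZ : (∑ ν ∈ c.support.erase ν₀, ⁅f, c ν⁆) + ∑ ν ∈ c.support, ⁅r, c ν⁆ ∈ Z := by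
      refine Submodule.add_mem _ (Submodule.sum_mem _ ?_) (Submodule.sum_mem _ ?_)
      · intro ν hν
        exact hfe ν (Finset.mem_of_mem_erase hν) (Finset.ne_of_mem_erase hν)
      · intro ν hν
        exact hre ν hν
    have heq : ⁅f, c ν₀⁆ = -((∑ ν ∈ c.support.erase ν₀, ⁅f, c ν⁆) + ∑ ν ∈ c.support, ⁅r, c ν⁆) := by
      have := hy0
      rw [hsum, hsplit] at this
      linear_combination (norm := abel) this
    have hmemZ : ⁅f, c ν₀⁆ ∈ Z := by
      rw [heq]
      exact Submodule.neg_mem _ hzZ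
    have hmemG : ⁅f, c ν₀⁆ ∈ G (ν₀ + (-1)) :=
      aux_maxGen_shift x f (-1) hxf' (hc ν₀).2
    have hdisj : Disjoint (G (ν₀ - 1)) Z := Module.End.independent_maxGenEigenspace (ad K L x) (ν₀ - 1)
    have : ν₀ + (-1 : K) = ν₀ - 1 := by ring
    rw [this] at hmemG
    exact (Submodule.mem_bot K).mp (hdisj.le_bot ⟨hmemG, hmemZ⟩)
  have hc0 : c ν₀ = 0 := by
    refine aux_lemA x e f ht hxe hxf ν₀ (c ν₀) (hc ν₀).2 hfν₀ ?_
    exact (hc ν₀).1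
  exact absurd hc0 (Finsupp.mem_support_iff.mp hν₀)

end Core2


/-- `ad (f+r)` is injective on `[e, g]`, hence a bijection from
`[e,g]` onto `[f+r, [e,g]]`. -/
theorem ad_injOn_range_ad_e
    {F : Type*} [Field F] [CharZero F]
    {g : Type*} [LieRing g] [LieAlgebra F g] [Module.Finite F g]
    [LieAlgebra.IsSimple F g]
    (e x f : g)
    (hxe : ⁅x, e⁆ = e) (hxf : ⁅x, f⁆ = -f) (hef : ⁅e, f⁆ = (2 : F) • x)
    (r : g)
    (hr : r ∈ ⨆ k : ℚ, ⨆ _ : (0 : ℚ) ≤ k,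
        Module.End.eigenspace (LieAlgebra.ad F g x) (k : F)) :
    Set.InjOn (fun a => ⁅f + r, a⁆)
      (LinearMap.range (LieAlgebra.ad F g e) : Set g) ∧
    Set.BijOn (fun a => ⁅f + r, a⁆)
      (LinearMap.range (LieAlgebra.ad F g e) : Set g)
      ((fun a => ⁅f + r, a⁆) '' (LinearMap.range (LieAlgebra.ad F g e) : Set g)) := by
  classical
  have key : ∀ y ∈ LinearMap.range (LieAlgebra.ad F g e), ⁅f + r, y⁆ = 0 → y = 0 := by
    intro y hy hy0
    set K := AlgebraicClosure F
    have hbr : ∀ a b : g, ⁅(1:K) ⊗ₜ[F] a, (1:K) ⊗ₜ[F] b⁆ = (1:K) ⊗ₜ[F] ⁅a, b⁆ := fun a b => by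
      rw [LieAlgebra.ExtendScalars.bracket_tmul, one_mul]
    have hinj : ∀ v : g, (1:K) ⊗ₜ[F] v = 0 → v = 0 := by
      intro v hv
      set b := Module.Free.chooseBasis F g with hb
      apply b.repr.injective
      ext i
      have h1 : ((b.baseChange K).repr ((1:K) ⊗ₜ[F] v)) i = (b.repr v) i • (1:K) :=
        Basis.baseChange_repr_tmul K b 1 v i
      rw [hv] at h1
      have h2 : (b.repr v) i • (1:K) = 0 := by rw [← h1]; simp
      have h3 : algebraMap F K ((b.repr v) i) = 0 := by rwa [Algebra.algebraMap_eq_smul_one]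
      have h4 : (b.repr v) i = 0 := (algebraMap F K).injective (by simpa using h3)
      simp [h4]
    have hsmul : ∀ (a : F) (z : K ⊗[F] g), a • z = algebraMap F K a • z := fun a z =>
      (algebraMap_smul K a z).symm
    -- transfer the eigenspace hypothesis
    have hrK : (1:K) ⊗ₜ[F] r ∈ ⨆ k : ℚ, ⨆ _ : (0:ℚ) ≤ k,
        Module.End.eigenspace (ad K (K ⊗[F] g) ((1:K) ⊗ₜ[F] x)) (k : K) := by
      refine Submodule.iSup_induction _
        (motive := fun s => (1:K) ⊗ₜ[F] s ∈ ⨆ k : ℚ, ⨆ _ : (0:ℚ) ≤ k,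
          Module.End.eigenspace (ad K (K ⊗[F] g) ((1:K) ⊗ₜ[F] x)) (k : K)) hr ?_ (by simp) ?_
      · intro k s hs
        refine Submodule.iSup_induction _
          (motive := fun s => (1:K) ⊗ₜ[F] s ∈ ⨆ k : ℚ, ⨆ _ : (0:ℚ) ≤ k,
            Module.End.eigenspace (ad K (K ⊗[F] g) ((1:K) ⊗ₜ[F] x)) (k : K)) hs ?_ (by simp) ?_
        · intro hk0 s' hs'
          apply Submodule.mem_iSup_of_mem k
          apply Submodule.mem_iSup_of_mem hk0
          rw [Module.End.mem_eigenspace_iff] at hs' ⊢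
          rw [ad_apply] at hs' ⊢
          rw [hbr, hs', TensorProduct.tmul_smul, hsmul, map_ratCast]
        · intro a b ha hb
          rw [TensorProduct.tmul_add]
          exact Submodule.add_mem _ ha hb
      · intro a b ha hb
        rw [TensorProduct.tmul_add]
        exact Submodule.add_mem _ ha hb
    obtain ⟨u, hu⟩ := hy
    rw [ad_apply] at hu
    have hyK : (1:K) ⊗ₜ[F] y ∈ LinearMap.range (ad K (K ⊗[F] g) ((1:K) ⊗ₜ[F] e)) :=
      ⟨(1:K) ⊗ₜ[F] u, by rw [ad_apply, hbr, hu]⟩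
    have hxeK : ⁅(1:K) ⊗ₜ[F] x, (1:K) ⊗ₜ[F] e⁆ = (1:K) ⊗ₜ[F] e := by rw [hbr, hxe]
    have hxfK : ⁅(1:K) ⊗ₜ[F] x, (1:K) ⊗ₜ[F] f⁆ = -((1:K) ⊗ₜ[F] f) := by
      rw [hbr, hxf, TensorProduct.tmul_neg]
    have hefK : ⁅(1:K) ⊗ₜ[F] e, (1:K) ⊗ₜ[F] f⁆ = (2:K) • ((1:K) ⊗ₜ[F] x) := by
      rw [hbr, hef, TensorProduct.tmul_smul, hsmul, map_ofNat]
    have hbrK : ⁅(1:K) ⊗ₜ[F] f + (1:K) ⊗ₜ[F] r, (1:K) ⊗ₜ[F] y⁆ = 0 := by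
      rw [← TensorProduct.tmul_add, hbr, hy0, TensorProduct.tmul_zero]
    have := aux_core ((1:K) ⊗ₜ[F] e) ((1:K) ⊗ₜ[F] x) ((1:K) ⊗ₜ[F] f) hxeK hxfK hefK
      ((1:K) ⊗ₜ[F] r) hrK ((1:K) ⊗ₜ[F] y) hyK hbrK
    exact hinj y this
  have hinjOn : Set.InjOn (fun a => ⁅f + r, a⁆)
      (LinearMap.range (LieAlgebra.ad F g e) : Set g) := by
    intro a ha b hb hab
    have hmem : a - b ∈ LinearMap.range (LieAlgebra.ad F g e) :=
      Submodule.sub_mem _ ha hb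
    have h0 : ⁅f + r, a - b⁆ = 0 := by
      rw [lie_sub]
      simpa using sub_eq_zero_of_eq hab
    have := key _ hmem h0
    exact sub_eq_zero.mp this
  exact ⟨hinjOn, hinjOn.bijOn_image⟩
end

section
/- Let g be a finite-dimensional simple Lie algebra with sl2-triple {e,h=2x,f} and r ∈ g_{≥0}. Then [f+r, g] + g^e = g. (Transversality of the Slodowy slice to adjoint orbits.) -/
/-!
Auxiliary linear-algebra development: a fully elementary proof that for operators
`X, E, F` on a finite-dimensional space over a char-zero field satisfying the `sl₂`
commutation relations `[X,E] = E`, `[X,F] = -F`, `[E,F] = 2X`, one has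
`range F + ker E ⊇` every generalized eigenspace of `X`, that the generalized
eigenspaces of `X` span, and graded refinements of these facts.  This is then
applied to the adjoint operators of an sl2-triple to prove transversality of the
Slodowy slice.
-/

open Module End

namespace SlodowyAux

variable {K V : Type*} [Field K] [CharZero K] [AddCommGroup V] [Module K V]

local notation "G" => Module.End.maxGenEigenspace

/-- If `X * A - A * X = c • A` then `A` shifts generalized eigenspaces of `X` by `c`. -/
lemma mapsTo_shift (X A : Module.End K V) (c : K) (h : X * A - A * X = c • A) (μ : K)
    {v : V} (hv : v ∈ G X μ) : A v ∈ G X (μ + c) := by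
  rw [Module.End.mem_maxGenEigenspace] at hv ⊢
  obtain ⟨k, hk⟩ := hv
  have key : (X - (μ + c) • 1) * A = A * (X - μ • 1) := by
    have hXA : X * A = A * X + c • A := by rw [← h]; abel
    rw [sub_mul, mul_sub, hXA]
    simp only [smul_mul_assoc, mul_smul_comm, one_mul, mul_one, add_smul, add_mul]
    module
  have keyk : ∀ k : ℕ, (X - (μ + c) • 1) ^ k * A = A * (X - μ • 1) ^ k := by
    intro k
    induction k with
    | zero => simp
    | succ k ih =>
      rw [pow_succ, pow_succ, mul_assoc, key, ← mul_assoc, ih, mul_assoc]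
  refine ⟨k, ?_⟩
  have := congrArg (fun T : Module.End K V => T v) (keyk k)
  simp only [Module.End.mul_apply] at this
  rw [this, hk, map_zero]

/-- If `X * A - A * X = A` on a finite-dimensional space (char 0), then `A` is nilpotent. -/
lemma isNilpotent_of_shift [FiniteDimensional K V] (X A : Module.End K V)
    (h : X * A - A * X = A) : IsNilpotent A := by
  by_contra hn
  have hpow : ∀ n : ℕ, A ^ n ≠ 0 := by
    intro n hzero
    exact hn ⟨n, hzero⟩
  have key : ∀ n : ℕ, X * A ^ n - A ^ n * X = (n : K) • A ^ n := by
    intro n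
    induction n with
    | zero => simp
    | succ n ih =>
      have hXA : X * A = A + A * X := sub_eq_iff_eq_add.mp h
      have ihX : X * A ^ n = (n : K) • A ^ n + A ^ n * X := sub_eq_iff_eq_add.mp ih
      have key2 : X * A ^ (n + 1) = (n : K) • A ^ (n+1) + (A ^ (n+1) + A ^ (n+1) * X) := by
        calc X * A ^ (n + 1) = (X * A ^ n) * A := by rw [pow_succ, mul_assoc]
        _ = ((n : K) • A ^ n + A ^ n * X) * A := by rw [ihX]
        _ = (n : K) • (A ^ n * A) + A ^ n * (X * A) := by
            rw [add_mul, smul_mul_assoc, mul_assoc]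
        _ = (n : K) • (A ^ n * A) + A ^ n * (A + A * X) := by rw [hXA]
        _ = (n : K) • A ^ (n+1) + (A ^ (n+1) + A ^ (n+1) * X) := by
            rw [mul_add, ← mul_assoc, ← pow_succ]
      rw [key2]
      push_cast
      module
  set D : Module.End K (Module.End K V) :=
    LinearMap.mulLeft K X - LinearMap.mulRight K X with hD
  have heig : ∀ n : ℕ, D.HasEigenvector (n : K) (A ^ n) := by
    intro n
    refine ⟨?_, hpow n⟩
    rw [Module.End.mem_eigenspace_iff]
    simp only [hD, LinearMap.sub_apply, LinearMap.mulLeft_apply, LinearMap.mulRight_apply]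
    exact key n
  have hli := D.eigenvectors_linearIndependent' (fun n : ℕ => (n : K))
    Nat.cast_injective _ heig
  exact Module.Finite.not_linearIndependent_of_infinite _ hli

/-- The commutation identity `E * F^(k+1) = F^(k+1) * E + (k+1) • (F^k * (2X - k))`. -/
lemma EF_pow_identity (X E F : Module.End K V)
    (hXF : X * F - F * X = -F) (hEF : E * F - F * E = (2 : K) • X) :
    ∀ k : ℕ, E * F ^ (k + 1) =
      F ^ (k + 1) * E + ((k : K) + 1) • (F ^ k * ((2 : K) • X - (k : K) • 1)) := by
  have hEF' : E * F = (2 : K) • X + F * E := sub_eq_iff_eq_add.mp hEF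
  have hshift : ∀ c : K, ((2 : K) • X - c • 1) * F = F * ((2 : K) • X - (c + 2) • 1) := by
    intro c
    have hXF' : X * F = -F + F * X := sub_eq_iff_eq_add.mp hXF
    rw [sub_mul, mul_sub, smul_mul_assoc, hXF']
    simp only [smul_add, smul_neg, smul_mul_assoc, mul_smul_comm, one_mul, mul_one,
      add_smul, smul_sub, mul_add]
    module
  intro k
  induction k with
  | zero =>
    simpa using sub_eq_iff_eq_add'.mp hEF
  | succ k ih =>
    have h1 : E * F ^ (k + 2) = (E * F ^ (k + 1)) * F := by
      rw [mul_assoc, ← pow_succ]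
    have hEF2 : E * F = F * E + (2 : K) • X := sub_eq_iff_eq_add'.mp hEF
    have e1 : F ^ (k+1) * (F * E) = F ^ (k+2) * E := by rw [← mul_assoc, ← pow_succ]
    have e2 : F ^ k * (F * ((2:K) • X - ((k:K)+2) • 1)) =
        F ^ (k+1) * ((2:K) • X - ((k:K)+2) • 1) := by
      rw [← mul_assoc, ← pow_succ]
    calc E * F ^ (k + 2)
        = (F ^ (k + 1) * E + ((k:K)+1) • (F ^ k * ((2:K) • X - (k:K) • 1))) * F := by
          rw [h1, ih]
      _ = F ^ (k+1) * (E * F) + ((k:K)+1) • (F ^ k * (((2:K) • X - (k:K) • 1) * F)) := by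
          rw [add_mul, smul_mul_assoc, mul_assoc, mul_assoc]
      _ = F ^ (k+1) * (F * E + (2:K) • X)
            + ((k:K)+1) • (F ^ k * (F * ((2:K) • X - ((k:K)+2) • 1))) := by
          rw [hEF2, hshift]
      _ = F ^ (k + 1 + 1) * E + (((k+1 : ℕ):K) + 1) •
            (F ^ (k+1) * ((2 : K) • X - ((k+1 : ℕ):K) • 1)) := by
          have e3 : F ^ (k + 1 + 1) = F ^ (k + 2) := by congr 1
          rw [mul_add, e1, e2, e3]
          push_cast
          simp only [mul_sub, mul_add, mul_smul_comm, mul_one, smul_sub, smul_add,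
            sub_smul, add_smul, one_smul, smul_smul]
          module

variable [FiniteDimensional K V]

/-- From a nonzero `E`-killed vector one can produce an actual eigenvector of `X`. -/
lemma exists_eigenvector_of_ker (X E F : Module.End K V)
    (hXE : X * E - E * X = E) (hXF : X * F - F * X = -F)
    (hEF : E * F - F * E = (2 : K) • X)
    {v : V} (hv : v ≠ 0) (hEv : E v = 0) :
    ∃ (μ : K) (w : V), w ≠ 0 ∧ X w = μ • w := by
  have hFnil : IsNilpotent F := by
    apply isNilpotent_of_shift (-X) F
    rw [neg_mul, mul_neg, ← neg_sub', hXF, neg_neg]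
  obtain ⟨N, hN⟩ := hFnil
  have hFv : (F ^ N) v = 0 := by rw [hN]; simp
  clear hN
  induction N generalizing v with
  | zero => simp at hFv; exact absurd hFv hv
  | succ N ih =>
    set w : V := ((2 : K) • X - (N : K) • 1) v with hw
    by_cases hw0 : w = 0
    · refine ⟨(N : K) / 2, v, hv, ?_⟩
      have h2 : (2 : K) • X v - (N : K) • v = 0 := by
        simpa [hw, LinearMap.sub_apply, LinearMap.smul_apply, Module.End.one_apply] using hw0
      have h3 : (2 : K) • X v = (N : K) • v := by rwa [sub_eq_zero] at h2
      calc X v = (2 : K)⁻¹ • ((2 : K) • X v) := by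
            rw [smul_smul, inv_mul_cancel₀ (two_ne_zero), one_smul]
        _ = (2 : K)⁻¹ • ((N : K) • v) := by rw [h3]
        _ = ((N : K) / 2) • v := by rw [smul_smul]; ring_nf
    · -- E w = 0
      have hEw : E w = 0 := by
        have hop : E * ((2 : K) • X - (N : K) • 1) =
            ((2 : K) • X - ((N : K) + 2) • 1) * E := by
          have hEX : E * X = X * E - E := by
            rw [sub_eq_iff_eq_add.mp hXE]; abel
          rw [mul_sub, sub_mul, mul_smul_comm, hEX, smul_mul_assoc, mul_smul_comm,
            smul_mul_assoc, one_mul, mul_one, smul_sub, add_smul]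
          module
        have : E w = (((2 : K) • X - ((N : K) + 2) • 1) * E) v := by
          rw [← hop]; simp [hw, Module.End.mul_apply]
        rw [this, Module.End.mul_apply, hEv, map_zero]
      -- F^N w = 0
      have hFw : (F ^ N) w = 0 := by
        have hid := EF_pow_identity X E F hXF hEF N
        have := congrArg (fun T : Module.End K V => T v) hid
        simp only [Module.End.mul_apply, LinearMap.add_apply, LinearMap.smul_apply] at this
        rw [hFv, map_zero, hEv, map_zero, zero_add] at this
        have hcast : ((N : K) + 1) ≠ 0 := by
          have : ((N + 1 : ℕ) : K) ≠ 0 := Nat.cast_ne_zero.mpr (Nat.succ_ne_zero N)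
          push_cast at this; exact this
        have h0 : ((N : K) + 1) • ((F ^ N) (((2 : K) • X - (N : K) • 1) v)) = 0 := by
          rw [← this]
        rw [smul_eq_zero] at h0
        rcases h0 with h | h
        · exact absurd h hcast
        · simpa [hw] using h
      exact ih hw0 hEw hFw

/-- Injectivity helper: an element of a generalized eigenspace killed by `X - c•1` with
`c ≠ μ` is zero. -/
lemma inj_on_gen (X : Module.End K V) {μ c : K} (h : c ≠ μ)
    {v : V} (hv : v ∈ G X μ) (h0 : (X - c • 1) v = 0) : v = 0 := by
  have h1 : v ∈ X.genEigenspace c 1 := by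
    rw [Module.End.mem_genEigenspace]
    exact ⟨1, le_rfl, by simpa using h0⟩
  exact Submodule.disjoint_def.mp (X.disjoint_genEigenspace h 1 ⊤) v h1 hv

/-- Surjectivity from injectivity on an invariant subspace. -/
lemma surj_on_of_inj_on (T : Module.End K V) {p : Submodule K V}
    (hmaps : ∀ v ∈ p, T v ∈ p) (hinj : ∀ v ∈ p, T v = 0 → v = 0)
    {v : V} (hv : v ∈ p) : ∃ w ∈ p, T w = v := by
  let T' := T.restrict hmaps
  have hinj' : Function.Injective T' := by
    rw [← LinearMap.ker_eq_bot, eq_bot_iff]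
    rintro ⟨u, hu⟩ hu0
    have : T u = 0 := congrArg Subtype.val hu0
    simpa [Submodule.mem_bot] using hinj u hu this
  have hsurj := LinearMap.injective_iff_surjective.mp hinj'
  obtain ⟨⟨w, hw⟩, hTw⟩ := hsurj ⟨v, hv⟩
  exact ⟨w, hw, congrArg Subtype.val hTw⟩

/-- Key lemma: if `2ν + k ≠ 0` for all naturals `k`, then `E ∘ F` is surjective on the
generalized eigenspace of `X` with eigenvalue `ν`. -/
lemma EF_surj_on_gen (X E F : Module.End K V)
    (hXE : X * E - E * X = E) (hXF : X * F - F * X = -F)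
    (hEF : E * F - F * E = (2 : K) • X)
    {ν : K} (hν : ∀ k : ℕ, 2 * ν + (k : K) ≠ 0)
    {v : V} (hv : v ∈ G X ν) : ∃ w ∈ G X ν, E (F w) = v := by
  have hXFs : X * F - F * X = (-1 : K) • F := by rw [hXF]; simp
  have hXEs : X * E - E * X = (1 : K) • E := by rw [hXE]; simp
  have hFmaps : ∀ (μ : K), ∀ u ∈ G X μ, F u ∈ G X (μ - 1) := by
    intro μ u hu
    have := mapsTo_shift X F (-1) hXFs μ hu
    simpa [sub_eq_add_neg] using this
  have hEmaps : ∀ (μ : K), ∀ u ∈ G X μ, E u ∈ G X (μ + 1) :=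
    fun μ u hu => mapsTo_shift X E 1 hXEs μ hu
  have hEFmaps : ∀ u ∈ G X ν, (E * F) u ∈ G X ν := by
    intro u hu
    have h1 := hFmaps ν u hu
    have h2 := hEmaps (ν - 1) (F u) h1
    simpa [Module.End.mul_apply] using h2
  -- injectivity of E*F on G X ν
  have hinj : ∀ u ∈ G X ν, (E * F) u = 0 → u = 0 := by
    intro u hu hEFu
    by_contra hu0
    rw [Module.End.mul_apply] at hEFu
    -- the chain u, E u, E² u, ...
    have hmem : ∀ k : ℕ, (E ^ k) u ∈ G X (ν + k) := by
      intro k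
      induction k with
      | zero => simpa using hu
      | succ k ih =>
        have := hEmaps (ν + k) _ ih
        rw [pow_succ']
        simpa [Module.End.mul_apply, add_assoc] using this
    have hform : ∀ k : ℕ, F ((E ^ (k + 1)) u) =
        (-((k : K) + 1)) • (((2 : K) • X - (k : K) • 1) ((E ^ k) u)) := by
      intro k
      induction k with
      | zero =>
        have hFE : F * E = E * F - (2 : K) • X := by
          rw [sub_eq_iff_eq_add.mp hEF]; abel
        have h0 : F ((E ^ (0 + 1)) u) = (F * E) u := by
          simp [Module.End.mul_apply]
        rw [h0, hFE]
        simp only [LinearMap.sub_apply, Module.End.mul_apply, LinearMap.smul_apply,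
          Module.End.one_apply, pow_zero, Nat.cast_zero, zero_smul, sub_zero, hEFu,
          LinearMap.zero_apply, zero_sub]
        module
      | succ k ih =>
        have hFE : F * E = E * F - (2 : K) • X := by
          rw [sub_eq_iff_eq_add.mp hEF]; abel
        have hEop : ∀ (c : K) (z : V), E (((2:K) • X - c • 1) z) =
            (((2:K) • X - (c + 2) • 1)) (E z) := by
          intro c z
          have hEX : E * X = X * E - E := by
            rw [sub_eq_iff_eq_add.mp hXE]; abel
          have hop : E * ((2 : K) • X - c • 1) = ((2 : K) • X - (c + 2) • 1) * E := by
            rw [mul_sub, sub_mul, mul_smul_comm, hEX, smul_mul_assoc, mul_smul_comm,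
              smul_mul_assoc, one_mul, mul_one, smul_sub, add_smul]
            module
          have := congrArg (fun T : Module.End K V => T z) hop
          simpa [Module.End.mul_apply] using this
        have h1 : F ((E ^ (k + 2)) u) = (F * E) ((E ^ (k+1)) u) := by
          rw [pow_succ']
          simp [Module.End.mul_apply]
        rw [h1, hFE]
        simp only [LinearMap.sub_apply, Module.End.mul_apply, LinearMap.smul_apply]
        rw [ih, map_smul, hEop]
        have h2 : E ((E ^ k) u) = (E ^ (k+1)) u := by
          rw [pow_succ']; simp [Module.End.mul_apply]
        rw [h2]
        push_cast
        simp only [LinearMap.sub_apply, LinearMap.smul_apply, Module.End.one_apply]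
        module
    have hne : ∀ k : ℕ, (E ^ k) u ≠ 0 := by
      intro k
      induction k with
      | zero => simpa using hu0
      | succ k ih =>
        intro hzero
        have h0 := hform k
        rw [hzero, map_zero] at h0
        have hc : (-((k : K) + 1)) ≠ 0 := by
          have h' : ((k : K) + 1) ≠ 0 := by
            have h'' : ((k + 1 : ℕ) : K) ≠ 0 := Nat.cast_ne_zero.mpr (Nat.succ_ne_zero k)
            push_cast at h''; exact h''
          exact neg_ne_zero.mpr h'
        have h1 : ((2 : K) • X - (k : K) • 1) ((E ^ k) u) = 0 := by
          have := h0.symm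
          rw [smul_eq_zero] at this
          exact this.resolve_left hc
        -- rewrite as (X - (k/2) • 1) applied
        have h2 : (X - ((k : K) / 2) • 1) ((E ^ k) u) = 0 := by
          have heq : (2 : K) • (X - ((k : K) / 2) • 1) = (2 : K) • X - (k : K) • 1 := by
            rw [smul_sub, smul_smul]
            congr 2
            field_simp
          have := congrArg (fun T : Module.End K V => T ((E ^ k) u)) heq
          simp only [LinearMap.smul_apply] at this
          rw [h1] at this
          have h2ne : (2 : K) ≠ 0 := two_ne_zero
          exact (smul_eq_zero.mp this).resolve_left h2ne
        have hck : (k : K) / 2 ≠ ν + k := by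
          intro heq
          apply hν k
          linear_combination -2 * heq
        exact ih (inj_on_gen X hck (hmem k) h2)
    -- contradiction with finite dimensionality
    have hbot : ∀ k : ℕ, G X (ν + k) ≠ ⊥ := by
      intro k
      rw [Submodule.ne_bot_iff]
      exact ⟨(E ^ k) u, hmem k, hne k⟩
    have hinjcast : Function.Injective (fun k : ℕ => ν + (k : K)) := by
      intro a b hab
      simp only at hab
      exact Nat.cast_injective (add_left_cancel hab)
    have hindep : iSupIndep (fun k : ℕ => G X (ν + (k : K))) :=
      (X.independent_maxGenEigenspace).comp hinjcast
    haveI hfin : Fintype {k : ℕ // G X (ν + (k : K)) ≠ ⊥} :=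
      hindep.fintypeNeBotOfFiniteDimensional
    haveI : Infinite {k : ℕ // G X (ν + (k : K)) ≠ ⊥} :=
      Infinite.of_injective (fun k => ⟨k, hbot k⟩) (fun a b h => by
        simpa using congrArg Subtype.val h)
    exact not_finite {k : ℕ // G X (ν + (k : K)) ≠ ⊥}
  obtain ⟨w, hw, hTw⟩ := surj_on_of_inj_on (E * F) hEFmaps hinj hv
  exact ⟨w, hw, by simpa [Module.End.mul_apply] using hTw⟩

omit [FiniteDimensional K V] in
lemma maxGen_neg (X : Module.End K V) (μ : K) :
    G (-X) (-μ) = G X μ := by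
  ext v
  simp only [Module.End.mem_maxGenEigenspace]
  have h1 : (-X - (-μ) • (1 : Module.End K V)) = (-1 : K) • (X - μ • 1) := by
    rw [neg_smul, smul_sub]; module
  have h2 : ∀ k : ℕ, ((-X - (-μ) • (1 : Module.End K V)) ^ k) v =
      ((-1 : K) ^ k) • (((X - μ • 1) ^ k) v) := by
    intro k
    rw [h1, smul_pow, LinearMap.smul_apply]
  have h3 : ∀ k : ℕ, ((-1 : K) ^ k) ≠ 0 := fun k =>
    pow_ne_zero k (neg_ne_zero.mpr one_ne_zero)
  constructor
  · rintro ⟨k, hk⟩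
    refine ⟨k, ?_⟩
    rw [h2 k] at hk
    exact (smul_eq_zero.mp hk).resolve_left (h3 k)
  · rintro ⟨k, hk⟩
    exact ⟨k, by rw [h2 k, hk, smul_zero]⟩

/-- The covering lemma: every generalized eigenspace is contained in
`ker E + F (next gen eigenspace)`. -/
lemma cover (X E F : Module.End K V)
    (hXE : X * E - E * X = E) (hXF : X * F - F * X = -F)
    (hEF : E * F - F * E = (2 : K) • X)
    (μ : K) {v : V} (hv : v ∈ G X μ) :
    ∃ w ∈ G X (μ + 1), ∃ u, E u = 0 ∧ v = u + F w := by
  have hXEs : X * E - E * X = (1 : K) • E := by rw [hXE, one_smul]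
  by_cases hA : ∀ k : ℕ, 2 * (μ + 1) + (k : K) ≠ 0
  · have hEv : E v ∈ G X (μ + 1) := mapsTo_shift X E 1 hXEs μ hv
    obtain ⟨w, hw, hEFw⟩ := EF_surj_on_gen X E F hXE hXF hEF hA hEv
    refine ⟨w, hw, v - F w, ?_, by abel⟩
    rw [map_sub, hEFw, sub_self]
  · push_neg at hA
    obtain ⟨k₀, hk₀⟩ := hA
    have hB : ∀ k : ℕ, 2 * (-μ) + (k : K) ≠ 0 := by
      intro k h
      have hz : ((2 + k₀ + k : ℕ) : K) = 0 := by
        push_cast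
        linear_combination hk₀ + h
      exact (Nat.cast_ne_zero.mpr (by omega)) hz
    have hXE' : (-X) * F - F * (-X) = F := by
      have h1 : (-X) * F - F * (-X) = -(X * F - F * X) := by
        rw [neg_mul, mul_neg]; abel
      rw [h1, hXF, neg_neg]
    have hXF' : (-X) * E - E * (-X) = -E := by
      have h1 : (-X) * E - E * (-X) = -(X * E - E * X) := by
        rw [neg_mul, mul_neg]; abel
      rw [h1, hXE]
    have hEF' : F * E - E * F = (2 : K) • (-X) := by
      have h1 : F * E - E * F = -(E * F - F * E) := by abel
      rw [h1, hEF, smul_neg]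
    have hv' : v ∈ G (-X) (-μ) := by rw [maxGen_neg]; exact hv
    obtain ⟨w', hw', hFEw'⟩ := EF_surj_on_gen (-X) F E hXE' hXF' hEF' hB hv'
    have hw'' : w' ∈ G X μ := by rw [← maxGen_neg]; exact hw'
    refine ⟨E w', mapsTo_shift X E 1 hXEs μ hw'', 0, map_zero E, ?_⟩
    rw [zero_add, ← hFEw']

/-- Splitting: the generalized eigenspaces of `X` span. -/
lemma iSup_maxGen_eq_top (X E F : Module.End K V)
    (hXE : X * E - E * X = E) (hXF : X * F - F * X = -F)
    (hEF : E * F - F * E = (2 : K) • X) :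
    ⨆ μ : K, G X μ = ⊤ := by
  set p : Submodule K V := ⨆ μ : K, G X μ with hp
  have hXEs : X * E - E * X = (1 : K) • E := by rw [hXE, one_smul]
  have hXFs : X * F - F * X = (-1 : K) • F := by rw [hXF, neg_one_smul]
  have hXmem : ∀ v ∈ p, X v ∈ p := by
    intro v hv
    refine Submodule.iSup_induction (motive := fun u => X u ∈ p) _ hv (fun μ u hu => ?_)
      (by simpa [map_zero] using p.zero_mem)
      (fun a b ha hb => by simpa [map_add] using p.add_mem ha hb)
    exact le_iSup (fun μ => G X μ) μ
      (Module.End.mapsTo_maxGenEigenspace_of_comm (Commute.refl X) μ hu)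
  have hEmem : ∀ v ∈ p, E v ∈ p := by
    intro v hv
    refine Submodule.iSup_induction (motive := fun u => E u ∈ p) _ hv (fun μ u hu => ?_)
      (by simpa [map_zero] using p.zero_mem)
      (fun a b ha hb => by simpa [map_add] using p.add_mem ha hb)
    exact le_iSup (fun μ => G X μ) (μ + 1) (mapsTo_shift X E 1 hXEs μ hu)
  have hFmem : ∀ v ∈ p, F v ∈ p := by
    intro v hv
    refine Submodule.iSup_induction (motive := fun u => F u ∈ p) _ hv (fun μ u hu => ?_)
      (by simpa [map_zero] using p.zero_mem)
      (fun a b ha hb => by simpa [map_add] using p.add_mem ha hb)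
    exact le_iSup (fun μ => G X μ) (μ + (-1)) (mapsTo_shift X F (-1) hXFs μ hu)
  by_contra htop
  haveI : Nontrivial (V ⧸ p) :=
    Submodule.Quotient.nontrivial_iff.mpr htop
  set Xq := Submodule.mapQ p p X (fun v hv => hXmem v hv) with hXq
  set Eq := Submodule.mapQ p p E (fun v hv => hEmem v hv) with hEq
  set Fq := Submodule.mapQ p p F (fun v hv => hFmem v hv) with hFq
  have hq1 : Xq * Eq - Eq * Xq = Eq := by
    refine Submodule.linearMap_qext _ ?_
    ext v
    have hv := congrArg (fun T : Module.End K V => T v) hXE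
    simp only [Module.End.mul_apply, LinearMap.sub_apply] at hv
    simp only [LinearMap.comp_apply, LinearMap.sub_apply, Module.End.mul_apply,
      Submodule.mkQ_apply, hXq, hEq, Submodule.mapQ_apply]
    rw [← Submodule.Quotient.mk_sub, hv]
  have hq2 : Xq * Fq - Fq * Xq = -Fq := by
    refine Submodule.linearMap_qext _ ?_
    ext v
    have hv := congrArg (fun T : Module.End K V => T v) hXF
    simp only [Module.End.mul_apply, LinearMap.sub_apply, LinearMap.neg_apply] at hv
    simp only [LinearMap.comp_apply, LinearMap.sub_apply, Module.End.mul_apply,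
      LinearMap.neg_apply, Submodule.mkQ_apply, hXq, hFq, Submodule.mapQ_apply]
    rw [← Submodule.Quotient.mk_sub, hv, Submodule.Quotient.mk_neg]
  have hq3 : Eq * Fq - Fq * Eq = (2 : K) • Xq := by
    refine Submodule.linearMap_qext _ ?_
    ext v
    have hv := congrArg (fun T : Module.End K V => T v) hEF
    simp only [Module.End.mul_apply, LinearMap.sub_apply, LinearMap.smul_apply] at hv
    simp only [LinearMap.comp_apply, LinearMap.sub_apply, Module.End.mul_apply,
      LinearMap.smul_apply, Submodule.mkQ_apply, hXq, hEq, hFq, Submodule.mapQ_apply]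
    rw [← Submodule.Quotient.mk_sub, hv, Submodule.Quotient.mk_smul]
  have hnilE : IsNilpotent Eq := isNilpotent_of_shift Xq Eq hq1
  obtain ⟨m, hm⟩ := hnilE
  have hnotinj : ¬ Function.Injective Eq := by
    intro hinj
    have hkinj : Function.Injective ⇑(Eq ^ m) := by
      rw [Module.End.coe_pow]
      exact Function.Injective.iterate hinj m
    obtain ⟨a, b, hab⟩ := exists_pair_ne (V ⧸ p)
    exact hab (hkinj (by rw [hm]; rfl))
  have hker : LinearMap.ker Eq ≠ ⊥ := by rwa [ne_eq, LinearMap.ker_eq_bot]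
  obtain ⟨vb, hvbker, hvbne⟩ := (Submodule.ne_bot_iff _).mp hker
  obtain ⟨μ, wb, hwbne, hXwb⟩ := exists_eigenvector_of_ker Xq Eq Fq hq1 hq2 hq3 hvbne
    (LinearMap.mem_ker.mp hvbker)
  obtain ⟨w, rfl⟩ := Submodule.mkQ_surjective p wb
  have hXw : (X - μ • 1) w ∈ p := by
    have h0 : p.mkQ ((X - μ • 1) w) = 0 := by
      have hx : Xq (p.mkQ w) = p.mkQ (X w) := by
        rw [hXq, Submodule.mkQ_apply, Submodule.mapQ_apply, Submodule.mkQ_apply]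
      simp only [LinearMap.sub_apply, LinearMap.smul_apply, Module.End.one_apply, map_sub,
        map_smul]
      rw [← hx, hXwb, sub_self]
    rwa [Submodule.mkQ_apply, Submodule.Quotient.mk_eq_zero] at h0
  -- the adjustment argument
  have hadj : ∀ u ∈ p, ∃ v₁ ∈ p, u - (X - μ • 1) v₁ ∈ G X μ := by
    intro u hu
    refine Submodule.iSup_induction
      (motive := fun u => ∃ v₁ ∈ p, u - (X - μ • 1) v₁ ∈ G X μ) _ hu ?_ ?_ ?_
    · intro c u hu
      by_cases hc : μ = c
      · exact ⟨0, p.zero_mem, by subst hc; simpa using hu⟩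
      · have hmaps : ∀ z ∈ G X c, (X - μ • 1) z ∈ G X c := by
          intro z hz
          have hcomm : Commute X (X - μ • (1 : Module.End K V)) :=
            (Commute.refl X).sub_right (Commute.smul_right (Commute.one_right X) μ)
          exact Module.End.mapsTo_maxGenEigenspace_of_comm hcomm c hz
        obtain ⟨v₁, hv₁, hv₁eq⟩ := surj_on_of_inj_on (X - μ • 1) hmaps
          (fun z hz h0 => inj_on_gen X hc hz h0) hu
        refine ⟨v₁, le_iSup (fun μ => G X μ) c hv₁, ?_⟩
        rw [hv₁eq, sub_self]
        exact Submodule.zero_mem _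
    · exact ⟨0, p.zero_mem, by simpa using Submodule.zero_mem _⟩
    · rintro a b ⟨v₁, hv₁, h₁⟩ ⟨v₂, hv₂, h₂⟩
      refine ⟨v₁ + v₂, p.add_mem hv₁ hv₂, ?_⟩
      have : a + b - (X - μ • 1) (v₁ + v₂) = (a - (X - μ • 1) v₁) + (b - (X - μ • 1) v₂) := by
        rw [map_add]; abel
      rw [this]
      exact Submodule.add_mem _ h₁ h₂
  obtain ⟨v₁, hv₁p, hdiff⟩ := hadj _ hXw
  have hdiff2 : (X - μ • 1) (w - v₁) ∈ G X μ := by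
    rw [map_sub]; exact hdiff
  have hwv : w - v₁ ∈ G X μ := by
    rw [Module.End.mem_maxGenEigenspace] at hdiff2 ⊢
    obtain ⟨k, hk⟩ := hdiff2
    refine ⟨k + 1, ?_⟩
    rw [pow_succ, Module.End.mul_apply]
    exact hk
  have hwp : w ∈ p := by
    have := Submodule.add_mem p (le_iSup (fun μ => G X μ) μ hwv) hv₁p
    simpa using this
  exact hwbne (by rw [Submodule.mkQ_apply, Submodule.Quotient.mk_eq_zero]; exact hwp)

end SlodowyAux

attribute [local instance] LieRing.ofAssociativeRing

open SlodowyAux in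
/-- `[f+r, g] + g^e = g` (transversality of the Slodowy slice). -/
theorem bracket_sup_centralizer_eq_top
    {F : Type*} [Field F] [CharZero F]
    {g : Type*} [LieRing g] [LieAlgebra F g] [Module.Finite F g]
    [LieAlgebra.IsSimple F g]
    (e x f : g)
    (hxe : ⁅x, e⁆ = e) (hxf : ⁅x, f⁆ = -f) (hef : ⁅e, f⁆ = (2 : F) • x)
    (r : g)
    (hr : r ∈ ⨆ k : ℚ, ⨆ _ : (0 : ℚ) ≤ k,
        Module.End.eigenspace (LieAlgebra.ad F g x) (k : F)) :
    Submodule.map (LieAlgebra.ad F g (f + r)) ⊤ ⊔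
      LinearMap.ker (LieAlgebra.ad F g e) = ⊤ := by
  classical
  set X : Module.End F g := LieAlgebra.ad F g x with hX
  set E : Module.End F g := LieAlgebra.ad F g e with hE
  set Fo : Module.End F g := LieAlgebra.ad F g f with hFo
  have hXE : X * E - E * X = E := by
    have h := LieHom.map_lie (LieAlgebra.ad F g) x e
    rw [hxe, Ring.lie_def] at h
    exact h.symm
  have hXF : X * Fo - Fo * X = -Fo := by
    have h := LieHom.map_lie (LieAlgebra.ad F g) x f
    rw [hxf, Ring.lie_def, map_neg] at h
    exact h.symm
  have hEF : E * Fo - Fo * E = (2 : F) • X := by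
    have h := LieHom.map_lie (LieAlgebra.ad F g) e f
    rw [hef, Ring.lie_def, map_smul] at h
    exact h.symm
  set W : Submodule F g :=
    Submodule.map (LieAlgebra.ad F g (f + r)) ⊤ ⊔ LinearMap.ker E with hW
  -- finiteness of the spectrum
  have hindep := X.independent_maxGenEigenspace
  haveI hfint : Fintype {μ : F // Module.End.maxGenEigenspace X μ ≠ ⊥} :=
    hindep.fintypeNeBotOfFiniteDimensional
  set spec : Set F := {μ | Module.End.maxGenEigenspace X μ ≠ ⊥} with hspec
  have hspecfin : spec.Finite := by
    haveI : Finite {μ : F // Module.End.maxGenEigenspace X μ ≠ ⊥} := Finite.of_fintype _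
    exact Set.finite_coe_iff.mp this
  set meas : F → ℕ :=
    fun μ => (spec ∩ {μ' | ∃ q : ℚ, 1 ≤ q ∧ μ' = μ + (q : F)}).ncard with hmeas
  have hmdec : ∀ (μ : F) (q : ℚ), 0 ≤ q →
      Module.End.maxGenEigenspace X (μ + 1 + (q : F)) ≠ ⊥ →
      meas (μ + 1 + (q : F)) < meas μ := by
    intro μ q hq hbot
    have hsub : spec ∩ {μ' | ∃ q' : ℚ, 1 ≤ q' ∧ μ' = (μ + 1 + (q : F)) + (q' : F)} ⊆
        spec ∩ {μ' | ∃ q' : ℚ, 1 ≤ q' ∧ μ' = μ + (q' : F)} := by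
      rintro μ' ⟨hs, q', hq', rfl⟩
      exact ⟨hs, 1 + q + q', by linarith, by push_cast; ring⟩
    have hmem : (μ + 1 + (q : F)) ∈
        spec ∩ {μ' | ∃ q' : ℚ, 1 ≤ q' ∧ μ' = μ + (q' : F)} :=
      ⟨hbot, 1 + q, by linarith, by push_cast; ring⟩
    have hnot : (μ + 1 + (q : F)) ∉
        spec ∩ {μ' | ∃ q' : ℚ, 1 ≤ q' ∧ μ' = (μ + 1 + (q : F)) + (q' : F)} := by
      rintro ⟨-, q', hq', heq⟩
      have h0 : (q' : F) = 0 := by linear_combination -heq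
      have h1 : q' = 0 := by exact_mod_cast h0
      linarith
    exact Set.ncard_lt_ncard ((Set.ssubset_iff_of_subset hsub).mpr
      ⟨_, hmem, hnot⟩) (hspecfin.inter_of_left _)
  -- main downward induction
  have main : ∀ (n : ℕ) (μ : F), meas μ = n → Module.End.maxGenEigenspace X μ ≤ W := by
    intro n
    induction n using Nat.strong_induction_on with
    | _ n ih =>
      intro μ hn v hv
      obtain ⟨w, hw, u, hu, hvu⟩ := cover X E Fo hXE hXF hEF μ hv
      have hrw : ⁅r, w⁆ ∈ W := by
        refine Submodule.iSup_induction (motive := fun s => ⁅s, w⁆ ∈ W) _ hr ?_ ?_ ?_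
        · intro q s hs
          by_cases h0 : (0 : ℚ) ≤ q
          · rw [iSup_pos h0] at hs
            have hXs : X s = (q : F) • s := Module.End.mem_eigenspace_iff.mp hs
            have hrel : X * (LieAlgebra.ad F g s) - (LieAlgebra.ad F g s) * X =
                (q : F) • (LieAlgebra.ad F g s) := by
              have h := LieHom.map_lie (LieAlgebra.ad F g) x s
              have hx : ⁅x, s⁆ = (q : F) • s := by
                rw [← LieAlgebra.ad_apply F g x s, ← hX]; exact hXs
              rw [hx, map_smul, Ring.lie_def] at h
              exact h.symm
            have hmem2 : ⁅s, w⁆ ∈ Module.End.maxGenEigenspace X (μ + 1 + (q : F)) := by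
              have h2 := mapsTo_shift X (LieAlgebra.ad F g s) ((q : F)) hrel (μ + 1) hw
              rwa [LieAlgebra.ad_apply] at h2
            by_cases hbot : Module.End.maxGenEigenspace X (μ + 1 + (q : F)) = ⊥
            · rw [hbot, Submodule.mem_bot] at hmem2
              rw [hmem2]
              exact W.zero_mem
            · have hlt := hmdec μ q h0 hbot
              rw [hn] at hlt
              exact ih _ hlt _ rfl hmem2
          · rw [iSup_neg h0] at hs
            rw [Submodule.mem_bot] at hs
            rw [hs, zero_lie]
            exact W.zero_mem
        · show ⁅(0 : g), w⁆ ∈ W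
          rw [zero_lie]; exact W.zero_mem
        · intro s t hsW htW
          show ⁅s + t, w⁆ ∈ W
          rw [add_lie]
          exact W.add_mem hsW htW
      have hWfr : LieAlgebra.ad F g (f + r) w ∈ W := by
        refine le_sup_left (α := Submodule F g) ?_
        exact Submodule.mem_map_of_mem trivial
      have huW : u ∈ W := le_sup_right (α := Submodule F g) (LinearMap.mem_ker.mpr hu)
      have hfrw : LieAlgebra.ad F g (f + r) w = Fo w + ⁅r, w⁆ := by
        rw [LieAlgebra.ad_apply, add_lie, hFo, LieAlgebra.ad_apply]
      have hvW : v = u + LieAlgebra.ad F g (f + r) w - ⁅r, w⁆ := by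
        rw [hfrw, hvu]; abel
      rw [hvW]
      exact Submodule.sub_mem _ (Submodule.add_mem _ huW hWfr) hrw
  have htop := iSup_maxGen_eq_top X E Fo hXE hXF hEF
  show W = ⊤
  rw [eq_top_iff, ← htop]
  exact iSup_le fun μ => main (meas μ) μ rfl
end

section
/- Let g be a finite-dimensional Lie algebra with sl2-triple {e,h,f} acting via the adjoint representation. Then g = g^f ⊕ [e,g] and g = g^e ⊕ [f,g], and moreover g^f is orthogonal to [f,g] and [e,g] is orthogonal to g^e with respect to any invariant symmetric bilinear form. -/
open LieAlgebra LinearMap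

section aux2
variable {F : Type*} [Field F] [CharZero F]
variable {g : Type*} [LieRing g] [LieAlgebra F g] [Module.Finite F g]

attribute [local instance 100] LieRing.ofAssociativeRing

private lemma comm_pow' (A B : Module.End F g)
    (hAB : A * B = B * A + (2 : F) • B) (n : ℕ) :
    A * B ^ n = B ^ n * A + ((2 * n : F)) • B ^ n := by
  induction n with
  | zero => simp
  | succ n ih =>
    rw [pow_succ, ← mul_assoc, ih]
    simp only [add_mul, smul_mul_assoc, mul_assoc]
    rw [hAB]
    simp only [mul_add, mul_smul_comm]
    push_cast
    module

private lemma isNilpotent_of_comm (A B : Module.End F g)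
    (hAB : A * B = B * A + (2 : F) • B) : IsNilpotent B := by
  by_contra hB
  have hne : ∀ n : ℕ, B ^ n ≠ 0 := fun n hn => hB ⟨n, hn⟩
  set σ : Module.End F (Module.End F g) := LinearMap.mulLeft F A - LinearMap.mulRight F A with hσdef
  have hσ : ∀ n : ℕ, σ.HasEigenvector ((2 * n : F)) (B ^ n) := by
    intro n
    refine ⟨?_, hne n⟩
    rw [Module.End.mem_eigenspace_iff]
    simp only [hσdef, LinearMap.sub_apply, LinearMap.mulLeft_apply, LinearMap.mulRight_apply]
    rw [comm_pow' A B hAB n]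
    abel
  have hinj : Function.Injective (fun n : ℕ => (2 * n : F)) := by
    intro m n hmn
    simp only at hmn
    field_simp at hmn
    exact_mod_cast hmn
  exact Module.Finite.not_linearIndependent_of_infinite _
    (σ.eigenvectors_linearIndependent' (fun n : ℕ => (2 * n : F)) hinj _ hσ)

private lemma aux_disjoint (e h f : g)
    (hhe : ⁅h, e⁆ = (2 : F) • e) (hhf : ⁅h, f⁆ = -((2 : F) • f)) (hef : ⁅e, f⁆ = h) :
    Disjoint (LinearMap.ker (ad F g f)) (LinearMap.range (ad F g e)) := by
  by_cases hh : h = 0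
  · have he0 : e = 0 := by
      have : (2 : F) • e = 0 := by rw [← hhe, hh, zero_lie]
      simpa [smul_eq_zero] using this
    rw [he0]
    simp [disjoint_bot_right]
  have t : IsSl2Triple h e f := by
    refine ⟨hh, hef, ?_, ?_⟩
    · rw [hhe, ← Nat.cast_smul_eq_nsmul F]; norm_num
    · rw [hhf, ← Nat.cast_smul_eq_nsmul F]; norm_num
  set E : Module.End F g := ad F g e with hE
  set Fm : Module.End F g := ad F g f with hFm
  set H : Module.End F g := ad F g h with hH
  have hHE : H * E = E * H + (2 : F) • E := by
    have h1 : ⁅H, E⁆ = (2 : F) • E := by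
      rw [hH, hE, ← LieHom.map_lie, hhe, map_smul]
    rw [Ring.lie_def, sub_eq_iff_eq_add] at h1
    rw [h1]; abel
  have hFmE : Fm * E = E * Fm - H := by
    have h1 : ⁅E, Fm⁆ = H := by rw [hH, hE, hFm, ← LieHom.map_lie, hef]
    rw [Ring.lie_def] at h1
    rw [← h1]; abel
  have hFmH : Fm * H = H * Fm + (2 : F) • Fm := by
    have h1 : ⁅H, Fm⁆ = -((2 : F) • Fm) := by
      rw [hH, hFm, ← LieHom.map_lie, hhf, map_neg, map_smul]
    rw [Ring.lie_def, sub_eq_iff_eq_add] at h1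
    rw [h1]; abel
  -- the key commutation formula
  have key : ∀ k : ℕ, Fm * E ^ (k + 1)
      = E ^ (k + 1) * Fm - ((k + 1 : F)) • (E ^ k * H) - (((k : F)) * ((k + 1 : F))) • E ^ k := by
    intro k
    induction k with
    | zero => simp [hFmE]
    | succ k ih =>
      rw [pow_succ, ← mul_assoc, ih]
      simp only [sub_mul, smul_mul_assoc, mul_assoc]
      rw [hFmE, hHE]
      simp only [mul_sub, mul_add, mul_smul_comm, ← mul_assoc, ← pow_succ]
      push_cast
      module
  -- the descent step
  have step : ∀ k : ℕ, LinearMap.ker Fm ⊓ LinearMap.range (E ^ (k + 2)) = ⊥ →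
      LinearMap.ker Fm ⊓ LinearMap.range (E ^ (k + 1)) = ⊥ := by
    intro k htop
    rw [Submodule.eq_bot_iff]
    rintro v ⟨hvF, u, rfl⟩
    simp only [SetLike.mem_coe, LinearMap.mem_ker] at hvF
    set v : g := (E ^ (k + 1)) u with hv
    -- expand the key formula applied to u
    have e1 : Fm ((E ^ (k + 1)) u)
        = (E ^ (k + 1)) (Fm u) - ((k + 1 : F)) • ((E ^ k) (H u))
          - (((k : F)) * ((k + 1 : F))) • ((E ^ k) u) := by
      have := congrArg (fun T : Module.End F g => T u) (key k)
      simpa [Module.End.mul_apply] using this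
    rw [hvF] at e1
    -- apply E to the relation
    have e2 : (0 : g) = (E ^ (k + 2)) (Fm u) - ((k + 1 : F)) • ((E ^ (k + 1)) (H u))
        - (((k : F)) * ((k + 1 : F))) • v := by
      have := congrArg (fun x : g => E x) e1
      simp only [map_zero, map_sub, map_smul] at this
      rw [this]
      have p1 : E ((E ^ (k + 1)) (Fm u)) = (E ^ (k + 2)) (Fm u) := by
        rw [← Module.End.mul_apply, ← pow_succ']
      have p2 : E ((E ^ k) (H u)) = (E ^ (k + 1)) (H u) := by
        rw [← Module.End.mul_apply, ← pow_succ']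
      have p3 : E ((E ^ k) u) = v := by
        rw [← Module.End.mul_apply, ← pow_succ']
      rw [p1, p2, p3]
    -- rewrite E^(k+1) (H u) in terms of H v
    have e3 : (E ^ (k + 1)) (H u) = H v - ((2 * (k + 1) : F)) • v := by
      have := congrArg (fun T : Module.End F g => T u) (comm_pow' H E hHE (k + 1))
      simp only [Module.End.mul_apply, LinearMap.add_apply, LinearMap.smul_apply] at this
      push_cast at this ⊢
      rw [eq_sub_iff_add_eq, ← this, ← hv]
    rw [e3] at e2
    have hne : ((k : F) + 1) ≠ 0 := by
      have := Nat.cast_add_one_ne_zero (R := F) k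
      push_cast at this
      exact this
    -- conclude H v = (k+2) • v
    have e5 : ((k + 1 : F)) • (H v - ((k + 2 : F)) • v) = (E ^ (k + 2)) (Fm u) := by
      linear_combination (norm := module) e2
    have e4 : H v - ((k + 2 : F)) • v
        = (E ^ (k + 2)) (((k + 1 : F)⁻¹) • (Fm u)) := by
      rw [map_smul, ← e5, inv_smul_smul₀ (by push_cast; exact hne)]
    have hw : H v - ((k + 2 : F)) • v ∈ LinearMap.ker Fm ⊓ LinearMap.range (E ^ (k + 2)) := by
      refine Submodule.mem_inf.mpr ⟨LinearMap.mem_ker.mpr ?_, ⟨_, e4.symm⟩⟩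
      have hFv : Fm (H v) = H (Fm v) + (2 : F) • (Fm v) := by
        have := congrArg (fun T : Module.End F g => T v) hFmH
        simpa [Module.End.mul_apply] using this
      rw [map_sub, hFv, hvF, map_smul, hvF]
      simp
    rw [htop, Submodule.mem_bot, sub_eq_zero] at hw
    -- if v ≠ 0 then v is a primitive vector with negative eigenvalue: contradiction
    by_contra hv0
    have P : t.symm.HasPrimitiveVectorWith v (-(k + 2 : F)) := by
      refine ⟨hv0, ?_, ?_⟩
      · rw [neg_lie, ← ad_apply (R := F), ← hH, hw, neg_smul]
      · rw [← ad_apply (R := F), ← hFm, hvF]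
    obtain ⟨n, hn⟩ := P.exists_nat
    have : ((n + k + 2 : ℕ) : F) = 0 := by push_cast; linear_combination -hn
    rw [Nat.cast_eq_zero] at this
    omega
  -- nilpotency of E gives the base case, then descend
  obtain ⟨N, hN⟩ := isNilpotent_of_comm H E hHE
  have base : LinearMap.ker Fm ⊓ LinearMap.range (E ^ (N + 1)) = ⊥ := by
    have : E ^ (N + 1) = 0 := by rw [pow_succ, hN, zero_mul]
    simp [this]
  have down : ∀ i : ℕ, LinearMap.ker Fm ⊓ LinearMap.range (E ^ (N - i + 1)) = ⊥ := by
    intro i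
    induction i with
    | zero => simpa using base
    | succ i ih =>
      rcases Nat.lt_or_ge i N with hi | hi
      · have hEq : N - i + 1 = (N - (i + 1) + 1) + 1 := by omega
        rw [hEq] at ih
        exact step _ ih
      · have hEq : N - (i + 1) = N - i := by omega
        rw [hEq]
        exact ih
  have final := down N
  rw [Nat.sub_self, zero_add, pow_one] at final
  exact disjoint_iff.mpr final

end aux2


/-- for an sl2-triple `{e,h,f}` in a finite-dimensional Lie algebra `g`
over a characteristic-zero field, `g = g^f ⊕ [e,g]` and `g = g^e ⊕ [f,g]`, and these
decompositions are dual: `g^f ⊥ [f,g]` and `[e,g] ⊥ g^e` for any invariant symmetric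
bilinear form. -/
theorem sl2_decompositions_and_orthogonality
    {F : Type*} [Field F] [CharZero F]
    {g : Type*} [LieRing g] [LieAlgebra F g] [Module.Finite F g]
    (e h f : g)
    (hhe : ⁅h, e⁆ = (2 : F) • e) (hhf : ⁅h, f⁆ = -((2 : F) • f)) (hef : ⁅e, f⁆ = h) :
    IsCompl (LinearMap.ker (LieAlgebra.ad F g f)) (LinearMap.range (LieAlgebra.ad F g e)) ∧
    IsCompl (LinearMap.ker (LieAlgebra.ad F g e)) (LinearMap.range (LieAlgebra.ad F g f)) ∧
    (∀ B : LinearMap.BilinForm F g,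
      (∀ a b : g, B a b = B b a) →
      (∀ a b c : g, B ⁅a, b⁆ c = B a ⁅b, c⁆) →
      (∀ p ∈ LinearMap.ker (LieAlgebra.ad F g f),
        ∀ q ∈ LinearMap.range (LieAlgebra.ad F g f), B p q = 0) ∧
      (∀ p ∈ LinearMap.range (LieAlgebra.ad F g e),
        ∀ q ∈ LinearMap.ker (LieAlgebra.ad F g e), B p q = 0)) := by
  have hhe' : ⁅-h, f⁆ = (2 : F) • f := by rw [neg_lie, hhf, neg_neg]
  have hhf' : ⁅-h, e⁆ = -((2 : F) • e) := by rw [neg_lie, hhe]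
  have hef' : ⁅f, e⁆ = -h := by rw [← lie_skew, hef]
  have d1 : Disjoint (LinearMap.ker (ad F g f)) (LinearMap.range (ad F g e)) :=
    aux_disjoint e h f hhe hhf hef
  have d2 : Disjoint (LinearMap.ker (ad F g e)) (LinearMap.range (ad F g f)) :=
    aux_disjoint f (-h) e hhe' hhf' hef'

  -- rank comparison
  have rk1 : ∀ (a b : g), Disjoint (LinearMap.ker (ad F g a)) (LinearMap.range (ad F g b)) →
      Module.finrank F (LinearMap.range (ad F g b)) ≤
        Module.finrank F (LinearMap.range (ad F g a)) := by
    intro a b hd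
    have h1 := Submodule.finrank_sup_add_finrank_inf_eq
      (LinearMap.ker (ad F g a)) (LinearMap.range (ad F g b))
    rw [disjoint_iff.mp hd, finrank_bot, add_zero] at h1
    have h2 : Module.finrank F ((LinearMap.ker (ad F g a)) ⊔ (LinearMap.range (ad F g b)) :
        Submodule F g) ≤ Module.finrank F g := Submodule.finrank_le _
    have h3 := LinearMap.finrank_range_add_finrank_ker (ad F g a)
    omega
  have req : Module.finrank F (LinearMap.range (ad F g e))
      = Module.finrank F (LinearMap.range (ad F g f)) :=
    le_antisymm (rk1 f e d1) (rk1 e f d2)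
  have codis : ∀ (a b : g), Disjoint (LinearMap.ker (ad F g a)) (LinearMap.range (ad F g b)) →
      Module.finrank F (LinearMap.range (ad F g b))
        = Module.finrank F (LinearMap.range (ad F g a)) →
      Codisjoint (LinearMap.ker (ad F g a)) (LinearMap.range (ad F g b)) := by
    intro a b hd hr
    rw [codisjoint_iff]
    apply Submodule.eq_top_of_finrank_eq
    have h1 := Submodule.finrank_sup_add_finrank_inf_eq
      (LinearMap.ker (ad F g a)) (LinearMap.range (ad F g b))
    rw [disjoint_iff.mp hd, finrank_bot, add_zero] at h1
    have h3 := LinearMap.finrank_range_add_finrank_ker (ad F g a)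
    omega
  refine ⟨⟨d1, codis f e d1 req⟩, ⟨d2, codis e f d2 req.symm⟩, ?_⟩
  intro B hsymm hinv
  constructor
  · rintro p hp q ⟨x, rfl⟩
    rw [LinearMap.mem_ker] at hp
    rw [ad_apply] at hp ⊢
    rw [← hinv p f x]
    have : ⁅p, f⁆ = 0 := by rw [← lie_skew, hp, neg_zero]
    rw [this, LinearMap.map_zero₂]
  · rintro p ⟨x, rfl⟩ q hq
    rw [LinearMap.mem_ker] at hq
    rw [ad_apply] at hq ⊢
    rw [hsymm, ← hinv q e x]
    have : ⁅q, e⁆ = 0 := by rw [← lie_skew, hq, neg_zero]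
    rw [this, LinearMap.map_zero₂]
end

section
/- Let g be a Lie algebra with sl2-triple {e,h,f} and invariant symmetric bilinear form. For q_j with [h,q_j] = -2δ(j) q_j, q_j ∈ g^f, and q^i ∈ g^e with [h,q^i] = 2δ(i) q^i dual to q_i, one has ((ad e)^n q_j | (ad f)^m q^i) = (-1)^n (n!)^2 binom(2δ(j), n) δ_{i,j} δ_{m,n}. -/
/-- `((ad e)^n q_j | (ad f)^m q^i) = (-1)^n (n!)^2 C(2δ(j), n) δ_{i,j} δ_{m,n}`,
where `q_j` is a basis of `g^f` of `ad x`-eigenvectors with eigenvalue `-δ(j)` and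
`q^i` is the dual basis of `g^e` (here `d j = 2δ(j)`). -/
theorem pairing_ad_powers
    {F : Type*} [Field F] [CharZero F]
    {g : Type*} [LieRing g] [LieAlgebra F g] [Module.Finite F g]
    (e x f : g)
    (hxe : ⁅x, e⁆ = e) (hxf : ⁅x, f⁆ = -f) (hef : ⁅e, f⁆ = (2 : F) • x)
    (B : LinearMap.BilinForm F g)
    (hBsymm : ∀ a b : g, B a b = B b a)
    (hBinv : ∀ a b c : g, B ⁅a, b⁆ c = B a ⁅b, c⁆)
    (hBnd : B.Nondegenerate)
    {ι : Type*} [DecidableEq ι]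
    (qf qe : ι → g) (d : ι → ℕ)
    (hqf : ∀ j, ⁅f, qf j⁆ = 0)
    (hqfx : ∀ j, ⁅x, qf j⁆ = -(((d j : F) / 2) • qf j))
    (hqe : ∀ j, ⁅e, qe j⁆ = 0)
    (hqex : ∀ j, ⁅x, qe j⁆ = ((d j : F) / 2) • qe j)
    (hdual : ∀ i j, B (qf i) (qe j) = if i = j then 1 else 0)
    (i j : ι) (m n : ℕ) :
    B (((LieAlgebra.ad F g e) ^ n) (qf j)) (((LieAlgebra.ad F g f) ^ m) (qe i)) =
      (-1 : F) ^ n * (n.factorial : F) ^ 2 * ((d j).choose n : F) *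
        (if i = j ∧ m = n then 1 else 0) := by
  set E : Module.End F g := LieAlgebra.ad F g e with hE
  set Fl : Module.End F g := LieAlgebra.ad F g f with hF
  have hEapp : ∀ u : g, E u = ⁅e, u⁆ := fun u => rfl
  have hFapp : ∀ u : g, Fl u = ⁅f, u⁆ := fun u => rfl
  have hfe : (⁅f, e⁆ : g) = -((2 : F) • x) := by rw [← lie_skew f e, hef]
  -- weight of (ad e)^N (qf j)
  have wt : ∀ N : ℕ, ⁅x, (E ^ N) (qf j)⁆ = ((N : F) - (d j : F) / 2) • (E ^ N) (qf j) := by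
    intro N
    induction N with
    | zero =>
      simp only [pow_zero, Module.End.one_apply, hqfx j, Nat.cast_zero]
      module
    | succ N ih =>
      rw [pow_succ', Module.End.mul_apply, hEapp]
      rw [leibniz_lie x e ((E ^ N) (qf j)), hxe, ih, lie_smul]
      push_cast
      module
  -- lowering lemma
  have low : ∀ N : ℕ, ⁅f, (E ^ (N + 1)) (qf j)⁆ =
      (((N : F) + 1) * ((d j : F) - (N : F))) • (E ^ N) (qf j) := by
    intro N
    induction N with
    | zero =>
      rw [pow_one, hEapp, leibniz_lie f e (qf j), hqf j, lie_zero, add_zero]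
      rw [hfe, neg_lie, smul_lie, hqfx j]
      simp only [pow_zero, Module.End.one_apply, Nat.cast_zero]
      module
    | succ N ih =>
      rw [pow_succ', Module.End.mul_apply, hEapp]
      rw [leibniz_lie f e ((E ^ (N + 1)) (qf j)), ih, lie_smul]
      rw [hfe, neg_lie, smul_lie, wt (N + 1)]
      rw [← hEapp, ← Module.End.mul_apply, ← pow_succ']
      push_cast
      match_scalars
      ring
  -- iterated lowering
  have desc : ∀ M N : ℕ, M ≤ N → (Fl ^ M) ((E ^ N) (qf j)) =
      (∏ k ∈ Finset.range M, (((N : F) - k) * ((d j : F) - N + k + 1))) •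
        (E ^ (N - M)) (qf j) := by
    intro M
    induction M with
    | zero => intro N _; simp
    | succ M ih =>
      intro N hMN
      have hM : M ≤ N := by omega
      rw [pow_succ', Module.End.mul_apply, ih N hM, map_smul, hFapp]
      have h1 : N - M = (N - (M + 1)) + 1 := by omega
      rw [h1, low (N - (M + 1))]
      rw [Finset.prod_range_succ, smul_smul]
      congr 1
      have h2 : ((N - (M + 1) : ℕ) : F) = (N : F) - (M : F) - 1 := by
        rw [Nat.cast_sub hMN]; push_cast; ring
      rw [h2]; ring
  -- moving powers of ad f across B
  have moveF : ∀ (M : ℕ) (u w : g), B u ((Fl ^ M) w) = (-1 : F) ^ M * B ((Fl ^ M) u) w := by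
    intro M
    induction M with
    | zero => intro u w; simp
    | succ M ih =>
      intro u w
      have h2 := hBinv ((Fl ^ M) u) f w
      rw [← lie_skew ((Fl ^ M) u) f, ← hFapp, ← hFapp, map_neg,
        LinearMap.neg_apply] at h2
      calc B u ((Fl ^ (M + 1)) w) = B u ((Fl ^ M) (Fl w)) := by
            rw [pow_succ, Module.End.mul_apply]
        _ = (-1 : F) ^ M * B ((Fl ^ M) u) (Fl w) := ih u (Fl w)
        _ = (-1 : F) ^ M * -(B (Fl ((Fl ^ M) u)) w) := by rw [h2]
        _ = (-1 : F) ^ (M + 1) * B ((Fl ^ (M + 1)) u) w := by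
            rw [← Module.End.mul_apply, ← pow_succ']; ring
  -- moving powers of ad e across B
  have moveE : ∀ (N : ℕ) (u w : g), B ((E ^ N) u) w = (-1 : F) ^ N * B u ((E ^ N) w) := by
    intro N
    induction N with
    | zero => intro u w; simp
    | succ N ih =>
      intro u w
      have h2 := hBinv ((E ^ N) u) e w
      rw [← lie_skew ((E ^ N) u) e, ← hEapp, ← hEapp, map_neg,
        LinearMap.neg_apply] at h2
      calc B ((E ^ (N + 1)) u) w = B (E ((E ^ N) u)) w := by
            rw [pow_succ', Module.End.mul_apply]
        _ = -B ((E ^ N) u) (E w) := by rw [← h2, neg_neg]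
        _ = -((-1 : F) ^ N * B u ((E ^ N) (E w))) := by rw [ih u (E w)]
        _ = (-1 : F) ^ (N + 1) * B u ((E ^ (N + 1)) w) := by
            rw [← Module.End.mul_apply, ← pow_succ]; ring
  -- vanishing powers
  have powzero : ∀ (A : Module.End F g) (v : g), A v = 0 → ∀ N : ℕ, 1 ≤ N → (A ^ N) v = 0 := by
    intro A v hv N hN
    obtain ⟨N', rfl⟩ : ∃ N', N = N' + 1 := ⟨N - 1, by omega⟩
    rw [pow_succ, Module.End.mul_apply, hv, map_zero]
  have hEqe : E (qe i) = 0 := by rw [hEapp, hqe i]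
  have hFqf : Fl (qf j) = 0 := by rw [hFapp, hqf j]
  -- scalar product identities
  have fact : ∀ N : ℕ, (∏ k ∈ Finset.range N, ((N : F) - (k : F))) = (N.factorial : F) := by
    intro N
    rw [← Nat.descFactorial_self N, Nat.descFactorial_eq_prod_range, Nat.cast_prod]
    refine Finset.prod_congr rfl fun k hk => ?_
    rw [Nat.cast_sub (le_of_lt (Finset.mem_range.mp hk))]
  have chooseid : ∀ (lam N : ℕ), (∏ k ∈ Finset.range N, ((lam : F) - (k : F))) =
      (N.factorial : F) * (lam.choose N : F) := by
    intro lam N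
    induction N with
    | zero => simp
    | succ N ih =>
      rw [Finset.prod_range_succ, ih]
      by_cases h : N ≤ lam
      · have key := Nat.choose_succ_right_eq lam N
        have keyF : (lam.choose (N + 1) : F) * ((N : F) + 1) =
            (lam.choose N : F) * ((lam : F) - (N : F)) := by
          have := congrArg (fun t : ℕ => (t : F)) key
          push_cast [Nat.cast_sub h] at this
          convert this using 2 <;> push_cast <;> ring
        rw [Nat.factorial_succ]
        push_cast
        linear_combination (-(N.factorial : F)) * keyF
      · have h1 : lam.choose N = 0 := Nat.choose_eq_zero_of_lt (by omega)
        have h2 : lam.choose (N + 1) = 0 := Nat.choose_eq_zero_of_lt (by omega)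
        rw [h1, h2]; push_cast; ring
  have refl : ∀ N : ℕ, (∏ k ∈ Finset.range N, ((d j : F) - (N : F) + (k : F) + 1)) =
      (∏ k ∈ Finset.range N, ((d j : F) - (k : F))) := by
    intro N
    rw [← Finset.prod_range_reflect (fun k => (d j : F) - (N : F) + (k : F) + 1) N]
    refine Finset.prod_congr rfl fun k hk => ?_
    have hk' := Finset.mem_range.mp hk
    have : ((N - 1 - k : ℕ) : F) = (N : F) - 1 - (k : F) := by
      rw [Nat.cast_sub (by omega), Nat.cast_sub (by omega)]; push_cast; ring
    rw [this]; ring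
  have cnn : ∀ N : ℕ, (∏ k ∈ Finset.range N, (((N : F) - k) * ((d j : F) - N + k + 1))) =
      (N.factorial : F) ^ 2 * ((d j).choose N : F) := by
    intro N
    rw [Finset.prod_mul_distrib, fact N, refl N, chooseid (d j) N, sq]
    ring
  -- main case analysis
  rcases Nat.lt_trichotomy m n with h | h | h
  · -- m < n
    rw [if_neg (by rintro ⟨-, rfl⟩; exact lt_irrefl m h)]
    rw [moveF m, desc m n h.le, map_smul, LinearMap.smul_apply, moveE (n - m)]
    rw [powzero E (qe i) hEqe (n - m) (by omega), map_zero]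
    simp
  · -- m = n
    subst h
    rw [moveF m, desc m m le_rfl, Nat.sub_self, pow_zero, Module.End.one_apply]
    rw [map_smul, LinearMap.smul_apply, hdual j i, cnn m]
    by_cases hij : i = j
    · subst hij
      simp only [if_pos rfl, and_self, if_true, smul_eq_mul]
      ring
    · rw [if_neg (fun hh => hij hh.symm), if_neg (by rintro ⟨rfl, -⟩; exact hij rfl)]
      simp
  · -- m > n
    rw [if_neg (by rintro ⟨-, rfl⟩; exact lt_irrefl m h)]
    rw [moveF m]
    have hsplit : (Fl ^ m) ((E ^ n) (qf j)) = (Fl ^ (m - n)) ((Fl ^ n) ((E ^ n) (qf j))) := by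
      have hm : Fl ^ m = Fl ^ (m - n) * Fl ^ n := by
        rw [← pow_add]; congr 1; omega
      rw [hm, Module.End.mul_apply]
    rw [hsplit, desc n n le_rfl, Nat.sub_self, pow_zero, Module.End.one_apply, map_smul]
    rw [powzero Fl (qf j) hFqf (m - n) (by omega), smul_zero, map_zero]
    simp
end

section
/- Let g be a finite-dimensional Lie algebra with sl2-triple {e,h=2x,f}, r ∈ g_{≥0}, and define Φ^{(r)} = π_{g^e} ∘ (1 + (ad r)∘(ad f)^{-1}∘π_{[f,g]})^{-1}. Then for every a ∈ g, a − Φ^{(r)}(a) = [f+r, (ad f)^{-1}∘π_{[f,g]}∘(1+(ad r)∘(ad f)^{-1}∘π_{[f,g]})^{-1}(a)], so in particular a − Φ^{(r)}(a) ∈ [f+r, g]. -/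
/-- with `Φ^{(r)} = π_{g^e} ∘ (1 + (ad r)∘(ad f)^{-1}∘π_{[f,g]})^{-1}`,
for every `a ∈ g` one has
`a - Φ^{(r)}(a) = [f+r, (ad f)^{-1}∘π_{[f,g]}∘(1+(ad r)∘(ad f)^{-1}∘π_{[f,g]})^{-1}(a)]`,
so in particular `a - Φ^{(r)}(a) ∈ [f+r, g]`. Here `pf` is the projection onto `[f,g]`
along `g^e` (so `π_{g^e} = 1 - pf`), `sg = (ad f)^{-1}∘π_{[f,g]}`, and `ps` is the
two-sided inverse of `1 + (ad r) ∘ sg`. -/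
theorem Phi_complement_formula
    {F : Type*} [Field F] [CharZero F]
    {g : Type*} [LieRing g] [LieAlgebra F g] [Module.Finite F g]
    (e x f : g)
    (hxe : ⁅x, e⁆ = e) (hxf : ⁅x, f⁆ = -f) (hef : ⁅e, f⁆ = (2 : F) • x)
    (r : g)
    (hr : r ∈ ⨆ k : ℚ, ⨆ _ : (0 : ℚ) ≤ k,
        Module.End.eigenspace (LieAlgebra.ad F g x) (k : F))
    (pf sg ps : Module.End F g)
    (hpf1 : ∀ a : g, pf a ∈ LinearMap.range (LieAlgebra.ad F g f))
    (hpf2 : ∀ a : g, a - pf a ∈ LinearMap.ker (LieAlgebra.ad F g e))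
    (hsg1 : ∀ a : g, sg a ∈ LinearMap.range (LieAlgebra.ad F g e))
    (hsg2 : ∀ a : g, ⁅f, sg a⁆ = pf a)
    (hps1 : (1 + LieAlgebra.ad F g r * sg) * ps = 1)
    (hps2 : ps * (1 + LieAlgebra.ad F g r * sg) = 1)
    (Phi : Module.End F g) (hPhi : Phi = (1 - pf) * ps) :
    ∀ a : g,
      a - Phi a = ⁅f + r, sg (ps a)⁆ ∧
      a - Phi a ∈ Submodule.map (LieAlgebra.ad F g (f + r)) ⊤ := by
  intro a
  have h1 : ps a + ⁅r, sg (ps a)⁆ = a := by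
    have := congrArg (fun T : Module.End F g => T a) hps1
    simpa [Module.End.mul_apply, LieAlgebra.ad_apply] using this
  have key : a - Phi a = ⁅f + r, sg (ps a)⁆ := by
    rw [hPhi]
    have : (1 - pf : Module.End F g) (ps a) = ps a - pf (ps a) := by
      simp [LinearMap.sub_apply]
    rw [Module.End.mul_apply, this, add_lie, hsg2]
    have h2 : a - ps a = ⁅r, sg (ps a)⁆ := by
      rw [sub_eq_iff_eq_add']; exact h1.symm
    rw [show a - (ps a - pf (ps a)) = (a - ps a) + pf (ps a) by abel, h2]
    abel
  exact ⟨key, key ▸ ⟨sg (ps a), trivial, rfl⟩⟩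
end

section
/- Let g be a finite-dimensional simple Lie algebra with sl2-triple {e,h=2x,f}, nondegenerate invariant form, and r ∈ g_{≥0}. Define V^{(r)} = { [f+r,a] : a ∈ g, (a | [f+r,g] ∩ g^e) = 0 }. Then g = g^e ⊕ V^{(r)}, and the map Φ^{(r)} defined by Φ^{(r)} = π_{g^e}∘(1+(ad r)∘(ad f)^{-1}∘π_{[f,g]})^{-1} is the projection onto g^e with kernel V^{(r)}. -/
open Finset
set_option linter.unusedSectionVars false
section Texp
variable (F : Type*) {A : Type*} [Field F] [CharZero F] [Ring A] [Algebra F A]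

noncomputable def texp (a : A) (k : ℕ) : A :=
  ∑ i ∈ Finset.range k, (i.factorial : F)⁻¹ • a ^ i

lemma texp_fac_coeff {k i : ℕ} (hik : i ≤ k) :
    (k.factorial : F)⁻¹ * (k.choose i : F) = (i.factorial : F)⁻¹ * ((k - i).factorial : F)⁻¹ := by
  have hfac : ((k.choose i : ℕ) : F) * (i.factorial : F) * ((k - i).factorial : F)
      = (k.factorial : F) := by
    rw_mod_cast [Nat.choose_mul_factorial_mul_factorial hik]
  have h1 : (i.factorial : F) ≠ 0 := Nat.cast_ne_zero.2 i.factorial_ne_zero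
  have h2 : ((k - i).factorial : F) ≠ 0 := Nat.cast_ne_zero.2 (k - i).factorial_ne_zero
  have h3 : (k.factorial : F) ≠ 0 := Nat.cast_ne_zero.2 k.factorial_ne_zero
  field_simp
  linear_combination hfac

lemma texp_mul (a b : A) (h : Commute a b) {m n : ℕ} (ha : a ^ m = 0) (hb : b ^ n = 0) :
    texp F a m * texp F b n = texp F (a + b) (m + n) := by
  classical
  set t : ℕ × ℕ → A :=
    fun p => ((p.1.factorial : F)⁻¹ * (p.2.factorial : F)⁻¹) • (a ^ p.1 * b ^ p.2) with ht
  have hzero : ∀ p : ℕ × ℕ, m ≤ p.1 ∨ n ≤ p.2 → t p = 0 := by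
    rintro ⟨i, j⟩ (hi | hj) <;> simp only [ht]
    · have : a ^ i = 0 := by rw [show i = m + (i - m) by omega, pow_add, ha, zero_mul]
      rw [this, zero_mul, smul_zero]
    · have : b ^ j = 0 := by rw [show j = n + (j - n) by omega, pow_add, hb, zero_mul]
      rw [this, mul_zero, smul_zero]
  have hL : texp F a m * texp F b n = ∑ p ∈ range m ×ˢ range n, t p := by
    rw [texp, texp, Finset.sum_mul_sum, Finset.sum_product]
    refine Finset.sum_congr rfl fun i _ => Finset.sum_congr rfl fun j _ => ?_
    rw [smul_mul_assoc, mul_smul_comm, smul_smul]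
  have hR : texp F (a + b) (m + n) = ∑ k ∈ range (m + n), ∑ p ∈ Finset.HasAntidiagonal.antidiagonal k, t p := by
    rw [texp]
    refine Finset.sum_congr rfl fun k _ => ?_
    rw [Finset.Nat.sum_antidiagonal_eq_sum_range_succ_mk, h.add_pow, Finset.smul_sum]
    refine Finset.sum_congr rfl fun i hi => ?_
    have hik : i ≤ k := Nat.lt_succ_iff.1 (Finset.mem_range.1 hi)
    have hc : a ^ i * b ^ (k - i) * (k.choose i : A) = (k.choose i : F) • (a ^ i * b ^ (k - i)) := by
      rw [(Nat.cast_commute (k.choose i) (a ^ i * b ^ (k - i))).symm.eq,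
        ← nsmul_eq_mul, ← Nat.cast_smul_eq_nsmul F]
    rw [hc, smul_smul, texp_fac_coeff F hik]
  rw [hL, hR]
  have hdisj : (↑(range (m + n)) : Set ℕ).PairwiseDisjoint (fun k => Finset.HasAntidiagonal.antidiagonal k) :=
    fun x _ y _ hxy => Finset.disjoint_left.2 fun p hpx hpy =>
      hxy (by rw [← Finset.HasAntidiagonal.mem_antidiagonal.1 hpx, ← Finset.HasAntidiagonal.mem_antidiagonal.1 hpy])
  rw [← Finset.sum_biUnion hdisj]
  have hsq1 : ∑ p ∈ range m ×ˢ range n, t p = ∑ p ∈ range (m + n) ×ˢ range (m + n), t p := by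
    refine Finset.sum_subset ?_ fun p hp hnp => hzero p ?_
    · intro p hp
      simp only [Finset.mem_product, Finset.mem_range] at hp ⊢
      omega
    · simp only [Finset.mem_product, Finset.mem_range] at hp hnp
      omega
  have hsq2 : ∑ p ∈ (range (m + n)).biUnion Finset.HasAntidiagonal.antidiagonal, t p
      = ∑ p ∈ range (m + n) ×ˢ range (m + n), t p := by
    refine Finset.sum_subset ?_ fun p hp hnp => hzero p ?_
    · intro p hp
      simp only [Finset.mem_biUnion, Finset.HasAntidiagonal.mem_antidiagonal, Finset.mem_range,
        Finset.mem_product] at hp ⊢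
      omega
    · have hge : ¬ (p.1 + p.2 < m + n) := fun hlt => hnp
        (Finset.mem_biUnion.2 ⟨p.1 + p.2, Finset.mem_range.2 hlt, Finset.HasAntidiagonal.mem_antidiagonal.2 rfl⟩)
      simp only [Finset.mem_product, Finset.mem_range] at hp
      omega
  rw [hsq1, hsq2]
end Texp
section Texp
variable (F : Type*) {A : Type*} [Field F] [CharZero F] [Ring A] [Algebra F A]

lemma texp_trunc {n k : ℕ} (a : A) (ha : a ^ n = 0) (hk : n ≤ k) :
    texp F a k = texp F a n := by
  refine (Finset.sum_subset (Finset.range_subset_range.2 hk) fun i _ hi => ?_).symm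
  have hni : n ≤ i := by simpa using hi
  have : a ^ i = 0 := by
    rw [show i = n + (i - n) by omega, pow_add, ha, zero_mul]
  rw [this, smul_zero]

lemma texp_zero_pos {k : ℕ} (hk : 0 < k) : texp F (0 : A) k = 1 := by
  rw [texp, Finset.sum_eq_single 0]
  · simp
  · intro i _ hi
    rw [zero_pow hi, smul_zero]
  · intro h; exact absurd (Finset.mem_range.2 hk) h

lemma texp_neg_mul (a : A) {n : ℕ} (ha : a ^ n = 0) (hn : 0 < n) :
    texp F a n * texp F (-a) n = 1 := by
  rw [texp_mul F a (-a) (Commute.refl a).neg_right ha (by rw [neg_pow, ha, mul_zero]),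
    add_neg_cancel]
  exact texp_zero_pos F (by omega)
end Texp
section LieStuff
attribute [local instance] LieRing.ofAssociativeRing
variable {F : Type*} {g : Type*} [Field F] [CharZero F]
  [LieRing g] [LieAlgebra F g] [Module.Finite F g]

local notation "ad" => LieAlgebra.ad F g

lemma ad_comm_eq (u z : g) :
    ad u * ad z - ad z * ad u = ad ⁅u, z⁆ := by
  rw [LieHom.map_lie, Ring.lie_def]

lemma ad_nilpotent_of_eigen (x u : g) (c : F) (hc : c ≠ 0) (h : ⁅x, u⁆ = c • u) :
    ∃ N : ℕ, (ad u) ^ N = 0 := by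
  by_contra hcon
  push_neg at hcon
  set X := ad x with hX
  set Uu := ad u with hU
  have hXU : X * Uu - Uu * X = c • Uu := by
    have h1 := ad_comm_eq (F := F) x u
    rw [h, map_smul] at h1
    exact h1
  set Dx : Module.End F (Module.End F g) :=
    LinearMap.mulLeft F X - LinearMap.mulRight F X with hDx
  have hDapp : ∀ T : Module.End F g, Dx T = X * T - T * X := fun T => rfl
  have hDpow : ∀ m : ℕ, Dx (Uu ^ m) = ((m : F) * c) • Uu ^ m := by
    intro m
    induction m with
    | zero => simp [hDapp]
    | succ m ih =>
      rw [hDapp] at ih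
      have e1 : X * Uu ^ m = Uu ^ m * X + ((m : F) * c) • Uu ^ m := by
        rw [← ih]; abel
      have e2 : X * Uu = Uu * X + c • Uu := by rw [← hXU]; abel
      have : X * Uu ^ (m + 1) = Uu ^ (m + 1) * X + (((m : F) + 1) * c) • Uu ^ (m + 1) := by
        calc X * Uu ^ (m + 1) = (X * Uu ^ m) * Uu := by rw [pow_succ, mul_assoc]
        _ = (Uu ^ m * X + ((m : F) * c) • Uu ^ m) * Uu := by rw [e1]
        _ = Uu ^ m * (X * Uu) + ((m : F) * c) • Uu ^ (m + 1) := by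
            rw [add_mul, mul_assoc, smul_mul_assoc, pow_succ]
        _ = Uu ^ m * (Uu * X + c • Uu) + ((m : F) * c) • Uu ^ (m + 1) := by rw [e2]
        _ = Uu ^ (m + 1) * X + (((m : F) + 1) * c) • Uu ^ (m + 1) := by
            rw [mul_add, ← mul_assoc, ← pow_succ, mul_smul_comm, ← pow_succ, add_assoc, ← add_smul,
              show c + (m : F) * c = ((m : F) + 1) * c from by ring]
      rw [hDapp, this, Nat.cast_add, Nat.cast_one]
      abel
  have heig : ∀ m : ℕ, Module.End.HasEigenvector Dx ((m : F) * c) (Uu ^ m) := fun m =>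
    ⟨Module.End.mem_eigenspace_iff.2 (hDpow m), hcon m⟩
  have hinj : Function.Injective fun m : ℕ => (m : F) * c := by
    intro p q hpq
    simp only at hpq
    exact Nat.cast_injective (mul_right_cancel₀ hc hpq)
  have hli := Module.End.eigenvectors_linearIndependent' Dx _ hinj _ heig
  have hcard := hli.lt_aleph0_of_finite
  simp [Cardinal.mk_nat] at hcard

end LieStuff
section LieStuff2
attribute [local instance] LieRing.ofAssociativeRing
variable {F : Type*} {g : Type*} [Field F] [CharZero F]
  [LieRing g] [LieAlgebra F g] [Module.Finite F g]

local notation "ad" => LieAlgebra.ad F g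

lemma texp_ad_conj (u : g) {N : ℕ} (hN : (ad u) ^ N = 0) (z : g) :
    ad (texp F (ad u) N z) = texp F (ad u) N * ad z * texp F (-(ad u)) N := by
  set D : Module.End F g := ad u with hD
  set L : Module.End F (Module.End F g) := LinearMap.mulLeft F D with hL
  set Rm : Module.End F (Module.End F g) := LinearMap.mulRight F (-D) with hR
  have hLN : L ^ N = 0 := by
    rw [hL, LinearMap.pow_mulLeft, hN, LinearMap.mulLeft_zero_eq_zero]
  have hRN : Rm ^ N = 0 := by
    rw [hR, LinearMap.pow_mulRight, neg_pow, hN, mul_zero, LinearMap.mulRight_zero_eq_zero]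
  have hcomm : Commute L Rm := by
    apply LinearMap.ext; intro T
    show L (Rm T) = Rm (L T)
    simp only [hL, hR, LinearMap.mulLeft_apply, LinearMap.mulRight_apply, mul_assoc]
  have hmul := texp_mul F L Rm hcomm hLN hRN
  have happly : ∀ T : Module.End F g,
      texp F (L + Rm) (N + N) T = texp F D N * T * texp F (-D) N := by
    intro T
    rw [← hmul, Module.End.mul_apply]
    have h1 : texp F Rm N T = T * texp F (-D) N := by
      rw [texp, texp, LinearMap.sum_apply, Finset.mul_sum]
      refine Finset.sum_congr rfl fun j _ => ?_
      rw [LinearMap.smul_apply, hR, LinearMap.pow_mulRight, LinearMap.mulRight_apply,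
        mul_smul_comm]
    have h2 : ∀ S : Module.End F g, texp F L N S = texp F D N * S := by
      intro S
      rw [texp, texp, LinearMap.sum_apply, Finset.sum_mul]
      refine Finset.sum_congr rfl fun j _ => ?_
      rw [LinearMap.smul_apply, hL, LinearMap.pow_mulLeft, LinearMap.mulLeft_apply,
        smul_mul_assoc]
    rw [h1, h2, mul_assoc]
  have hpow : ∀ (m : ℕ) (w : g), ((L + Rm) ^ m) (ad w) = ad ((D ^ m) w) := by
    intro m
    induction m with
    | zero => intro w; simp
    | succ m ih =>
      intro w
      have hb : (L + Rm) (ad w) = ad (D w) := by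
        have hcomm2 := ad_comm_eq (F := F) u w
        have : (L + Rm) (ad w) = D * ad w - ad w * D := by
          show L (ad w) + Rm (ad w) = _
          simp only [hL, hR, LinearMap.mulLeft_apply, LinearMap.mulRight_apply, mul_neg]
          rw [← sub_eq_add_neg]
        rw [this, hcomm2, hD, LieAlgebra.ad_apply]
      rw [pow_succ, Module.End.mul_apply, hb, ih (D w), ← Module.End.mul_apply, ← pow_succ]
  set adl : g →ₗ[F] Module.End F g := (LieAlgebra.ad F g).toLinearMap with hadl
  have hcoe : ∀ w : g, (ad : g →ₗ⁅F⁆ Module.End F g) w = adl w := fun w => rfl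
  have lhs_eq : ad (texp F D N z)
      = ∑ m ∈ Finset.range (N + N), (m.factorial : F)⁻¹ • ((ad : g →ₗ⁅F⁆ Module.End F g) ((D ^ m) z)) := by
    have htr : texp F D N z = texp F D (N + N) z := by
      rw [texp_trunc F D hN (Nat.le_add_right N N)]
    rw [hcoe, htr, texp, LinearMap.sum_apply, map_sum]
    refine Finset.sum_congr rfl fun m _ => ?_
    rw [LinearMap.smul_apply, map_smul, hcoe]
  have rhs_eq : texp F (L + Rm) (N + N) (ad z)
      = ∑ m ∈ Finset.range (N + N), (m.factorial : F)⁻¹ • ((ad : g →ₗ⁅F⁆ Module.End F g) ((D ^ m) z)) := by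
    rw [texp, LinearMap.sum_apply]
    refine Finset.sum_congr rfl fun m _ => ?_
    rw [LinearMap.smul_apply, hpow m z]
  rw [lhs_eq, ← rhs_eq, happly]

lemma finrank_range_conj (σ σ' T : Module.End F g) (h1 : σ * σ' = 1) (h2 : σ' * σ = 1) :
    Module.finrank F (LinearMap.range (σ * T * σ'))
      = Module.finrank F (LinearMap.range T) := by
  have hsurj : LinearMap.range σ' = ⊤ := by
    rw [LinearMap.range_eq_top]
    intro a
    exact ⟨σ a, by rw [← Module.End.mul_apply, h2, Module.End.one_apply]⟩
  have h1' : σ.comp σ' = LinearMap.id := by rw [← Module.End.mul_eq_comp, h1]; rfl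
  have h2' : σ'.comp σ = LinearMap.id := by rw [← Module.End.mul_eq_comp, h2]; rfl
  rw [mul_assoc, Module.End.mul_eq_comp, LinearMap.range_comp, Module.End.mul_eq_comp,
    LinearMap.range_comp_of_range_eq_top T hsurj]
  exact LinearEquiv.finrank_map_eq (LinearEquiv.ofLinear σ σ' h1' h2') _

lemma texp_apply_three (D : Module.End F g) {N : ℕ} (h3 : 3 ≤ N) (z : g)
    (hz : D (D (D z)) = 0) :
    texp F D N z = z + D z + (2 : F)⁻¹ • D (D z) := by
  have hz3 : ∀ i, 3 ≤ i → (D ^ i) z = 0 := by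
    intro i hi
    have hsplit : (D ^ i) z = (D ^ (i - 3)) ((D ^ 3) z) := by
      conv_lhs => rw [show i = (i - 3) + 3 by omega]
      rw [pow_add, Module.End.mul_apply]
    have h3z : (D ^ 3) z = D (D (D z)) := by
      simp [pow_succ, Module.End.mul_apply]
    rw [hsplit, h3z, hz, map_zero]
  rw [texp, LinearMap.sum_apply]
  have := (Finset.sum_subset (Finset.range_subset_range.2 h3)
    (fun i _ hi => ?_) :
      ∑ i ∈ Finset.range 3, ((i.factorial : F)⁻¹ • D ^ i) z
        = ∑ i ∈ Finset.range (N), ((i.factorial : F)⁻¹ • D ^ i) z)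
  · rw [← this]
    rw [Finset.sum_range_succ, Finset.sum_range_succ, Finset.sum_range_one]
    simp only [LinearMap.smul_apply, pow_zero, Module.End.one_apply, pow_one]
    have h2 : (D ^ 2) z = D (D z) := by simp [pow_succ, Module.End.mul_apply]
    rw [h2]
    norm_num [Nat.factorial]
  · rw [LinearMap.smul_apply, hz3 i (by simpa using hi), smul_zero]

end LieStuff2
section LieStuff3
variable {F : Type*} {g : Type*} [Field F] [CharZero F]
  [LieRing g] [LieAlgebra F g] [Module.Finite F g]

local notation "ad" => LieAlgebra.ad F g

lemma finrank_range_ad_f_eq_e (e x f : g)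
    (hxe : ⁅x, e⁆ = e) (hxf : ⁅x, f⁆ = -f) (hef : ⁅e, f⁆ = (2 : F) • x) :
    Module.finrank F (LinearMap.range (ad f)) = Module.finrank F (LinearMap.range (ad e)) := by
  obtain ⟨n1, hn1⟩ := ad_nilpotent_of_eigen x e (1 : F) one_ne_zero (by rw [hxe, one_smul])
  obtain ⟨n2, hn2⟩ := ad_nilpotent_of_eigen x (-f) (-1 : F) (neg_ne_zero.2 one_ne_zero)
    (by rw [lie_neg, hxf, neg_neg, neg_smul, one_smul, neg_neg])
  set N : ℕ := n1 + n2 + 3 with hNdef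
  have hpowzer : ∀ (T : Module.End F g) (n : ℕ), T ^ n = 0 → n ≤ N → T ^ N = 0 := by
    intro T n hTn hle
    rw [show N = n + (N - n) by omega, pow_add, hTn, zero_mul]
  have hNe : (ad e) ^ N = 0 := hpowzer _ n1 hn1 (by omega)
  have hNf : (ad (-f : g)) ^ N = 0 := hpowzer _ n2 hn2 (by omega)
  have h3N : 3 ≤ N := by omega
  have hNpos : 0 < N := by omega
  -- bracket facts
  have hee : (ad e) e = 0 := by simp [LieAlgebra.ad_apply]
  have hef' : (ad e) f = (2 : F) • x := by rw [LieAlgebra.ad_apply, hef]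
  have hex : (ad e) x = -e := by rw [LieAlgebra.ad_apply, ← lie_skew, hxe]
  have hfe : (ad (-f : g)) e = (2 : F) • x := by
    rw [LieAlgebra.ad_apply, neg_lie, lie_skew, hef]
  have hfx : (ad (-f : g)) x = -f := by
    rw [LieAlgebra.ad_apply, neg_lie, ← lie_skew, hxf, neg_neg]
  have hff : (ad (-f : g)) f = 0 := by simp [LieAlgebra.ad_apply]
  -- abbreviations
  set Ea := texp F (ad e) N with hEa
  set Ea' := texp F (-(ad e)) N with hEa'
  set Fa := texp F (ad (-f : g)) N with hFa
  set Fa' := texp F (-(ad (-f : g))) N with hFa'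
  have hinvE1 : Ea * Ea' = 1 := texp_neg_mul F (ad e) hNe hNpos
  have hinvE2 : Ea' * Ea = 1 := by
    have := texp_neg_mul F (-(ad e)) (by rw [neg_pow, hNe, mul_zero]) hNpos
    rwa [neg_neg] at this
  have hinvF1 : Fa * Fa' = 1 := texp_neg_mul F (ad (-f : g)) hNf hNpos
  have hinvF2 : Fa' * Fa = 1 := by
    have := texp_neg_mul F (-(ad (-f : g))) (by rw [neg_pow, hNf, mul_zero]) hNpos
    rwa [neg_neg] at this
  -- evaluations
  have hEae : Ea e = e := by
    rw [hEa, texp_apply_three (ad e) h3N e (by rw [hee, map_zero, map_zero]), hee, map_zero]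
    simp
  have hEaf : Ea f = f + (2 : F) • x - e := by
    rw [hEa, texp_apply_three (ad e) h3N f
      (by rw [hef', map_smul, hex, map_smul, map_neg, hee]; simp),
      hef', map_smul, hex, smul_smul]
    norm_num
    abel
  have hEax : Ea x = x - e := by
    rw [hEa, texp_apply_three (ad e) h3N x (by rw [hex, map_neg, hee]; simp),
      hex, map_neg, hee]
    simp
    abel
  have hFae : Fa e = e + (2 : F) • x - f := by
    rw [hFa, texp_apply_three (ad (-f : g)) h3N e
      (by rw [hfe, map_smul, hfx, map_smul, map_neg, hff]; simp),
      hfe, map_smul, hfx, smul_smul]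
    norm_num
    abel
  have hFax : Fa x = x - f := by
    rw [hFa, texp_apply_three (ad (-f : g)) h3N x
      (by rw [hfx, (LieAlgebra.ad F g (-f : g)).map_neg, hff, neg_zero, map_zero]),
      hfx, (LieAlgebra.ad F g (-f : g)).map_neg, hff]
    simp
    abel
  have hFaf : Fa f = f := by
    rw [hFa, texp_apply_three (ad (-f : g)) h3N f (by rw [hff, map_zero, map_zero]), hff, map_zero]
    simp
  -- the Weyl group element carries f to -e
  have hcomb : Fa (Ea f) = -e := by
    rw [hEaf, map_sub, map_add, map_smul, hFaf, hFax, hFae, smul_sub]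
    module
  have htheta : Ea (Fa (Ea f)) = -e := by rw [hcomb, map_neg, hEae]
  -- conjugation identities
  have hconjE : ∀ z : g, ad (Ea z) = Ea * ad z * Ea' := fun z => texp_ad_conj e hNe z
  have hconjF : ∀ z : g, ad (Fa z) = Fa * ad z * Fa' := fun z => texp_ad_conj (-f) hNf z
  have key : ad (-e : g) = Ea * (Fa * (Ea * ad f * Ea') * Fa') * Ea' := by
    rw [← htheta, hconjE, hconjF, hconjE]
  have hne : ad (-e : g) = -(ad e) := by rw [map_neg]
  have hrange : LinearMap.range (ad (-e : g)) = LinearMap.range (ad e) := by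
    rw [hne, LinearMap.range_neg]
  calc Module.finrank F (LinearMap.range (ad f))
      = Module.finrank F (LinearMap.range (Ea * ad f * Ea')) :=
        (finrank_range_conj Ea Ea' (ad f) hinvE1 hinvE2).symm
    _ = Module.finrank F (LinearMap.range (Fa * (Ea * ad f * Ea') * Fa')) :=
        (finrank_range_conj Fa Fa' _ hinvF1 hinvF2).symm
    _ = Module.finrank F (LinearMap.range (Ea * (Fa * (Ea * ad f * Ea') * Fa') * Ea')) :=
        (finrank_range_conj Ea Ea' _ hinvE1 hinvE2).symm
    _ = Module.finrank F (LinearMap.range (ad e)) := by rw [← key, hrange]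

end LieStuff3
section Orth
variable {F : Type*} {g : Type*} [Field F] [CharZero F]
  [LieRing g] [LieAlgebra F g] [Module.Finite F g]

local notation "ad" => LieAlgebra.ad F g

open Module

lemma orth_range (B : LinearMap.BilinForm F g)
    (hBsymm : ∀ a b : g, B a b = B b a)
    (hBinv : ∀ a b c : g, B ⁅a, b⁆ c = B a ⁅b, c⁆)
    (hBnd : B.Nondegenerate) (z : g) :
    B.orthogonal (LinearMap.range (ad z)) = LinearMap.ker (ad z) := by
  have hrefl : B.IsRefl := fun a b h => by rw [hBsymm]; exact h
  have hle : LinearMap.ker (ad z) ≤ B.orthogonal (LinearMap.range (ad z)) := by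
    intro m hm
    have hzm : ⁅z, m⁆ = 0 := by
      rw [← LieAlgebra.ad_apply (R := F)]; exact hm
    rw [LinearMap.BilinForm.mem_orthogonal_iff]
    rintro nv ⟨w, rfl⟩
    show B ((ad z) w) m = 0
    rw [LieAlgebra.ad_apply, (lie_skew z w).symm,
      map_neg, LinearMap.neg_apply, hBinv, hzm, (B w).map_zero, neg_zero]
  refine (Submodule.eq_of_le_of_finrank_le hle ?_).symm
  have h1 := LinearMap.BilinForm.finrank_orthogonal hBnd (LinearMap.range (ad z))
  have h2 := LinearMap.finrank_range_add_finrank_ker (ad z)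
  omega

lemma orth_ker (B : LinearMap.BilinForm F g)
    (hBsymm : ∀ a b : g, B a b = B b a)
    (hBinv : ∀ a b c : g, B ⁅a, b⁆ c = B a ⁅b, c⁆)
    (hBnd : B.Nondegenerate) (z : g) :
    B.orthogonal (LinearMap.ker (ad z)) = LinearMap.range (ad z) := by
  have hrefl : B.IsRefl := fun a b h => by rw [hBsymm]; exact h
  rw [← orth_range B hBsymm hBinv hBnd z,
    LinearMap.BilinForm.orthogonal_orthogonal hBnd hrefl]

lemma orth_sup (B : LinearMap.BilinForm F g) (W1 W2 : Submodule F g) :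
    B.orthogonal (W1 ⊔ W2) = B.orthogonal W1 ⊓ B.orthogonal W2 := by
  apply le_antisymm
  · exact le_inf (B.orthogonal_le le_sup_left) (B.orthogonal_le le_sup_right)
  · intro m hm
    obtain ⟨h1, h2⟩ := Submodule.mem_inf.1 hm
    rw [LinearMap.BilinForm.mem_orthogonal_iff]
    intro n hn
    obtain ⟨n1, hn1, n2, hn2, rfl⟩ := Submodule.mem_sup.1 hn
    show B (n1 + n2) m = 0
    rw [map_add, LinearMap.add_apply, h1 n1 hn1, h2 n2 hn2, add_zero]

lemma orth_inf (B : LinearMap.BilinForm F g)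
    (hBsymm : ∀ a b : g, B a b = B b a) (hBnd : B.Nondegenerate)
    (W1 W2 : Submodule F g) :
    B.orthogonal (W1 ⊓ W2) = B.orthogonal W1 ⊔ B.orthogonal W2 := by
  have hrefl : B.IsRefl := fun a b h => by rw [hBsymm]; exact h
  rw [show W1 ⊓ W2 = B.orthogonal (B.orthogonal W1 ⊔ B.orthogonal W2) from by
      rw [orth_sup, LinearMap.BilinForm.orthogonal_orthogonal hBnd hrefl,
        LinearMap.BilinForm.orthogonal_orthogonal hBnd hrefl],
    LinearMap.BilinForm.orthogonal_orthogonal hBnd hrefl]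

end Orth

/-- with `V^{(r)} = { [f+r,a] : a ⊥ ([f+r,g] ∩ g^e) }` (here
`V^{(r)} = (ad (f+r))(U)` with `U` the orthogonal complement of `[f+r,g] ∩ g^e`),
one has `g = g^e ⊕ V^{(r)}`, and `Φ^{(r)} = π_{g^e}∘(1+(ad r)∘(ad f)^{-1}∘π_{[f,g]})^{-1}`
is the projection onto `g^e` with kernel `V^{(r)}`. -/
theorem Phi_is_projection_onto_centralizer
    {F : Type*} [Field F] [CharZero F]
    {g : Type*} [LieRing g] [LieAlgebra F g] [Module.Finite F g]
    [LieAlgebra.IsSimple F g]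
    (e x f : g)
    (hxe : ⁅x, e⁆ = e) (hxf : ⁅x, f⁆ = -f) (hef : ⁅e, f⁆ = (2 : F) • x)
    (B : LinearMap.BilinForm F g)
    (hBsymm : ∀ a b : g, B a b = B b a)
    (hBinv : ∀ a b c : g, B ⁅a, b⁆ c = B a ⁅b, c⁆)
    (hBnd : B.Nondegenerate)
    (r : g)
    (hr : r ∈ ⨆ k : ℚ, ⨆ _ : (0 : ℚ) ≤ k,
        Module.End.eigenspace (LieAlgebra.ad F g x) (k : F))
    (U : Submodule F g)
    (hU : ∀ a : g, a ∈ U ↔ ∀ v ∈ Submodule.map (LieAlgebra.ad F g (f + r)) ⊤ ⊓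
        LinearMap.ker (LieAlgebra.ad F g e), B a v = 0)
    (pf sg ps : Module.End F g)
    (hpf1 : ∀ a : g, pf a ∈ LinearMap.range (LieAlgebra.ad F g f))
    (hpf2 : ∀ a : g, a - pf a ∈ LinearMap.ker (LieAlgebra.ad F g e))
    (hsg1 : ∀ a : g, sg a ∈ LinearMap.range (LieAlgebra.ad F g e))
    (hsg2 : ∀ a : g, ⁅f, sg a⁆ = pf a)
    (hps1 : (1 + LieAlgebra.ad F g r * sg) * ps = 1)
    (hps2 : ps * (1 + LieAlgebra.ad F g r * sg) = 1)
    (Phi : Module.End F g) (hPhi : Phi = (1 - pf) * ps) :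
    IsCompl (LinearMap.ker (LieAlgebra.ad F g e))
        (Submodule.map (LieAlgebra.ad F g (f + r)) U) ∧
    (∀ a : g, Phi a ∈ LinearMap.ker (LieAlgebra.ad F g e)) ∧
    (∀ a ∈ LinearMap.ker (LieAlgebra.ad F g e), Phi a = a) ∧
    LinearMap.ker Phi = Submodule.map (LieAlgebra.ad F g (f + r)) U := by
  have hrefl : B.IsRefl := fun a b h => by rw [hBsymm]; exact h
  -- g = g^e + [f, g]
  have hsup : LinearMap.ker (LieAlgebra.ad F g e) ⊔ LinearMap.range (LieAlgebra.ad F g f)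
      = ⊤ := by
    rw [eq_top_iff]
    intro a _
    rw [Submodule.mem_sup]
    exact ⟨a - pf a, hpf2 a, pf a, hpf1 a, by abel⟩
  -- [e, g] ⊓ g^f = ⊥
  have hIeKf : LinearMap.range (LieAlgebra.ad F g e) ⊓ LinearMap.ker (LieAlgebra.ad F g f)
      = ⊥ := by
    have h := congrArg B.orthogonal hsup
    rwa [orth_sup, orth_ker B hBsymm hBinv hBnd e, orth_range B hBsymm hBinv hBnd f,
      LinearMap.BilinForm.orthogonal_top_eq_bot hBnd] at h
  -- g^e ⊓ [f, g] = ⊥ (using rank(ad f) = rank(ad e))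
  have hrk := finrank_range_ad_f_eq_e (F := F) e x f hxe hxf hef
  have hKeIf : LinearMap.ker (LieAlgebra.ad F g e) ⊓ LinearMap.range (LieAlgebra.ad F g f)
      = ⊥ := by
    have h1 := Submodule.finrank_sup_add_finrank_inf_eq
      (LinearMap.ker (LieAlgebra.ad F g e)) (LinearMap.range (LieAlgebra.ad F g f))
    rw [hsup, finrank_top] at h1
    have h2 := LinearMap.finrank_range_add_finrank_ker (LieAlgebra.ad F g e)
    exact Submodule.finrank_eq_zero.1 (by omega)
  -- basic consequences
  have hpfKe : ∀ a ∈ LinearMap.ker (LieAlgebra.ad F g e), pf a = 0 := by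
    intro a ha
    have h1 : pf a ∈ LinearMap.ker (LieAlgebra.ad F g e)
        ⊓ LinearMap.range (LieAlgebra.ad F g f) := by
      refine ⟨?_, hpf1 a⟩
      have h2 : pf a = a - (a - pf a) := by abel
      rw [h2]
      exact Submodule.sub_mem _ ha (hpf2 a)
    rw [hKeIf] at h1
    exact (Submodule.mem_bot F).1 h1
  have hsgKe : ∀ a ∈ LinearMap.ker (LieAlgebra.ad F g e), sg a = 0 := by
    intro a ha
    have h1 : sg a ∈ LinearMap.range (LieAlgebra.ad F g e)
        ⊓ LinearMap.ker (LieAlgebra.ad F g f) := by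
      refine Submodule.mem_inf.2 ⟨hsg1 a, ?_⟩
      rw [LinearMap.mem_ker, LieAlgebra.ad_apply, hsg2, hpfKe a ha]
    rw [hIeKf] at h1
    exact (Submodule.mem_bot F).1 h1
  set T : Module.End F g := 1 + LieAlgebra.ad F g r * sg with hT
  have hTapp : ∀ a : g, T a = a + ⁅r, sg a⁆ := fun a => by
    rw [hT]
    simp [Module.End.mul_apply, LieAlgebra.ad_apply]
  have hTKe : ∀ a ∈ LinearMap.ker (LieAlgebra.ad F g e), T a = a := fun a ha => by
    rw [hTapp, hsgKe a ha, lie_zero, add_zero]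
  have hpfIf : ∀ b ∈ LinearMap.range (LieAlgebra.ad F g f), pf b = b := by
    intro b hb
    have h1 : b - pf b ∈ LinearMap.ker (LieAlgebra.ad F g e)
        ⊓ LinearMap.range (LieAlgebra.ad F g f) :=
      ⟨hpf2 b, Submodule.sub_mem _ hb (hpf1 b)⟩
    rw [hKeIf] at h1
    have h2 := (Submodule.mem_bot F).1 h1
    rw [sub_eq_zero] at h2
    exact h2.symm
  have hsgIe : ∀ u ∈ LinearMap.range (LieAlgebra.ad F g e), sg ⁅f, u⁆ = u := by
    intro u hu
    have hfu : ⁅f, u⁆ ∈ LinearMap.range (LieAlgebra.ad F g f) := ⟨u, rfl⟩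
    have h1 : sg ⁅f, u⁆ - u ∈ LinearMap.range (LieAlgebra.ad F g e)
        ⊓ LinearMap.ker (LieAlgebra.ad F g f) := by
      refine Submodule.mem_inf.2 ⟨Submodule.sub_mem _ (hsg1 _) hu, ?_⟩
      rw [LinearMap.mem_ker, map_sub, LieAlgebra.ad_apply, LieAlgebra.ad_apply,
        hsg2, hpfIf _ hfu, sub_self]
    rw [hIeKf] at h1
    have h2 := (Submodule.mem_bot F).1 h1
    rwa [sub_eq_zero] at h2
  have hTIf : ∀ b ∈ LinearMap.range (LieAlgebra.ad F g f), T b = ⁅f + r, sg b⁆ := by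
    intro b hb
    rw [hTapp, add_lie, hsg2, hpfIf b hb]
  -- identification of U and V
  have hUeq : U = LinearMap.ker (LieAlgebra.ad F g (f + r))
      ⊔ LinearMap.range (LieAlgebra.ad F g e) := by
    have hU' : U = B.orthogonal (LinearMap.range (LieAlgebra.ad F g (f + r))
        ⊓ LinearMap.ker (LieAlgebra.ad F g e)) := by
      ext a
      rw [hU a, LinearMap.BilinForm.mem_orthogonal_iff]
      constructor
      · intro h v hv
        have hv' : v ∈ Submodule.map (LieAlgebra.ad F g (f + r)) ⊤
            ⊓ LinearMap.ker (LieAlgebra.ad F g e) := by rwa [Submodule.map_top]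
        show B v a = 0
        rw [hBsymm]
        exact h v hv'
      · intro h v hv
        rw [Submodule.map_top] at hv
        rw [hBsymm]
        exact h v hv
    rw [hU', orth_inf B hBsymm hBnd, orth_range B hBsymm hBinv hBnd (f + r),
      orth_ker B hBsymm hBinv hBnd e]
  have hmapU : Submodule.map (LieAlgebra.ad F g (f + r)) U
      = Submodule.map (LieAlgebra.ad F g (f + r))
          (LinearMap.range (LieAlgebra.ad F g e)) := by
    rw [hUeq, Submodule.map_sup]
    have h1 : Submodule.map (LieAlgebra.ad F g (f + r))
        (LinearMap.ker (LieAlgebra.ad F g (f + r))) = ⊥ := by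
      rw [Submodule.eq_bot_iff]
      rintro y ⟨z, hz, rfl⟩
      exact LinearMap.mem_ker.1 hz
    rw [h1, bot_sup_eq]
  set V : Submodule F g := Submodule.map (LieAlgebra.ad F g (f + r))
    (LinearMap.range (LieAlgebra.ad F g e)) with hV
  have hVmem : ∀ c : g, c ∈ V ↔
      ∃ b ∈ LinearMap.range (LieAlgebra.ad F g f), T b = c := by
    intro c
    constructor
    · rintro ⟨u, hu, rfl⟩
      refine ⟨LieAlgebra.ad F g f u, LinearMap.mem_range_self _ u, ?_⟩
      have hfu : LieAlgebra.ad F g f u = ⁅f, u⁆ := rfl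
      rw [hfu, hTIf _ (by rw [← hfu]; exact LinearMap.mem_range_self _ u), hsgIe u hu,
        LieAlgebra.ad_apply]
    · rintro ⟨b, hb, rfl⟩
      rw [hTIf b hb]
      exact ⟨sg b, hsg1 b, rfl⟩
  -- inverse facts
  have hpsT : ∀ a : g, ps (T a) = a := fun a => by
    have h1 : (ps * T) a = (1 : Module.End F g) a := by rw [hps2]
    simpa using h1
  have hTps : ∀ a : g, T (ps a) = a := fun a => by
    have h1 : (T * ps) a = (1 : Module.End F g) a := by rw [hps1]
    simpa using h1
  have hPhiapp : ∀ a : g, Phi a = ps a - pf (ps a) := fun a => by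
    rw [hPhi]
    simp [Module.End.mul_apply]
  refine ⟨?_, ?_, ?_, ?_⟩
  · -- IsCompl
    rw [hmapU]
    constructor
    · rw [Submodule.disjoint_def]
      intro a haK haV
      obtain ⟨b, hb, hba⟩ := (hVmem a).1 haV
      have h5 : ps a = a := by
        have h5' := hpsT a
        rwa [hTKe a haK] at h5'
      have hba' : b = a := by rw [← hpsT b, hba, h5]
      have h6 : a ∈ LinearMap.ker (LieAlgebra.ad F g e)
          ⊓ LinearMap.range (LieAlgebra.ad F g f) :=
        Submodule.mem_inf.2 ⟨haK, hba' ▸ hb⟩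
      rw [hKeIf] at h6
      exact (Submodule.mem_bot F).1 h6
    · rw [codisjoint_iff, eq_top_iff]
      intro c _
      rw [Submodule.mem_sup]
      refine ⟨ps c - pf (ps c), hpf2 (ps c), T (pf (ps c)),
        (hVmem _).2 ⟨pf (ps c), hpf1 _, rfl⟩, ?_⟩
      have h7 : T (ps c - pf (ps c)) = ps c - pf (ps c) := hTKe _ (hpf2 (ps c))
      calc ps c - pf (ps c) + T (pf (ps c))
          = T (ps c - pf (ps c)) + T (pf (ps c)) := by rw [h7]
        _ = T (ps c) := by rw [← map_add]; congr 1; abel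
        _ = c := hTps c
  · intro a
    rw [hPhiapp]
    exact hpf2 (ps a)
  · intro a ha
    have hpsa : ps a = a := by
      have h5' := hpsT a
      rwa [hTKe a ha] at h5'
    rw [hPhiapp, hpsa, hpfKe a ha, sub_zero]
  · rw [hmapU]
    ext c
    rw [LinearMap.mem_ker, hPhiapp]
    constructor
    · intro hc
      have hmem : ps c ∈ LinearMap.range (LieAlgebra.ad F g f) := by
        have h8 : ps c = pf (ps c) := by rwa [sub_eq_zero] at hc
        rw [h8]
        exact hpf1 _
      exact (hVmem c).2 ⟨ps c, hmem, hTps c⟩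
    · intro hc
      obtain ⟨b, hb, rfl⟩ := (hVmem c).1 hc
      rw [hpsT, hpfIf b hb, sub_self]
end

section
/- Let g be a finite-dimensional Lie algebra with sl2-triple {e,h=2x,f} and nondegenerate invariant symmetric form. For each half-integer k with -d ≤ k ≤ d, the identity Σ_{(i,m)∈J_{k-1}} q^{m+1}_i ⊗ q^i_m = − Σ_{(j,n)∈J_{-k}} q^j_n ⊗ q^{n+1}_j holds in [e,g_{k-1}] ⊗ [e,g_{-k}], where {q^j_n} and {q^n_j} are the dual bases of g constructed from dual bases of g^f and g^e via powers of ad f and ad e. -/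
open scoped TensorProduct

section Aux

variable {F : Type*} [Field F] [CharZero F]
variable {g : Type*} [LieRing g] [LieAlgebra F g]

private lemma aux_inv (B : LinearMap.BilinForm F g)
    (hBinv : ∀ a b c : g, B ⁅a, b⁆ c = B a ⁅b, c⁆) (a u w : g) :
    B ⁅a, u⁆ w = -(B u ⁅a, w⁆) := by
  rw [← lie_skew a u, map_neg, LinearMap.neg_apply, hBinv]

private lemma aux_powinv (B : LinearMap.BilinForm F g)
    (hBinv : ∀ a b c : g, B ⁅a, b⁆ c = B a ⁅b, c⁆) (f : g) :
    ∀ (n : ℕ) (u w : g),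
      B (((LieAlgebra.ad F g) f ^ n) u) w = (-1 : F) ^ n * B u (((LieAlgebra.ad F g) f ^ n) w) := by
  intro n
  induction n with
  | zero => intro u w; simp
  | succ n ih =>
    intro u w
    have h1 : ((LieAlgebra.ad F g) f ^ (n+1)) u = ((LieAlgebra.ad F g) f) (((LieAlgebra.ad F g) f ^ n) u) := by
      rw [pow_succ', Module.End.mul_apply]
    have h2 : ((LieAlgebra.ad F g) f ^ (n+1)) w = ((LieAlgebra.ad F g) f ^ n) (((LieAlgebra.ad F g) f) w) := by
      rw [pow_succ, Module.End.mul_apply]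
    rw [h1, h2, LieAlgebra.ad_apply F g f, aux_inv B hBinv, ← LieAlgebra.ad_apply F g f w, ih, pow_succ]
    ring

private lemma aux_wt (x f v : g) (μ : F) (hxf : ⁅x, f⁆ = -f) (hv : ⁅x, v⁆ = μ • v) :
    ∀ n : ℕ, ⁅x, ((LieAlgebra.ad F g) f ^ n) v⁆ = (μ - n) • ((LieAlgebra.ad F g) f ^ n) v := by
  intro n
  induction n with
  | zero => simpa using hv
  | succ n ih =>
    have h1 : ((LieAlgebra.ad F g) f ^ (n+1)) v = ((LieAlgebra.ad F g) f) (((LieAlgebra.ad F g) f ^ n) v) := by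
      rw [pow_succ', Module.End.mul_apply]
    rw [h1, LieAlgebra.ad_apply F g f, leibniz_lie, hxf, ih, neg_lie, lie_smul]
    push_cast
    module

private lemma aux_low (e x f v : g) (μ : F)
    (hxf : ⁅x, f⁆ = -f) (hef : ⁅e, f⁆ = (2 : F) • x)
    (hv0 : ⁅e, v⁆ = 0) (hv : ⁅x, v⁆ = μ • v) :
    ∀ n : ℕ, ⁅e, ((LieAlgebra.ad F g) f ^ (n + 1)) v⁆
      = (((n : F) + 1) * (2 * μ - n)) • ((LieAlgebra.ad F g) f ^ n) v := by
  intro n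
  induction n with
  | zero =>
    rw [pow_one, LieAlgebra.ad_apply F g f, leibniz_lie, hef, hv0, lie_zero, add_zero, smul_lie,
      hv, pow_zero, Module.End.one_apply]
    push_cast
    module
  | succ n ih =>
    have h1 : ((LieAlgebra.ad F g) f ^ (n+2)) v = ((LieAlgebra.ad F g) f) (((LieAlgebra.ad F g) f ^ (n+1)) v) := by
      rw [pow_succ', Module.End.mul_apply]
    have h2 : ((LieAlgebra.ad F g) f) (((LieAlgebra.ad F g) f ^ n) v) = ((LieAlgebra.ad F g) f ^ (n+1)) v := by
      rw [pow_succ', Module.End.mul_apply]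
    rw [h1, LieAlgebra.ad_apply F g f, leibniz_lie, hef, ih, lie_smul,
      ← LieAlgebra.ad_apply F g f (((LieAlgebra.ad F g) f ^ n) v), h2, smul_lie,
      aux_wt x f v μ hxf hv (n+1)]
    push_cast
    module

private lemma aux_string_top [Module.Finite F g] (e x f v : g) (d : ℕ)
    (hxf : ⁅x, f⁆ = -f) (hef : ⁅e, f⁆ = (2 : F) • x)
    (hvne : v ≠ 0) (hv0 : ⁅e, v⁆ = 0) (hv : ⁅x, v⁆ = ((d : F) / 2) • v) :
    ∀ n : ℕ, d < n → ((LieAlgebra.ad F g) f ^ n) v = 0 := by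
  have hwt := aux_wt x f v ((d : F) / 2) hxf hv
  -- first, some power kills v
  have hex : ∃ n : ℕ, ((LieAlgebra.ad F g) f ^ n) v = 0 := by
    by_contra hcon
    push_neg at hcon
    set μs : Set F := Set.range (fun n : ℕ => (d : F) / 2 - n) with hμs
    have hinj : Function.Injective (fun n : ℕ => (d : F) / 2 - n) := by
      intro m n h
      simp only [sub_right_injective.eq_iff, Nat.cast_inj] at h
      exact h
    have hinf : μs.Infinite := (Set.infinite_range_iff hinj).2 inferInstance
    have hli := (LieAlgebra.ad F g x).eigenvectors_linearIndependent μs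
      (fun μ => ((LieAlgebra.ad F g) f ^ (Classical.choose μ.2)) v)
      (fun μ => by
        have hcs := Classical.choose_spec μ.2
        refine Module.End.hasEigenvector_iff.2 ⟨Module.End.mem_eigenspace_iff.2 ?_, hcon _⟩
        dsimp only
        dsimp only at hcs
        rw [LieAlgebra.ad_apply, hwt, hcs])
    haveI := hli.finite
    exact hinf (Set.toFinite μs)
  have h0 : ¬(((LieAlgebra.ad F g) f ^ 0) v = 0) := by simpa using hvne
  obtain ⟨n, hn1, hn2⟩ := Nat.exists_not_and_succ_of_not_zero_of_exists h0 hex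
  have hlow := aux_low e x f v ((d : F) / 2) hxf hef hv0 hv n
  rw [hn2, lie_zero] at hlow
  have hc0 : ((n : F) + 1) * (2 * ((d : F) / 2) - n) = 0 ∨ ((LieAlgebra.ad F g) f ^ n) v = 0 :=
    smul_eq_zero.1 hlow.symm
  have hdn : d = n := by
    rcases hc0 with h | h
    · rcases mul_eq_zero.1 h with h' | h'
      · exact absurd h' (Nat.cast_add_one_ne_zero n)
      · have hd : (d : F) = n := by
          have h2 : (d : F) - n = 0 := by linear_combination h'
          exact sub_eq_zero.mp h2
        exact_mod_cast hd
    · exact absurd h hn1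
  intro m hm
  obtain ⟨k, rfl⟩ : ∃ k, m = k + (n + 1) := ⟨m - (n + 1), by omega⟩
  rw [pow_add, Module.End.mul_apply, hn2, map_zero]

private lemma aux_chooseF (n k : ℕ) :
    ((n : F) - k) * (n.choose k : F) = ((k : F) + 1) * (n.choose (k + 1) : F) := by
  rcases le_or_gt (k + 1) n with h | h
  · have hz : ((n.choose (k + 1) * (k + 1) : ℕ) : ℤ) = ((n.choose k * (n - k) : ℕ) : ℤ) :=
      congrArg _ (Nat.choose_succ_right_eq n k)
    rw [Nat.cast_mul, Nat.cast_mul, Nat.cast_sub (by omega : k ≤ n)] at hz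
    have hzF : ((n.choose (k + 1) : F)) * ((k : F) + 1) = (n.choose k : F) * ((n : F) - k) := by
      exact_mod_cast hz
    linear_combination -hzF
  · rcases eq_or_lt_of_le (by omega : n ≤ k) with h3 | h3
    · rw [← h3, Nat.choose_self, Nat.choose_eq_zero_of_lt (by omega)]
      push_cast
      ring
    · rw [Nat.choose_eq_zero_of_lt h3, Nat.choose_eq_zero_of_lt (by omega)]
      push_cast
      ring

private lemma aux_ff (e f v : g) (d : ℕ)
    (hfv : ⁅f, v⁆ = 0)
    (hlow : ∀ n : ℕ, ⁅f, ((LieAlgebra.ad F g) e ^ (n + 1)) v⁆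
      = (((n : F) + 1) * ((d : F) - n)) • ((LieAlgebra.ad F g) e ^ n) v) :
    ∀ b : ℕ, ((LieAlgebra.ad F g) f ^ b) (((LieAlgebra.ad F g) e ^ b) v)
      = (((b.factorial : F)) ^ 2 * ((d.choose b : F))) • v := by
  intro b
  induction b with
  | zero => simp
  | succ b ih =>
    have h1 : ((LieAlgebra.ad F g) f ^ (b + 1)) (((LieAlgebra.ad F g) e ^ (b + 1)) v)
        = ((LieAlgebra.ad F g) f ^ b) (((LieAlgebra.ad F g) f) (((LieAlgebra.ad F g) e ^ (b + 1)) v)) := by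
      rw [pow_succ, Module.End.mul_apply]
    rw [h1, LieAlgebra.ad_apply F g f, hlow b, map_smul, ih, smul_smul]
    congr 1
    push_cast [Nat.factorial_succ]
    linear_combination (((b : F) + 1) * ((b.factorial : F)) ^ 2) * aux_chooseF (F := F) d b

private lemma aux_flt (e f v : g) (d : ℕ)
    (hlow : ∀ n : ℕ, ⁅f, ((LieAlgebra.ad F g) e ^ (n + 1)) v⁆
      = (((n : F) + 1) * ((d : F) - n)) • ((LieAlgebra.ad F g) e ^ n) v) :
    ∀ a b : ℕ, a < b → ∃ r : F,
      ((LieAlgebra.ad F g) f ^ a) (((LieAlgebra.ad F g) e ^ b) v) = r • ((LieAlgebra.ad F g) e ^ (b - a)) v := by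
  intro a
  induction a with
  | zero => intro b _; exact ⟨1, by simp⟩
  | succ a ih =>
    intro b hb
    obtain ⟨b', rfl⟩ : ∃ b', b = b' + 1 := ⟨b - 1, by omega⟩
    obtain ⟨r, hr⟩ := ih b' (by omega)
    have h1 : ((LieAlgebra.ad F g) f ^ (a + 1)) (((LieAlgebra.ad F g) e ^ (b' + 1)) v)
        = ((LieAlgebra.ad F g) f ^ a) (((LieAlgebra.ad F g) f) (((LieAlgebra.ad F g) e ^ (b' + 1)) v)) := by
      rw [pow_succ, Module.End.mul_apply]
    refine ⟨(((b' : F) + 1) * ((d : F) - b')) * r, ?_⟩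
    have h2 : b' + 1 - (a + 1) = b' - a := by omega
    rw [h1, LieAlgebra.ad_apply F g f, hlow b', map_smul, hr, smul_smul, h2]

private lemma aux_fgt (e f v : g) (d : ℕ)
    (hfv : ⁅f, v⁆ = 0)
    (hlow : ∀ n : ℕ, ⁅f, ((LieAlgebra.ad F g) e ^ (n + 1)) v⁆
      = (((n : F) + 1) * ((d : F) - n)) • ((LieAlgebra.ad F g) e ^ n) v) :
    ∀ a b : ℕ, b < a → ((LieAlgebra.ad F g) f ^ a) (((LieAlgebra.ad F g) e ^ b) v) = 0 := by
  intro a b h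
  obtain ⟨m, rfl⟩ : ∃ m, a = m + 1 + b := ⟨a - 1 - b, by omega⟩
  rw [pow_add, Module.End.mul_apply, aux_ff e f v d hfv hlow b, map_smul]
  have h2 : ((LieAlgebra.ad F g) f ^ (m + 1)) v = 0 := by
    rw [pow_succ, Module.End.mul_apply, LieAlgebra.ad_apply F g f, hfv, map_zero]
  rw [h2, smul_zero]

end Aux

/-- for each half-integer `k` with `-d ≤ k ≤ d` (encoded by `K = 2k`),
`Σ_{(i,m)∈J_{k-1}} q^{m+1}_i ⊗ q^i_m = − Σ_{(j,n)∈J_{-k}} q^j_n ⊗ q^{n+1}_j`,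
where `Qup j n = (ad f)^n q^j` and `Qdn j n = ((-1)^n/((n!)^2 C(2δ(j),n))) (ad e)^n q_j`
are the dual bases of `g` built from dual bases `{q_j}` of `g^f` and `{q^j}` of `g^e`
(`D j = 2δ(j)`), and `(j,n) ∈ J_{-k}` means `2n = D j - K` with `0 ≤ n ≤ D j`. -/
theorem tensor_dual_bases_identity
    {F : Type*} [Field F] [CharZero F]
    {g : Type*} [LieRing g] [LieAlgebra F g] [Module.Finite F g]
    (e x f : g)
    (hxe : ⁅x, e⁆ = e) (hxf : ⁅x, f⁆ = -f) (hef : ⁅e, f⁆ = (2 : F) • x)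
    (B : LinearMap.BilinForm F g)
    (hBsymm : ∀ a b : g, B a b = B b a)
    (hBinv : ∀ a b c : g, B ⁅a, b⁆ c = B a ⁅b, c⁆)
    (hBnd : B.Nondegenerate)
    {ι : Type*} [Fintype ι] [DecidableEq ι]
    (qf qe : ι → g) (D : ι → ℕ)
    (hqf : ∀ j, ⁅f, qf j⁆ = 0)
    (hqfx : ∀ j, ⁅x, qf j⁆ = -(((D j : F) / 2) • qf j))
    (hqe : ∀ j, ⁅e, qe j⁆ = 0)
    (hqex : ∀ j, ⁅x, qe j⁆ = ((D j : F) / 2) • qe j)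
    (hdual : ∀ i j, B (qf i) (qe j) = if i = j then 1 else 0)
    (hspan : Submodule.span F (Set.range qf) = LinearMap.ker (LieAlgebra.ad F g f))
    (Qup Qdn : ι → ℕ → g)
    (hQup : ∀ j n, Qup j n = ((LieAlgebra.ad F g f) ^ n) (qe j))
    (hQdn : ∀ j n, Qdn j n =
      ((-1 : F) ^ n / ((n.factorial : F) ^ 2 * ((D j).choose n : F))) •
        (((LieAlgebra.ad F g e) ^ n) (qf j)))
    (dd : ℕ) (hD : ∀ j, D j ≤ 2 * dd)
    (K : ℤ) (hK1 : -(2 * (dd : ℤ)) ≤ K) (hK2 : K ≤ 2 * dd) :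
    (∑ i ∈ Finset.univ.filter (fun i : ι =>
        -(D i : ℤ) ≤ 2 - K ∧ 2 - K ≤ (D i : ℤ) ∧ ((D i : ℤ) - (2 - K)) % 2 = 0),
      Qdn i (((D i : ℤ) - (2 - K)).toNat / 2 + 1) ⊗ₜ[F]
        Qup i (((D i : ℤ) - (2 - K)).toNat / 2)) =
    -∑ j ∈ Finset.univ.filter (fun j : ι =>
        -(D j : ℤ) ≤ K ∧ K ≤ (D j : ℤ) ∧ ((D j : ℤ) - K) % 2 = 0),
      Qup j (((D j : ℤ) - K).toNat / 2) ⊗ₜ[F]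
        Qdn j (((D j : ℤ) - K).toNat / 2 + 1) := by
  classical
  -- nonvanishing of the dual families
  have hqene : ∀ j, qe j ≠ 0 := by
    intro j h
    have h2 := hdual j j
    rw [h, map_zero, if_pos rfl] at h2
    exact one_ne_zero h2.symm
  have hqfne : ∀ j, qf j ≠ 0 := by
    intro j h
    have h2 := hdual j j
    rw [h, map_zero, LinearMap.zero_apply, if_pos rfl] at h2
    exact one_ne_zero h2.symm
  have hB9 : ∀ (i : ι) (u : g), B (qe i) ⁅e, u⁆ = 0 := by
    intro i u
    rw [← hBinv, ← lie_skew (qe i) e, hqe i, neg_zero, map_zero, LinearMap.zero_apply]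
  -- x-weights of Qup
  have hwtQup : ∀ (i : ι) (a : ℕ), ⁅x, Qup i a⁆ = ((D i : F) / 2 - a) • Qup i a := by
    intro i a
    rw [hQup]
    exact aux_wt x f (qe i) ((D i : F) / 2) hxf (hqex i) a
  -- e-lowering on Qup
  have hEQup : ∀ (i : ι) (a : ℕ),
      ⁅e, Qup i (a + 1)⁆ = (((a : F) + 1) * ((D i : F) - a)) • Qup i a := by
    intro i a
    rw [hQup, hQup, aux_low e x f (qe i) ((D i : F) / 2) hxf hef (hqe i) (hqex i) a]
    congr 1
    ring
  -- f-lowering on the e-string of qf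
  have hlowE : ∀ (j : ι) (n : ℕ),
      ⁅f, ((LieAlgebra.ad F g) e ^ (n + 1)) (qf j)⁆
        = (((n : F) + 1) * ((D j : F) - n)) • ((LieAlgebra.ad F g) e ^ n) (qf j) := by
    intro j n
    have h1 : ⁅-x, e⁆ = -e := by rw [neg_lie, hxe]
    have h2 : ⁅f, e⁆ = (2 : F) • (-x) := by rw [← lie_skew f e, hef, ← smul_neg]
    have h3 : ⁅-x, qf j⁆ = ((D j : F) / 2) • qf j := by rw [neg_lie, hqfx j, neg_neg]
    rw [aux_low f (-x) e (qf j) ((D j : F) / 2) h1 h2 (hqf j) h3 n]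
    congr 1
    ring
  have hQupTop : ∀ (j : ι) (n : ℕ), D j < n → Qup j n = 0 := by
    intro j n h
    rw [hQup]
    exact aux_string_top e x f (qe j) (D j) hxf hef (hqene j) (hqe j) (hqex j) n h
  have hQdnBig : ∀ (j : ι) (n : ℕ), D j < n → Qdn j n = 0 := by
    intro j n h
    rw [hQdn, Nat.choose_eq_zero_of_lt h]
    simp
  have hQdn0 : ∀ j, Qdn j 0 = qf j := by
    intro j
    rw [hQdn]
    simp
  have hQupSucc : ∀ (j : ι) (n : ℕ), ⁅f, Qup j n⁆ = Qup j (n + 1) := by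
    intro j n
    rw [hQup, hQup, pow_succ', Module.End.mul_apply, LieAlgebra.ad_apply]
  -- duality between Qup and Qdn
  have hduality : ∀ (i : ι) (a : ℕ) (j : ι) (b : ℕ), b ≤ D j →
      B (Qup i a) (Qdn j b) = if i = j ∧ a = b then 1 else 0 := by
    intro i a j b hb
    rw [hQup, hQdn, map_smul, smul_eq_mul, aux_powinv B hBinv f a]
    rcases Nat.lt_trichotomy a b with h | h | h
    · obtain ⟨r, hr⟩ := aux_flt e f (qf j) (D j) (hlowE j) a b h
      obtain ⟨k, hk⟩ : ∃ k, b - a = k + 1 := ⟨b - a - 1, by omega⟩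
      have hpeel : ((LieAlgebra.ad F g) e ^ (k + 1)) (qf j) = ⁅e, ((LieAlgebra.ad F g) e ^ k) (qf j)⁆ := by
        rw [pow_succ', Module.End.mul_apply, LieAlgebra.ad_apply]
      rw [hr, map_smul, smul_eq_mul, hk, hpeel, hB9, if_neg (by rintro ⟨-, h2⟩; omega)]
      ring
    · subst h
      rw [aux_ff e f (qf j) (D j) (hqf j) (hlowE j) a, map_smul, smul_eq_mul, hBsymm, hdual j i]
      by_cases hij : i = j
      · subst hij
        rw [if_pos rfl, if_pos ⟨rfl, rfl⟩]
        have hC : ((D i).choose a : F) ≠ 0 := Nat.cast_ne_zero.2 (Nat.choose_pos hb).ne'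
        have hf : ((a.factorial : F)) ≠ 0 := Nat.cast_ne_zero.2 (Nat.factorial_ne_zero a)
        have hs : (-1 : F) ^ a * (-1 : F) ^ a = 1 := by
          rw [← pow_add, ← two_mul, pow_mul]
          norm_num
        field_simp
        linear_combination hs
      · rw [if_neg (fun hh => hij hh.symm), if_neg (fun hh => hij hh.1)]
        ring
    · rw [aux_fgt e f (qf j) (D j) (hqf j) (hlowE j) a b h, map_zero,
        if_neg (by rintro ⟨-, h2⟩; omega)]
      ring
  -- pairings among the Qup
  have hMflat : ∀ (i : ι) (a : ℕ) (j : ι) (b : ℕ),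
      B (Qup i a) (Qup j b) = (-1 : F) ^ a * B (qe i) (((LieAlgebra.ad F g) f ^ (a + b)) (qe j)) := by
    intro i a j b
    rw [hQup, hQup, aux_powinv B hBinv f a, pow_add, Module.End.mul_apply]
  have hM0 : ∀ (i : ι) (a : ℕ) (j : ι) (b : ℕ),
      B (Qup i a) (Qup j b) ≠ 0 → D i = D j ∧ a + b = D i := by
    intro i a j b hne
    have hle1 : a + b ≤ D j := by
      by_contra hc
      exact hne (by
        rw [hMflat, aux_string_top e x f (qe j) (D j) hxf hef (hqene j) (hqe j) (hqex j)
          (a + b) (by omega), map_zero, mul_zero])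
    have hle2 : a + b ≤ D i := by
      by_contra hc
      exact hne (by
        rw [hBsymm, hMflat j b i a, aux_string_top e x f (qe i) (D i) hxf hef (hqene i)
          (hqe i) (hqex i) (b + a) (by omega), map_zero, mul_zero])
    have hw := aux_inv B hBinv x (Qup i a) (Qup j b)
    rw [hwtQup, hwtQup, map_smul, LinearMap.smul_apply, smul_eq_mul, map_smul, smul_eq_mul] at hw
    have hz : (((D i : F) / 2 - a) + ((D j : F) / 2 - b)) * B (Qup i a) (Qup j b) = 0 := by
      linear_combination hw
    have hz2 : ((D i : F) / 2 - a) + ((D j : F) / 2 - b) = 0 := by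
      rcases mul_eq_zero.1 hz with h | h
      · exact h
      · exact absurd h hne
    have hcast : ((D i : ℤ)) + (D j : ℤ) = 2 * a + 2 * b := by
      have h3 : ((D i : F)) + (D j : F) = 2 * a + 2 * b := by linear_combination 2 * hz2
      exact_mod_cast h3
    omega
  have hMrec : ∀ (i : ι) (a : ℕ) (j : ι) (b : ℕ),
      (((a : F) + 1) * ((D i : F) - a)) * B (Qup i a) (Qup j (b + 1))
        = -((((b : F) + 1) * ((D j : F) - b)) * B (Qup i (a + 1)) (Qup j b)) := by
    intro i a j b
    have h := aux_inv B hBinv e (Qup i (a + 1)) (Qup j (b + 1))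
    rw [hEQup i a, hEQup j b, map_smul, LinearMap.smul_apply, smul_eq_mul, map_smul,
      smul_eq_mul] at h
    exact h
  have hKEY : ∀ (i j : ι) (a' b' : ℕ), a' + 1 ≤ D i → b' + 1 ≤ D j →
      (2 * ((a' : ℤ) + 1) = (D i : ℤ) + K) → (2 * ((b' : ℤ) + 1) = (D j : ℤ) + 2 - K) →
      B (Qup i a') (Qup j (b' + 1)) = -(B (Qup i (a' + 1)) (Qup j b')) := by
    intro i j a' b' ha hb h1 h2
    by_cases hd : D i = D j
    · have hab : a' + b' + 1 = D i := by omega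
      have hFc : (D i : F) = (a' : F) + b' + 1 := by exact_mod_cast hab.symm
      have e1 : (D i : F) - a' = (b' : F) + 1 := by linear_combination hFc
      have e2 : (D j : F) - b' = (a' : F) + 1 := by
        have hji : (D j : F) = (D i : F) := Nat.cast_inj.mpr hd.symm
        linear_combination hji + hFc
      have h := hMrec i a' j b'
      rw [e1, e2] at h
      have hc : (((a' : F) + 1) * ((b' : F) + 1)) ≠ 0 :=
        mul_ne_zero (Nat.cast_add_one_ne_zero a') (Nat.cast_add_one_ne_zero b')
      have hgoal : (((a' : F) + 1) * ((b' : F) + 1)) * (B (Qup i a') (Qup j (b' + 1)))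
          = (((a' : F) + 1) * ((b' : F) + 1)) * (-(B (Qup i (a' + 1)) (Qup j b'))) := by
        linear_combination h
      exact mul_left_cancel₀ hc hgoal
    · have z1 : B (Qup i a') (Qup j (b' + 1)) = 0 := by
        by_contra hz
        exact hd (hM0 i a' j (b' + 1) hz).1
      have z2 : B (Qup i (a' + 1)) (Qup j b') = 0 := by
        by_contra hz
        exact hd (hM0 i (a' + 1) j b' hz).1
      rw [z1, z2, neg_zero]
  -- Stage 2: the Qdn form a basis of g
  have hsig : ∀ (s t : Σ j : ι, Fin (D j + 1)), s.1 = t.1 → (s.2 : ℕ) = (t.2 : ℕ) → s = t := by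
    rintro ⟨j₁, n₁⟩ ⟨j₂, n₂⟩ h1 h2
    dsimp only at h1
    subst h1
    dsimp only at h2
    exact congrArg (Sigma.mk j₁) (Fin.ext h2)
  set dnf : (Σ j : ι, Fin (D j + 1)) → g := fun s => Qdn s.1 (s.2 : ℕ) with hdnf
  have hpair : ∀ (c : (Σ j : ι, Fin (D j + 1)) → F) (j : ι) (n : Fin (D j + 1)),
      B (Qup j (n : ℕ)) (∑ s, c s • dnf s) = c ⟨j, n⟩ := by
    intro c j n
    rw [map_sum]
    have hterm : ∀ s : (Σ j : ι, Fin (D j + 1)),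
        B (Qup j (n : ℕ)) (c s • dnf s) = if (⟨j, n⟩ : Σ j : ι, Fin (D j + 1)) = s then c s else 0 := by
      intro s
      rw [map_smul, smul_eq_mul]
      simp only [hdnf]
      rw [hduality j (n : ℕ) s.1 (s.2 : ℕ) (Nat.lt_succ_iff.mp s.2.isLt)]
      by_cases h : (⟨j, n⟩ : Σ j : ι, Fin (D j + 1)) = s
      · rw [if_pos h, if_pos, mul_one]
        rw [← h]
        exact ⟨rfl, rfl⟩
      · rw [if_neg h, if_neg, mul_zero]
        rintro ⟨h1, h2⟩
        exact h (hsig ⟨j, n⟩ s h1 h2)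
    rw [Finset.sum_congr rfl (fun s _ => hterm s), Finset.sum_ite_eq, if_pos (Finset.mem_univ _)]
  have hindep : LinearIndependent F dnf := by
    rw [Fintype.linearIndependent_iff]
    intro c hc s
    rcases s with ⟨j, n⟩
    have h1 := hpair c j n
    rw [hc, map_zero] at h1
    exact h1.symm
  set V : Submodule F g := Submodule.span F (Set.range dnf) with hV
  have hmemV : ∀ (j : ι) (n : ℕ), n ≤ D j → Qdn j n ∈ V := by
    intro j n h
    exact Submodule.subset_span ⟨⟨j, ⟨n, Nat.lt_succ_iff.mpr h⟩⟩, rfl⟩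
  have hmemV' : ∀ (j : ι) (n : ℕ), Qdn j n ∈ V := by
    intro j n
    rcases le_or_gt n (D j) with h | h
    · exact hmemV j n h
    · rw [hQdnBig j n h]
      exact zero_mem V
  have hFoQdn : ∀ (j : ι) (n : ℕ), n + 1 ≤ D j → ⁅f, Qdn j (n + 1)⁆ = -Qdn j n := by
    intro j n h
    rw [hQdn, hQdn, lie_smul, hlowE j n, smul_smul, ← neg_smul]
    congr 1
    have hC0 : ((D j).choose n : F) ≠ 0 := Nat.cast_ne_zero.2 (Nat.choose_pos (by omega)).ne'
    have hC1 : ((D j).choose (n + 1) : F) ≠ 0 := Nat.cast_ne_zero.2 (Nat.choose_pos h).ne'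
    have hf0 : ((n.factorial : F)) ≠ 0 := Nat.cast_ne_zero.2 (Nat.factorial_ne_zero n)
    have hf1 : (((n + 1).factorial : F)) ≠ 0 := Nat.cast_ne_zero.2 (Nat.factorial_ne_zero (n + 1))
    have hkey := aux_chooseF (F := F) (D j) n
    field_simp
    push_cast [Nat.factorial_succ, pow_succ]
    linear_combination (-(((n : F)) + 1) * ((n.factorial : F)) ^ 2 * (-1 : F) ^ n) * hkey
  have hxQdnAll : ∀ (j : ι) (n : ℕ), ⁅x, Qdn j n⁆ = ((n : F) - (D j : F) / 2) • Qdn j n := by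
    intro j n
    have h1 : ⁅-x, e⁆ = -e := by rw [neg_lie, hxe]
    have h3 : ⁅-x, qf j⁆ = ((D j : F) / 2) • qf j := by rw [neg_lie, hqfx j, neg_neg]
    have h4 := aux_wt (-x) e (qf j) ((D j : F) / 2) h1 h3 n
    rw [neg_lie, neg_eq_iff_eq_neg] at h4
    have h5 : ⁅x, ((LieAlgebra.ad F g) e ^ n) (qf j)⁆
        = ((n : F) - (D j : F) / 2) • ((LieAlgebra.ad F g) e ^ n) (qf j) := by
      rw [h4, ← neg_smul]
      congr 1
      ring
    rw [hQdn, lie_smul, h5, smul_comm]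
  have hkerV : LinearMap.ker ((LieAlgebra.ad F g) f) ≤ V := by
    rw [← hspan, Submodule.span_le]
    rintro _ ⟨j, rfl⟩
    rw [← hQdn0 j]
    exact hmemV j 0 (Nat.zero_le _)
  have hVle_f : V ≤ Submodule.comap ((LieAlgebra.ad F g) f) V := by
    rw [hV, Submodule.span_le]
    rintro _ ⟨⟨j, n⟩, rfl⟩
    simp only [SetLike.mem_coe, Submodule.mem_comap, LieAlgebra.ad_apply]
    rcases Nat.eq_zero_or_pos ((n : ℕ)) with h0 | hpos
    · have hdn : dnf ⟨j, n⟩ = qf j := by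
        simp only [hdnf]
        rw [h0, hQdn0]
      rw [hdn, hqf j]
      exact zero_mem V
    · obtain ⟨m, hm⟩ : ∃ m, (n : ℕ) = m + 1 := ⟨(n : ℕ) - 1, by omega⟩
      have hdn : dnf ⟨j, n⟩ = Qdn j (m + 1) := by
        simp only [hdnf]
        rw [hm]
      have hle : m + 1 ≤ D j := by
        have := n.isLt
        omega
      rw [hdn, hFoQdn j m hle]
      exact neg_mem (hmemV j m (by omega))
  have hVle_x : V ≤ Submodule.comap ((LieAlgebra.ad F g) x) V := by
    rw [hV, Submodule.span_le]
    rintro _ ⟨⟨j, n⟩, rfl⟩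
    simp only [SetLike.mem_coe, Submodule.mem_comap, LieAlgebra.ad_apply]
    have hdn : dnf ⟨j, n⟩ = Qdn j (n : ℕ) := by simp only [hdnf]
    rw [hdn, hxQdnAll j (n : ℕ)]
    exact Submodule.smul_mem V _ (hmemV' j _)
  have hFinj : ∀ v : g, ⁅f, v⁆ ∈ V → v ∈ V := by
    intro v hv
    rw [hV] at hv
    obtain ⟨c, hc⟩ := (Submodule.mem_span_range_iff_exists_fun F).1 hv
    have ctop : ∀ j : ι, c ⟨j, ⟨D j, Nat.lt_succ_self _⟩⟩ = 0 := by
      intro j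
      have h1 : B (Qup j (D j)) ⁅f, v⁆ = 0 := by
        rw [hBsymm, aux_inv B hBinv f v (Qup j (D j)), hQupSucc,
          hQupTop j (D j + 1) (Nat.lt_succ_self _), map_zero, neg_zero]
      rw [← hc] at h1
      have h2 := hpair c j ⟨D j, Nat.lt_succ_self _⟩
      exact h2.symm.trans h1
    set v' : g := -∑ s : (Σ j : ι, Fin (D j + 1)), c s • Qdn s.1 ((s.2 : ℕ) + 1) with hv'
    have hv'mem : v' ∈ V := by
      rw [hv']
      exact neg_mem (Submodule.sum_mem V (fun s _ => Submodule.smul_mem V _ (hmemV' s.1 _)))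
    have hFv' : ⁅f, v'⁆ = ⁅f, v⁆ := by
      have had : ∀ z : g, ⁅f, z⁆ = (LieAlgebra.ad F g) f z := fun z =>
        (LieAlgebra.ad_apply F g f z).symm
      rw [had v', ← hc, hv', map_neg, map_sum, ← Finset.sum_neg_distrib]
      apply Finset.sum_congr rfl
      intro s _
      rw [map_smul]
      rcases Nat.lt_or_ge ((s.2 : ℕ) + 1) (D s.1 + 1) with hlt | hge
      · rw [← had, hFoQdn s.1 (s.2 : ℕ) (by omega)]
        simp only [hdnf]
        rw [smul_neg, neg_neg]
      · have hs2 : (s.2 : ℕ) = D s.1 := by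
          have := s.2.isLt
          omega
        have hseq : s = ⟨s.1, ⟨D s.1, Nat.lt_succ_self _⟩⟩ := by
          apply hsig
          · rfl
          · exact hs2
        have hc0 : c s = 0 := by
          rw [hseq]
          exact ctop s.1
        rw [hc0, zero_smul, zero_smul, neg_zero]
    have hvv : v - v' ∈ LinearMap.ker ((LieAlgebra.ad F g) f) := by
      rw [LinearMap.mem_ker, map_sub, LieAlgebra.ad_apply, LieAlgebra.ad_apply, hFv', sub_self]
    have hvsplit : v = (v - v') + v' := (sub_add_cancel v v').symm
    rw [hvsplit]
    exact add_mem (hkerV hvv) hv'mem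
  have hVtop : V = ⊤ := by
    set Fb := V.mapQ V ((LieAlgebra.ad F g) f) hVle_f with hFb
    set Xb := V.mapQ V ((LieAlgebra.ad F g) x) hVle_x with hXb
    have hFbinj : Function.Injective Fb := by
      rw [← LinearMap.ker_eq_bot, LinearMap.ker_eq_bot']
      intro m hm
      obtain ⟨v, rfl⟩ := Submodule.Quotient.mk_surjective V m
      rw [hFb, Submodule.mapQ_apply] at hm
      rw [Submodule.Quotient.mk_eq_zero] at hm ⊢
      exact hFinj v (by rwa [LieAlgebra.ad_apply] at hm)
    have hFbsurj : Function.Surjective Fb := (LinearMap.injective_iff_surjective).1 hFbinj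
    obtain ⟨G, hG⟩ := Fb.exists_rightInverse_of_surjective (LinearMap.range_eq_top.2 hFbsurj)
    have hGF : G ∘ₗ Fb = LinearMap.id := by
      apply LinearMap.ext
      intro m
      have h1 : Fb ((G ∘ₗ Fb) m) = Fb m := by
        rw [LinearMap.comp_apply]
        have := congrArg (fun (h : _ →ₗ[F] _) => h (Fb m)) hG
        simpa using this
      exact hFbinj h1
    have hcomm : Xb ∘ₗ Fb = Fb ∘ₗ Xb - Fb := by
      apply LinearMap.ext
      intro m
      obtain ⟨v, rfl⟩ := Submodule.Quotient.mk_surjective V m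
      have hb : (LieAlgebra.ad F g) x ((LieAlgebra.ad F g) f v)
          = (LieAlgebra.ad F g) f ((LieAlgebra.ad F g) x v) - (LieAlgebra.ad F g) f v := by
        simp only [LieAlgebra.ad_apply]
        rw [leibniz_lie, hxf, neg_lie]
        abel
      simp only [LinearMap.comp_apply, LinearMap.sub_apply, hFb, hXb, Submodule.mapQ_apply]
      rw [hb]
      rw [← Submodule.mkQ_apply, ← Submodule.mkQ_apply, ← Submodule.mkQ_apply, map_sub]
    have hXeq : Xb = Fb ∘ₗ (Xb ∘ₗ G) - LinearMap.id := by
      calc Xb = Xb ∘ₗ (Fb ∘ₗ G) := by rw [hG, LinearMap.comp_id]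
        _ = (Xb ∘ₗ Fb) ∘ₗ G := by rw [LinearMap.comp_assoc]
        _ = (Fb ∘ₗ Xb - Fb) ∘ₗ G := by rw [hcomm]
        _ = Fb ∘ₗ (Xb ∘ₗ G) - LinearMap.id := by
            rw [LinearMap.sub_comp, LinearMap.comp_assoc, hG]
    have htr := congrArg (LinearMap.trace F (g ⧸ V)) hXeq
    rw [map_sub] at htr
    have h2 : LinearMap.trace F (g ⧸ V) (Fb ∘ₗ (Xb ∘ₗ G)) = LinearMap.trace F (g ⧸ V) Xb := by
      have hrw : Fb ∘ₗ (Xb ∘ₗ G) = Fb * (Xb * G) := rfl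
      rw [hrw, LinearMap.trace_mul_comm, mul_assoc]
      have hGFb : G * Fb = (1 : Module.End F (g ⧸ V)) := hGF
      rw [hGFb, mul_one]
    rw [h2] at htr
    have hid0 : LinearMap.trace F (g ⧸ V) LinearMap.id = 0 := by linear_combination htr
    have hone : (LinearMap.trace F (g ⧸ V)) (1 : Module.End F (g ⧸ V))
        = (Module.finrank F (g ⧸ V) : F) := LinearMap.trace_one F (g ⧸ V)
    have hfr : (Module.finrank F (g ⧸ V) : F) = 0 := by
      rw [← hone]
      exact hid0
    have hfr0 : Module.finrank F (g ⧸ V) = 0 := Nat.cast_eq_zero.1 hfr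
    have hsub : Subsingleton (g ⧸ V) := Module.finrank_zero_iff.1 hfr0
    exact Submodule.Quotient.subsingleton_iff.1 hsub
  have htot : ⊤ ≤ Submodule.span F (Set.range dnf) := by
    rw [← hV, hVtop]
  set bb : Module.Basis (Σ j : ι, Fin (D j + 1)) F g := Module.Basis.mk hindep htot with hbb
  have hrepr : ∀ (u : g) (j : ι) (n : Fin (D j + 1)),
      bb.repr u ⟨j, n⟩ = B (Qup j (n : ℕ)) u := by
    intro u j n
    have hcoe : ∀ s, bb s = dnf s := fun s => by rw [hbb, Module.Basis.mk_apply]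
    have h1 := hpair (fun s => bb.repr u s) j n
    have h2 : (∑ s, bb.repr u s • dnf s) = u := by
      calc (∑ s, bb.repr u s • dnf s) = ∑ s, bb.repr u s • bb s := by
            apply Finset.sum_congr rfl
            intro s _
            rw [hcoe]
        _ = u := Module.Basis.sum_repr bb u
    rw [h2] at h1
    exact h1.symm
  -- Stage 3: coordinates
  have hreprQdn : ∀ (i : ι) (a : ℕ) (s : Σ j : ι, Fin (D j + 1)),
      bb.repr (Qdn i a) s = if s.1 = i ∧ (s.2 : ℕ) = a then 1 else 0 := by
    intro i a s
    obtain ⟨j', n'⟩ := s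
    dsimp only
    rw [hrepr]
    by_cases h : a ≤ D i
    · rw [hduality j' (n' : ℕ) i a h]
    · rw [hQdnBig i a (by omega), map_zero, if_neg]
      rintro ⟨rfl, h2⟩
      have := n'.isLt
      omega
  have hreprQup : ∀ (i : ι) (a : ℕ) (s : Σ j : ι, Fin (D j + 1)),
      bb.repr (Qup i a) s = B (Qup s.1 (s.2 : ℕ)) (Qup i a) := by
    intro i a s
    obtain ⟨j', n'⟩ := s
    exact hrepr _ j' n'
  have hmain : ∀ (s t : Σ j : ι, Fin (D j + 1)),
      (if s.1 ∈ Finset.univ.filter (fun i : ι =>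
            -(D i : ℤ) ≤ 2 - K ∧ 2 - K ≤ (D i : ℤ) ∧ ((D i : ℤ) - (2 - K)) % 2 = 0)
          ∧ (s.2 : ℕ) = ((D s.1 : ℤ) - (2 - K)).toNat / 2 + 1
        then B (Qup t.1 (t.2 : ℕ)) (Qup s.1 (((D s.1 : ℤ) - (2 - K)).toNat / 2)) else 0)
      = -(if t.1 ∈ Finset.univ.filter (fun j : ι =>
            -(D j : ℤ) ≤ K ∧ K ≤ (D j : ℤ) ∧ ((D j : ℤ) - K) % 2 = 0)
          ∧ (t.2 : ℕ) = ((D t.1 : ℤ) - K).toNat / 2 + 1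
        then B (Qup s.1 (s.2 : ℕ)) (Qup t.1 (((D t.1 : ℤ) - K).toNat / 2)) else 0) := by
    intro s t
    have ha : (s.2 : ℕ) ≤ D s.1 := Nat.lt_succ_iff.mp s.2.isLt
    have hb : (t.2 : ℕ) ≤ D t.1 := Nat.lt_succ_iff.mp t.2.isLt
    by_cases hL : s.1 ∈ Finset.univ.filter (fun i : ι =>
          -(D i : ℤ) ≤ 2 - K ∧ 2 - K ≤ (D i : ℤ) ∧ ((D i : ℤ) - (2 - K)) % 2 = 0)
        ∧ (s.2 : ℕ) = ((D s.1 : ℤ) - (2 - K)).toNat / 2 + 1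
    · by_cases hR : t.1 ∈ Finset.univ.filter (fun j : ι =>
            -(D j : ℤ) ≤ K ∧ K ≤ (D j : ℤ) ∧ ((D j : ℤ) - K) % 2 = 0)
          ∧ (t.2 : ℕ) = ((D t.1 : ℤ) - K).toNat / 2 + 1
      · rw [if_pos hL, if_pos hR]
        obtain ⟨hL1, hL2⟩ := hL
        obtain ⟨hR1, hR2⟩ := hR
        simp only [Finset.mem_filter, Finset.mem_univ, true_and] at hL1 hR1
        rw [hBsymm, hL2, hR2]
        exact hKEY s.1 t.1 (((D s.1 : ℤ) - (2 - K)).toNat / 2) (((D t.1 : ℤ) - K).toNat / 2)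
          (by omega) (by omega) (by omega) (by omega)
      · rw [if_pos hL, if_neg hR, neg_zero]
        obtain ⟨hL1, hL2⟩ := hL
        simp only [Finset.mem_filter, Finset.mem_univ, true_and] at hL1
        by_contra hne
        obtain ⟨hdd, hsum⟩ := hM0 t.1 (t.2 : ℕ) s.1 (((D s.1 : ℤ) - (2 - K)).toNat / 2) hne
        apply hR
        refine ⟨Finset.mem_filter.2 ⟨Finset.mem_univ _, by omega, by omega, by omega⟩, by omega⟩
    · by_cases hR : t.1 ∈ Finset.univ.filter (fun j : ι =>
            -(D j : ℤ) ≤ K ∧ K ≤ (D j : ℤ) ∧ ((D j : ℤ) - K) % 2 = 0)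
          ∧ (t.2 : ℕ) = ((D t.1 : ℤ) - K).toNat / 2 + 1
      · rw [if_neg hL, if_pos hR, eq_comm, neg_eq_zero]
        obtain ⟨hR1, hR2⟩ := hR
        simp only [Finset.mem_filter, Finset.mem_univ, true_and] at hR1
        by_contra hne
        obtain ⟨hdd, hsum⟩ := hM0 s.1 (s.2 : ℕ) t.1 (((D t.1 : ℤ) - K).toNat / 2) hne
        apply hL
        refine ⟨Finset.mem_filter.2 ⟨Finset.mem_univ _, by omega, by omega, by omega⟩, by omega⟩
      · rw [if_neg hL, if_neg hR, neg_zero]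
  apply (Module.Basis.tensorProduct bb bb).repr.injective
  ext p
  obtain ⟨s, t⟩ := p
  simp only [map_sum, map_neg, Finsupp.finset_sum_apply, Finsupp.neg_apply,
    Module.Basis.tensorProduct_repr_tmul_apply, smul_eq_mul, hreprQdn, hreprQup]
  simp only [mul_ite, ite_mul, mul_one, mul_zero, one_mul, zero_mul, ite_and]
  rw [Finset.sum_ite_eq, Finset.sum_ite_eq, ← ite_and, ← ite_and]
  exact hmain s t
end

section
/- Let g be a finite-dimensional simple Lie algebra with sl2-triple {e,h=2x,f} and f principal nilpotent. Then for every p, q ∈ g^f and every r ∈ g^e, the induced Poisson bracket on the Slodowy slice vanishes: (p | Φ^{(r)}([q,r])) = 0. Equivalently, the classical finite W-algebra of a principal nilpotent has zero Poisson bracket on its generators, recovering Kostant's theorem. -/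
open Module Finset

section Aux
variable {K : Type*} [Field K] [CharZero K]
  {V : Type*} [AddCommGroup V] [Module K V] [Module.Finite K V]

lemma aux_isNilpotent (X A : Module.End K V) (h : X * A - A * X = A) : IsNilpotent A := by
  by_contra hn
  have hpow : ∀ n : ℕ, A ^ (n + 1) ≠ 0 := fun n h0 => hn ⟨n + 1, h0⟩
  set Φ : Module.End K (Module.End K V) :=
    LinearMap.mulLeft K X - LinearMap.mulRight K X with hΦdef
  have hXA : X * A = A * X + A := by
    have := eq_add_of_sub_eq h
    rwa [add_comm] at this
  have hΦ : ∀ n : ℕ, Φ (A ^ (n + 1)) = ((n + 1 : ℕ) : K) • A ^ (n + 1) := by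
    intro n
    induction n with
    | zero =>
      simp only [hΦdef, LinearMap.sub_apply, LinearMap.mulLeft_apply,
        LinearMap.mulRight_apply, zero_add, pow_one, Nat.cast_one, one_smul]
      exact h
    | succ n ih =>
      have ih' : X * A ^ (n + 1) = A ^ (n + 1) * X + ((n + 1 : ℕ) : K) • A ^ (n + 1) := by
        have := ih
        simp only [hΦdef, LinearMap.sub_apply, LinearMap.mulLeft_apply,
          LinearMap.mulRight_apply] at this
        linear_combination (norm := module) this
      have : X * A ^ (n + 2) = A ^ (n + 2) * X + ((n + 2 : ℕ) : K) • A ^ (n + 2) := by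
        calc X * A ^ (n + 2) = (X * A) * A ^ (n + 1) := by rw [pow_succ', ← mul_assoc]
          _ = (A * X + A) * A ^ (n + 1) := by rw [hXA]
          _ = A * (X * A ^ (n + 1)) + A * A ^ (n + 1) := by rw [add_mul, mul_assoc]
          _ = A * (A ^ (n + 1) * X + ((n + 1 : ℕ) : K) • A ^ (n + 1)) + A * A ^ (n + 1) := by
              rw [ih']
          _ = A ^ (n + 2) * X + ((n + 2 : ℕ) : K) • A ^ (n + 2) := by
              rw [mul_add, ← mul_assoc, ← pow_succ', mul_smul_comm, ← pow_succ']
              push_cast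
              match_scalars <;> ring
      simp only [hΦdef, LinearMap.sub_apply, LinearMap.mulLeft_apply, LinearMap.mulRight_apply]
      linear_combination (norm := module) this
  have hev : ∀ n : ℕ, Φ.HasEigenvector ((n + 1 : ℕ) : K) (A ^ (n + 1)) := by
    intro n
    exact ⟨Module.End.mem_eigenspace_iff.mpr (hΦ n), hpow n⟩
  have hinj : Function.Injective (fun n : ℕ => ((n + 1 : ℕ) : K)) := by
    intro a b hab
    exact_mod_cast Nat.succ_injective (Nat.cast_injective hab)
  have li := Φ.eigenvectors_linearIndependent' (fun n : ℕ => ((n + 1 : ℕ) : K)) hinj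
    (fun n => A ^ (n + 1)) hev
  exact Module.Finite.not_linearIndependent_of_infinite _ li


lemma aux_comm (A X Y Z : Module.End K V) (h1 : A * X = X * A + Y)
    (h2 : A * Y = Y * A + Z) (h3 : A * Z = Z * A) :
    ∀ j : ℕ, A ^ (j + 2) * X
      = X * A ^ (j + 2) + ((j : K) + 2) • (Y * A ^ (j + 1))
        + ((((j : K) + 2) * ((j : K) + 1)) / 2) • (Z * A ^ j) := by
  have h1' : ∀ k : ℕ, A * (X * A ^ k) = X * A ^ (k + 1) + Y * A ^ k := by
    intro k
    rw [← mul_assoc, h1, add_mul, mul_assoc, ← pow_succ']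
  have h2' : ∀ k : ℕ, A * (Y * A ^ k) = Y * A ^ (k + 1) + Z * A ^ k := by
    intro k
    rw [← mul_assoc, h2, add_mul, mul_assoc, ← pow_succ']
  have h3' : ∀ k : ℕ, A * (Z * A ^ k) = Z * A ^ (k + 1) := by
    intro k
    rw [← mul_assoc, h3, mul_assoc, ← pow_succ']
  intro j
  induction j with
  | zero =>
    have e0 : A ^ (0 + 2) * X = A * (A * (X * A ^ 0)) := by
      rw [pow_zero, mul_one, show (0:ℕ) + 2 = 2 from rfl, pow_two, mul_assoc]
    rw [e0, h1' 0, mul_add, h1' 1, h2' 0]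
    simp only [zero_add, pow_one, pow_zero, mul_one]
    match_scalars <;> norm_num
  | succ j ih =>
    have e0 : A ^ (j + 1 + 2) * X = A * (A ^ (j + 2) * X) := by
      rw [show j + 1 + 2 = (j + 2) + 1 from rfl, pow_succ', mul_assoc]
    rw [e0, ih, mul_add, mul_add, mul_smul_comm, mul_smul_comm,
      h1' (j + 2), h2' (j + 1), h3' j,
      show j + 2 + 1 = j + 1 + 2 from rfl, show j + 1 + 1 = j + 2 from rfl]
    match_scalars <;> (push_cast; ring)

lemma aux_intertwine (A X Y Z : Module.End K V) (h1 : A * X = X * A + Y)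
    (h2 : A * Y = Y * A + Z) (h3 : A * Z = Z * A) (n : ℕ) (hA : A ^ n = 0) :
    (∑ i ∈ range (n + 2), ((Nat.factorial i : K))⁻¹ • A ^ i) * X
      = (X + Y + (2⁻¹ : K) • Z) * (∑ i ∈ range (n + 2), ((Nat.factorial i : K))⁻¹ • A ^ i) := by
  have hA1 : A ^ (n + 1) = 0 := by rw [pow_succ, hA, zero_mul]
  have hcomm := aux_comm A X Y Z h1 h2 h3
  have hfac2 : ∀ i : ℕ, (Nat.factorial (i + 2) : K)
      = ((i : K) + 2) * ((i : K) + 1) * (Nat.factorial i : K) := by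
    intro i
    have h : Nat.factorial (i + 2) = (i + 2) * ((i + 1) * Nat.factorial i) := by
      rw [Nat.factorial_succ, Nat.factorial_succ]
    rw [h]; push_cast; ring
  have hfac1 : ∀ i : ℕ, (Nat.factorial (i + 1) : K) = ((i : K) + 1) * (Nat.factorial i : K) := by
    intro i
    rw [Nat.factorial_succ]; push_cast; ring
  have hne2 : ∀ i : ℕ, ((i : K) + 2) ≠ 0 := by
    intro i
    have h : (((i + 2 : ℕ) : K)) ≠ 0 := Nat.cast_ne_zero.mpr (by omega)
    push_cast at h; exact h
  have hne1 : ∀ i : ℕ, ((i : K) + 1) ≠ 0 := by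
    intro i
    have h : (((i + 1 : ℕ) : K)) ≠ 0 := Nat.cast_ne_zero.mpr (by omega)
    push_cast at h; exact h
  have hfne : ∀ i : ℕ, (Nat.factorial i : K) ≠ 0 :=
    fun i => Nat.cast_ne_zero.mpr (Nat.factorial_ne_zero i)
  have base1 : ∀ i : ℕ, ((Nat.factorial (i + 1) : K)) * ((i : K) + 2)
      = (Nat.factorial (i + 2) : K) := by
    intro i; rw [hfac2 i, hfac1 i]; ring
  have base2 : ∀ i : ℕ, ((Nat.factorial i : K)) * ((((i : K) + 2) * ((i : K) + 1)))
      = (Nat.factorial (i + 2) : K) := by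
    intro i; rw [hfac2 i]; ring
  have c1 : ∀ i : ℕ, ((Nat.factorial (i + 2) : K))⁻¹ * ((i : K) + 2)
      = ((Nat.factorial (i + 1) : K))⁻¹ := by
    intro i
    rw [← base1 i, mul_inv, mul_assoc, inv_mul_cancel₀ (hne2 i), mul_one]
  have c2 : ∀ i : ℕ, ((Nat.factorial (i + 2) : K))⁻¹ * ((((i : K) + 2) * ((i : K) + 1)) / 2)
      = 2⁻¹ * ((Nat.factorial i : K))⁻¹ := by
    intro i
    have hab : ((((i : K) + 2) * ((i : K) + 1))) ≠ 0 := mul_ne_zero (hne2 i) (hne1 i)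
    rw [div_eq_mul_inv, ← base2 i, mul_inv, mul_assoc,
      ← mul_assoc ((((i : K) + 2) * ((i : K) + 1)))⁻¹, inv_mul_cancel₀ hab, one_mul, mul_comm]
  set S := ∑ i ∈ range (n + 2), ((Nat.factorial i : K))⁻¹ • A ^ i with hSdef
  have eL : S * X = ∑ i ∈ range (n + 2), ((Nat.factorial i : K))⁻¹ • (A ^ i * X) := by
    rw [hSdef, Finset.sum_mul]
    exact Finset.sum_congr rfl fun i _ => smul_mul_assoc _ _ _
  have eX : X * S = ∑ i ∈ range (n + 2), ((Nat.factorial i : K))⁻¹ • (X * A ^ i) := by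
    rw [hSdef, Finset.mul_sum]
    exact Finset.sum_congr rfl fun i _ => mul_smul_comm _ _ _
  have eY : Y * S = ∑ i ∈ range (n + 2), ((Nat.factorial i : K))⁻¹ • (Y * A ^ i) := by
    rw [hSdef, Finset.mul_sum]
    exact Finset.sum_congr rfl fun i _ => mul_smul_comm _ _ _
  have eZ : ((2⁻¹ : K) • Z) * S
      = ∑ i ∈ range (n + 2), (2⁻¹ * ((Nat.factorial i : K))⁻¹) • (Z * A ^ i) := by
    rw [hSdef, Finset.mul_sum]
    refine Finset.sum_congr rfl fun i _ => ?_
    rw [smul_mul_assoc, mul_smul_comm, smul_smul]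
  have peel : ∀ (g : ℕ → Module.End K V),
      ∑ i ∈ range (n + 2), g i = (∑ i ∈ range n, g (i + 2)) + g 1 + g 0 := by
    intro g
    rw [Finset.sum_range_succ' g (n + 1), Finset.sum_range_succ' (fun i => g (i + 1)) n]
  have eBig : ∑ i ∈ range n, ((Nat.factorial (i + 2) : K))⁻¹ • (A ^ (i + 2) * X)
      = (∑ i ∈ range n, ((Nat.factorial (i + 2) : K))⁻¹ • (X * A ^ (i + 2)))
        + (∑ i ∈ range n, ((Nat.factorial (i + 1) : K))⁻¹ • (Y * A ^ (i + 1)))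
        + ∑ i ∈ range n, (2⁻¹ * ((Nat.factorial i : K))⁻¹) • (Z * A ^ i) := by
    rw [← Finset.sum_add_distrib, ← Finset.sum_add_distrib]
    refine Finset.sum_congr rfl fun i _ => ?_
    rw [hcomm i, smul_add, smul_add, smul_smul, smul_smul, c1 i, c2 i]
  have eYsum : ∑ i ∈ range (n + 2), ((Nat.factorial i : K))⁻¹ • (Y * A ^ i)
      = (∑ i ∈ range n, ((Nat.factorial (i + 1) : K))⁻¹ • (Y * A ^ (i + 1))) + Y := by
    rw [Finset.sum_range_succ, hA1, mul_zero, smul_zero, add_zero,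
      Finset.sum_range_succ' _ n]
    simp only [Nat.factorial_zero, pow_zero, Nat.cast_one, inv_one, one_smul, mul_one]
  have eZsum : ∑ i ∈ range (n + 2), (2⁻¹ * ((Nat.factorial i : K))⁻¹) • (Z * A ^ i)
      = ∑ i ∈ range n, (2⁻¹ * ((Nat.factorial i : K))⁻¹) • (Z * A ^ i) := by
    rw [Finset.sum_range_succ, Finset.sum_range_succ, hA, hA1]
    simp
  rw [eL, add_mul, add_mul, eX, eY, eZ,
    peel (fun i => ((Nat.factorial i : K))⁻¹ • (A ^ i * X)),
    peel (fun i => ((Nat.factorial i : K))⁻¹ • (X * A ^ i)), eYsum, eZsum, eBig]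
  simp only [Nat.factorial_one, Nat.factorial_zero, Nat.cast_one, inv_one, one_smul,
    pow_one, pow_zero, mul_one, one_mul]
  rw [h1]
  abel

end Aux

section Aux2
variable {K : Type*} [Field K] [CharZero K]
  {V : Type*} [AddCommGroup V] [Module K V] [Module.Finite K V]

lemma aux_exp_unit (A : Module.End K V) (hA : IsNilpotent A) (N : ℕ) :
    IsUnit (∑ i ∈ range (N + 2), ((Nat.factorial i : K))⁻¹ • A ^ i) := by
  obtain ⟨k, hk⟩ := hA
  rw [Finset.sum_range_succ' _ (N + 1)]
  simp only [Nat.factorial_zero, pow_zero, Nat.cast_one, inv_one, one_smul]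
  refine IsNilpotent.isUnit_add_one ?_
  refine Commute.isNilpotent_sum (fun i _ => ?_) (fun i j _ _ => ?_)
  · refine IsNilpotent.smul ?_ _
    exact ⟨k, by rw [← pow_mul, mul_comm, pow_mul, hk, zero_pow (Nat.succ_ne_zero i)]⟩
  · exact ((Commute.pow_pow_self A (i + 1) (j + 1)).smul_left _).smul_right _

lemma aux_ker_le (E F H : Module.End K V) (hEF : E * F - F * E = H)
    (hHE : H * E - E * H = (2 : K) • E) (hHF : H * F - F * H = -((2 : K) • F))
    (hEn : IsNilpotent E) (hFn : IsNilpotent F) :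
    Module.finrank K (LinearMap.ker F) ≤ Module.finrank K (LinearMap.ker E) := by
  obtain ⟨n, hEn'⟩ := id hEn
  obtain ⟨m, hFn'⟩ := id hFn
  have hFm : (-F) ^ m = 0 := by rw [neg_pow, hFn', mul_zero]
  set e1 : Module.End K V := ∑ i ∈ range (n + 2), ((Nat.factorial i : K))⁻¹ • E ^ i with he1
  set e2 : Module.End K V := ∑ i ∈ range (m + 2), ((Nat.factorial i : K))⁻¹ • (-F) ^ i with he2
  -- basic rearrangements
  have hEF' : E * F = F * E + H := by rw [← hEF]; noncomm_ring
  have hEH : E * H = H * E + (-((2 : K) • E)) := by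
    rw [← hHE]; noncomm_ring
  have hEZ : E * (-((2 : K) • E)) = (-((2 : K) • E)) * E := by
    simp [mul_smul_comm, smul_mul_assoc]
  have hcoefE : (2⁻¹ : K) • (-((2 : K) • E)) = -E := by
    rw [smul_neg, smul_smul]; norm_num
  have hFE : (-F) * E = E * (-F) + H := by rw [← hEF]; noncomm_ring
  have hFH : (-F) * H = H * (-F) + (-((2 : K) • F)) := by
    rw [← hHF]; noncomm_ring
  have hFZ : (-F) * (-((2 : K) • F)) = (-((2 : K) • F)) * (-F) := by
    simp [mul_smul_comm, smul_mul_assoc]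
  have hcoefF : (2⁻¹ : K) • (-((2 : K) • F)) = -F := by
    rw [smul_neg, smul_smul]; norm_num
  -- intertwining relations
  have rEF : e1 * F = (F + H - E) * e1 := by
    have h := aux_intertwine E F H (-((2 : K) • E)) hEF' hEH hEZ n hEn'
    rw [← he1, hcoefE] at h
    rw [h]
    congr 1
    abel
  have rEH : e1 * H = (H - (2 : K) • E) * e1 := by
    have h0 : E * (-((2 : K) • E)) = (-((2 : K) • E)) * E + 0 := by rw [add_zero, hEZ]
    have h00 : E * (0 : Module.End K V) = 0 * E := by simp
    have h := aux_intertwine E H (-((2 : K) • E)) 0 hEH h0 h00 n hEn'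
    rw [← he1] at h
    rw [h]
    congr 1
    rw [smul_zero]
    abel
  have rEE : e1 * E = E * e1 := by
    rw [he1, Finset.sum_mul, Finset.mul_sum]
    refine Finset.sum_congr rfl fun i _ => ?_
    rw [smul_mul_assoc, mul_smul_comm, ← pow_succ, ← pow_succ']
  have rFE : e2 * E = (E + H - F) * e2 := by
    have h := aux_intertwine (-F) E H (-((2 : K) • F)) hFE hFH hFZ m hFm
    rw [← he2, hcoefF] at h
    rw [h]
    congr 1
    abel
  have rFH : e2 * H = (H - (2 : K) • F) * e2 := by
    have h0 : (-F) * (-((2 : K) • F)) = (-((2 : K) • F)) * (-F) + 0 := by rw [add_zero, hFZ]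
    have h00 : (-F) * (0 : Module.End K V) = 0 * (-F) := by simp
    have h := aux_intertwine (-F) H (-((2 : K) • F)) 0 hFH h0 h00 m hFm
    rw [← he2] at h
    rw [h]
    congr 1
    rw [smul_zero]
    abel
  have rFF : e2 * F = F * e2 := by
    rw [he2, Finset.sum_mul, Finset.mul_sum]
    refine Finset.sum_congr rfl fun i _ => ?_
    rw [smul_mul_assoc, mul_smul_comm, ((Commute.refl F).neg_left.pow_left i).eq]
  -- the Weyl group element
  set S := e1 * (e2 * e1) with hS
  have k2 : e2 * (F + H - E) = -(E * e2) := by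
    rw [mul_sub, mul_add, rFF, rFH, rFE]
    simp only [sub_mul, add_mul, smul_mul_assoc]
    match_scalars <;> ring
  have key : S * F = -(E * S) := by
    calc S * F = e1 * (e2 * (e1 * F)) := by rw [hS, mul_assoc, mul_assoc]
      _ = e1 * (e2 * ((F + H - E) * e1)) := by rw [rEF]
      _ = e1 * ((e2 * (F + H - E)) * e1) := by rw [← mul_assoc e2]
      _ = e1 * (-(E * e2) * e1) := by rw [k2]
      _ = -(e1 * (E * (e2 * e1))) := by simp only [neg_mul, mul_neg, mul_assoc]
      _ = -(E * S) := by rw [← mul_assoc, rEE, mul_assoc, hS]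
  -- S is invertible
  have hu1 : IsUnit e1 := by rw [he1]; exact aux_exp_unit E hEn n
  have hu2 : IsUnit e2 := by rw [he2]; exact aux_exp_unit (-F) (IsNilpotent.neg hFn) m
  have hSu : IsUnit S := by rw [hS]; exact hu1.mul (hu2.mul hu1)
  clear_value S e1 e2
  have hSbij : Function.Bijective S := (Module.End.isUnit_iff S).mp hSu
  -- restriction to kernels
  have hmap : ∀ v ∈ LinearMap.ker F, S v ∈ LinearMap.ker E := by
    intro v hv
    rw [LinearMap.mem_ker] at hv ⊢
    have h := LinearMap.congr_fun key v
    simp only [Module.End.mul_apply, hv, map_zero, LinearMap.neg_apply] at h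
    exact (neg_eq_zero.mp h.symm)
  have hinj : Function.Injective (S.restrict hmap) := by
    intro a b hab
    have h : S a.1 = S b.1 := by
      have := congrArg Subtype.val hab
      simpa [LinearMap.restrict_apply] using this
    exact Subtype.ext (hSbij.injective h)
  exact LinearMap.finrank_le_finrank_of_injective hinj

end Aux2



/-- for `f` principal nilpotent (its centralizer has minimal possible
dimension), the induced Poisson bracket on the Slodowy slice vanishes:
`(p | Φ^{(r)}([q,r])) = 0` for all `p, q ∈ g^f` and `r ∈ g^e` (Kostant's theorem).
Here `Φ^{(r)} = π_{g^e}∘(1+(ad r)∘(ad f)^{-1}∘π_{[f,g]})^{-1}` is encoded via the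
projection `pf` onto `[f,g]` along `g^e`, the map `sg = (ad f)^{-1}∘π_{[f,g]}`, and the
two-sided inverse `ps` of `1 + (ad r) ∘ sg`. -/
theorem principal_slice_bracket_vanishes
    {F : Type*} [Field F] [CharZero F]
    {g : Type*} [LieRing g] [LieAlgebra F g] [Module.Finite F g]
    [LieAlgebra.IsSimple F g]
    (e x f : g)
    (hxe : ⁅x, e⁆ = e) (hxf : ⁅x, f⁆ = -f) (hef : ⁅e, f⁆ = (2 : F) • x)
    (hprin : ∀ a : g,
      Module.finrank F (LinearMap.ker (LieAlgebra.ad F g f)) ≤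
        Module.finrank F (LinearMap.ker (LieAlgebra.ad F g a)))
    (B : LinearMap.BilinForm F g)
    (hBsymm : ∀ a b : g, B a b = B b a)
    (hBinv : ∀ a b c : g, B ⁅a, b⁆ c = B a ⁅b, c⁆)
    (hBnd : B.Nondegenerate)
    (r : g) (hre : ⁅e, r⁆ = 0)
    (pf sg ps : Module.End F g)
    (hpf1 : ∀ a : g, pf a ∈ LinearMap.range (LieAlgebra.ad F g f))
    (hpf2 : ∀ a : g, a - pf a ∈ LinearMap.ker (LieAlgebra.ad F g e))
    (hsg1 : ∀ a : g, sg a ∈ LinearMap.range (LieAlgebra.ad F g e))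
    (hsg2 : ∀ a : g, ⁅f, sg a⁆ = pf a)
    (hps1 : (1 + LieAlgebra.ad F g r * sg) * ps = 1)
    (hps2 : ps * (1 + LieAlgebra.ad F g r * sg) = 1)
    (Phi : Module.End F g) (hPhi : Phi = (1 - pf) * ps) :
    ∀ p q : g, ⁅f, p⁆ = 0 → ⁅f, q⁆ = 0 → B p (Phi ⁅q, r⁆) = 0 := by
  intro p q hfp hfq
  classical
  have adlie : ∀ a b : g,
      (LieAlgebra.ad F g a) * (LieAlgebra.ad F g b)
        - (LieAlgebra.ad F g b) * (LieAlgebra.ad F g a) = LieAlgebra.ad F g ⁅a, b⁆ := by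
    intro a b
    ext z
    simp only [LinearMap.sub_apply, Module.End.mul_apply, LieAlgebra.ad_apply]
    rw [leibniz_lie]
    abel
  have adsmul : ∀ (c : F) (a : g),
      LieAlgebra.ad F g (c • a) = c • LieAlgebra.ad F g a := by
    intro c a; ext z
    simp [LieAlgebra.ad_apply, smul_lie]
  have adneg : ∀ a : g, LieAlgebra.ad F g (-a) = -(LieAlgebra.ad F g a) := by
    intro a; ext z
    simp [LieAlgebra.ad_apply]
  -- nilpotency of ad e and ad f
  have hnilE : IsNilpotent (LieAlgebra.ad F g e) := by
    refine aux_isNilpotent (LieAlgebra.ad F g x) _ ?_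
    rw [adlie x e, hxe]
  have hnilF : IsNilpotent (LieAlgebra.ad F g f) := by
    refine aux_isNilpotent (-(LieAlgebra.ad F g x)) _ ?_
    have h := adlie x f
    rw [hxf, adneg] at h
    calc (-(LieAlgebra.ad F g x)) * (LieAlgebra.ad F g f)
          - (LieAlgebra.ad F g f) * (-(LieAlgebra.ad F g x))
        = -((LieAlgebra.ad F g x) * (LieAlgebra.ad F g f)
            - (LieAlgebra.ad F g f) * (LieAlgebra.ad F g x)) := by noncomm_ring
      _ = LieAlgebra.ad F g f := by rw [h, neg_neg]
  -- dim ker (ad e) ≤ dim ker (ad f)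
  have hfe : ⁅f, e⁆ = -((2 : F) • x) := by rw [← lie_skew, hef]
  have hbr1 : ⁅(⁅f, e⁆), f⁆ = (2 : F) • f := by
    rw [hfe, neg_lie, smul_lie, hxf, smul_neg, neg_neg]
  have hbr2 : ⁅(⁅f, e⁆), e⁆ = -((2 : F) • e) := by
    rw [hfe, neg_lie, smul_lie, hxe]
  have hHE : (LieAlgebra.ad F g ⁅f, e⁆) * (LieAlgebra.ad F g f)
      - (LieAlgebra.ad F g f) * (LieAlgebra.ad F g ⁅f, e⁆) = (2 : F) • (LieAlgebra.ad F g f) := by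
    rw [adlie, hbr1, adsmul]
  have hHF : (LieAlgebra.ad F g ⁅f, e⁆) * (LieAlgebra.ad F g e)
      - (LieAlgebra.ad F g e) * (LieAlgebra.ad F g ⁅f, e⁆)
        = -((2 : F) • (LieAlgebra.ad F g e)) := by
    rw [adlie, hbr2]
    ext z
    simp [LieAlgebra.ad_apply, smul_lie]
  have hk : Module.finrank F (LinearMap.ker (LieAlgebra.ad F g e))
      ≤ Module.finrank F (LinearMap.ker (LieAlgebra.ad F g f)) :=
    aux_ker_le (LieAlgebra.ad F g f) (LieAlgebra.ad F g e) (LieAlgebra.ad F g ⁅f, e⁆)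
      (adlie f e) hHE hHF hnilF hnilE
  -- submodule set-up
  set Ke := LinearMap.ker (LieAlgebra.ad F g e) with hKe
  set Rf := LinearMap.range (LieAlgebra.ad F g f) with hRf
  have hsup : Ke ⊔ Rf = ⊤ := by
    rw [eq_top_iff]
    intro a _
    exact Submodule.mem_sup.mpr ⟨a - pf a, hpf2 a, pf a, hpf1 a, by abel⟩
  have hrnf := LinearMap.finrank_range_add_finrank_ker (LieAlgebra.ad F g f)
  have hrne := LinearMap.finrank_range_add_finrank_ker (LieAlgebra.ad F g e)
  rw [← hRf] at hrnf
  rw [← hKe] at hrne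
  have hdim := Submodule.finrank_sup_add_finrank_inf_eq Ke Rf
  rw [hsup, finrank_top] at hdim
  have hbot : Ke ⊓ Rf = ⊥ := by
    have h0 : Module.finrank F ↥(Ke ⊓ Rf) = 0 := by omega
    exact Submodule.finrank_eq_zero.mp h0
  -- every element of Rf is fixed by pf
  have hfix : ∀ u, u ∈ Rf → pf u = u := by
    intro u hu
    have h1 : u - pf u ∈ Ke := hpf2 u
    have h2 : u - pf u ∈ Rf := Submodule.sub_mem _ hu (hpf1 u)
    have h3 : u - pf u ∈ Ke ⊓ Rf := ⟨h1, h2⟩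
    rw [hbot, Submodule.mem_bot] at h3
    exact (sub_eq_zero.mp h3).symm
  -- N := 1 + ad r ∘ sg is injective
  set N : Module.End F g := 1 + LieAlgebra.ad F g r * sg with hN
  have hNinj : Function.Injective N := by
    have hli : ∀ v, ps (N v) = v := by
      intro v
      have h := LinearMap.congr_fun hps2 v
      simpa [Module.End.mul_apply] using h
    exact Function.LeftInverse.injective hli
  -- the image of Rf under N equals the range of ad (f + r)
  have hVle : Rf.map N ≤ LinearMap.range (LieAlgebra.ad F g (f + r)) := by
    rintro _ ⟨u, hu, rfl⟩
    refine ⟨sg u, ?_⟩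
    have hNu : N u = u + ⁅r, sg u⁆ := by
      rw [hN]
      simp [Module.End.mul_apply, LieAlgebra.ad_apply]
    rw [LieAlgebra.ad_apply, add_lie, hsg2 u, hfix u hu, hNu]
  have hVrank : Module.finrank F ↥(Rf.map N) = Module.finrank F ↥Rf :=
    (LinearEquiv.finrank_eq (Submodule.equivMapOfInjective N hNinj Rf)).symm
  have hrnfr := LinearMap.finrank_range_add_finrank_ker (LieAlgebra.ad F g (f + r))
  have hprinfr := hprin (f + r)
  have hVeq : Rf.map N = LinearMap.range (LieAlgebra.ad F g (f + r)) := by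
    refine Submodule.eq_of_le_of_finrank_le hVle ?_
    rw [hVrank]
    omega
  -- the key membership
  have hmem : ⁅q, r⁆ ∈ Rf.map N := by
    rw [hVeq]
    refine ⟨-q, ?_⟩
    rw [LieAlgebra.ad_apply, lie_neg, add_lie, hfq, zero_add, ← lie_skew, neg_neg]
  obtain ⟨u, hu, hNu⟩ := hmem
  have hpsu : ps ⁅q, r⁆ = u := by
    rw [← hNu]
    have h := LinearMap.congr_fun hps2 u
    simpa [Module.End.mul_apply, hN] using h
  have hzero : Phi ⁅q, r⁆ = 0 := by
    rw [hPhi, Module.End.mul_apply, hpsu]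
    simp [hfix u hu]
  rw [hzero, map_zero]
end

section
/- Let g be a finite-dimensional simple Lie algebra with sl2-triple {e,h=2x,f}. If p, q ∈ g^f and either p or q lies in g^f_0 = g^f ∩ g_0, then for every r ∈ g^e the slice Poisson bracket satisfies {p,q}_S = [p,q], i.e., (p|Φ^{(r)}([q,r])) = ([p,q]|r). -/
/-- sl2 lemma: a lowest-weight vector of weight 0 is killed by `e`. -/
lemma aux_ep_zero {F : Type*} [Field F] [CharZero F]
    {g : Type*} [LieRing g] [LieAlgebra F g] [Module.Finite F g]
    (e x f : g) (hxe : ⁅x, e⁆ = e) (hef : ⁅e, f⁆ = (2 : F) • x)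
    (p : g) (hfp : ⁅f, p⁆ = 0) (hxp : ⁅x, p⁆ = 0) : ⁅e, p⁆ = 0 := by
  set w : ℕ → g := fun k => ((LieAlgebra.ad F g e) ^ k) ⁅e, p⁆ with hw
  have hw0 : w 0 = ⁅e, p⁆ := by simp [hw]
  have hwsucc : ∀ k, w (k + 1) = ⁅e, w k⁆ := by
    intro k
    simp only [hw, pow_succ', Module.End.mul_apply, LieAlgebra.ad_apply]
  have hfe : ⁅f, e⁆ = -((2 : F) • x) := by rw [← hef, lie_skew]
  have hx : ∀ k, ⁅x, w k⁆ = ((k : F) + 1) • w k := by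
    intro k
    induction k with
    | zero => rw [hw0, leibniz_lie, hxe, hxp, lie_zero, add_zero]; simp
    | succ k ih =>
      rw [hwsucc k, leibniz_lie, hxe, ih, lie_smul, ← hwsucc k]
      nth_rewrite 1 [← one_smul F (w (k + 1))]
      rw [← add_smul]
      congr 1
      push_cast
      ring
  have hf0 : ⁅f, w 0⁆ = 0 := by
    rw [hw0, leibniz_lie, hfe, hfp, lie_zero, add_zero, neg_lie, smul_lie, hxp,
      smul_zero, neg_zero]
  have hfk : ∀ k, ⁅f, w (k + 1)⁆ = (-(((k : F) + 1) * ((k : F) + 2))) • w k := by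
    intro k
    induction k with
    | zero =>
      rw [hwsucc 0, leibniz_lie, hfe, hf0, lie_zero, add_zero, neg_lie, smul_lie, hx 0]
      simp only [Nat.cast_zero, zero_add, one_smul]
      rw [← neg_smul]
      congr 1
      ring
    | succ k ih =>
      rw [hwsucc (k + 1), leibniz_lie, hfe, ih, lie_smul, ← hwsucc k, neg_lie, smul_lie,
        hx (k + 1), smul_smul, ← neg_smul, ← add_smul]
      congr 1
      push_cast
      ring
  have hex : ∃ N, w N = 0 := by
    by_contra hcon
    push_neg at hcon
    have hinj : Function.Injective (fun k : ℕ => ((k : F) + 1)) := by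
      intro a b hab
      simp only at hab
      exact_mod_cast Nat.cast_injective (add_right_cancel hab)
    have hev : ∀ k : ℕ, (LieAlgebra.ad F g x).HasEigenvector ((k : F) + 1) (w k) := by
      intro k
      refine ⟨Module.End.mem_eigenspace_iff.mpr ?_, hcon k⟩
      rw [LieAlgebra.ad_apply, hx k]
    have hli := (LieAlgebra.ad F g x).eigenvectors_linearIndependent'
      (fun k : ℕ => ((k : F) + 1)) hinj w hev
    exact Module.Finite.not_linearIndependent_of_infinite w hli
  have hdesc : ∀ k, w k = 0 → w 0 = 0 := by
    intro k
    induction k with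
    | zero => exact id
    | succ k ih =>
      intro hk
      apply ih
      have h := hfk k
      rw [hk, lie_zero] at h
      have h2 : (-(((k : F) + 1) * ((k : F) + 2))) ≠ 0 := by
        have h3 : (((k + 1 : ℕ) : F)) ≠ 0 := Nat.cast_ne_zero.mpr (by omega)
        have h4 : (((k + 2 : ℕ) : F)) ≠ 0 := Nat.cast_ne_zero.mpr (by omega)
        push_cast at h3 h4
        simp [h3, h4]
      rcases smul_eq_zero.mp h.symm with h5 | h5
      · exact absurd h5 h2
      · exact h5
  obtain ⟨N, hN⟩ := hex
  rw [← hw0]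
  exact hdesc N hN

/-- if `p, q ∈ g^f` and either `p` or `q` lies in `g^f_0 = g^f ∩ g_0`,
then for every `r ∈ g^e` the slice Poisson bracket satisfies
`(p | Φ^{(r)}([q,r])) = ([p,q] | r)`, i.e. `{p,q}_S = [p,q]`. -/
theorem slice_bracket_weight_one
    {F : Type*} [Field F] [CharZero F]
    {g : Type*} [LieRing g] [LieAlgebra F g] [Module.Finite F g]
    [LieAlgebra.IsSimple F g]
    (e x f : g)
    (hxe : ⁅x, e⁆ = e) (hxf : ⁅x, f⁆ = -f) (hef : ⁅e, f⁆ = (2 : F) • x)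
    (B : LinearMap.BilinForm F g)
    (hBsymm : ∀ a b : g, B a b = B b a)
    (hBinv : ∀ a b c : g, B ⁅a, b⁆ c = B a ⁅b, c⁆)
    (hBnd : B.Nondegenerate)
    (r : g) (hre : ⁅e, r⁆ = 0)
    (pf sg ps : Module.End F g)
    (hpf1 : ∀ a : g, pf a ∈ LinearMap.range (LieAlgebra.ad F g f))
    (hpf2 : ∀ a : g, a - pf a ∈ LinearMap.ker (LieAlgebra.ad F g e))
    (hsg1 : ∀ a : g, sg a ∈ LinearMap.range (LieAlgebra.ad F g e))
    (hsg2 : ∀ a : g, ⁅f, sg a⁆ = pf a)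
    (hps1 : (1 + LieAlgebra.ad F g r * sg) * ps = 1)
    (hps2 : ps * (1 + LieAlgebra.ad F g r * sg) = 1)
    (Phi : Module.End F g) (hPhi : Phi = (1 - pf) * ps) :
    ∀ p q : g, ⁅f, p⁆ = 0 → ⁅f, q⁆ = 0 →
      (⁅x, p⁆ = 0 ∨ ⁅x, q⁆ = 0) →
      B p (Phi ⁅q, r⁆) = B ⁅p, q⁆ r := by
  -- `B` vanishes on (ker ad e) × (im ad e)
  have hkerim : ∀ a b : g, ⁅e, a⁆ = 0 → B a (sg b) = 0 := by
    intro a b ha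
    obtain ⟨z, hz⟩ := hsg1 b
    rw [LieAlgebra.ad_apply] at hz
    have hae : ⁅a, e⁆ = 0 := by rw [← lie_skew, ha, neg_zero]
    rw [← hz, ← hBinv a e z, hae, map_zero, LinearMap.zero_apply]
  -- antisymmetry of `(pf ·, sg ·)` pairing
  have hanti : ∀ c d : g, B (pf c) (sg d) = - B (pf d) (sg c) := by
    intro c d
    calc B (pf c) (sg d) = B ⁅f, sg c⁆ (sg d) := by rw [hsg2]
      _ = B (-⁅sg c, f⁆) (sg d) := by rw [lie_skew]
      _ = - B (sg c) ⁅f, sg d⁆ := by rw [map_neg, LinearMap.neg_apply, hBinv]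
      _ = - B (pf d) (sg c) := by rw [hsg2, hBsymm]
  -- `sg` is skew-adjoint with respect to `B`
  have hsgskew : ∀ a b : g, B a (sg b) + B b (sg a) = 0 := by
    intro a b
    have hdecomp : ∀ c d : g, B c (sg d) = B (c - pf c) (sg d) - B (pf d) (sg c) := by
      intro c d
      have h2 : B c (sg d) = B (c - pf c) (sg d) + B (pf c) (sg d) := by
        rw [← LinearMap.add_apply, ← map_add, sub_add_cancel]
      rw [h2, hanti c d]; ring
    have he1 : ⁅e, a - pf a⁆ = 0 := by
      have := hpf2 a; rwa [LinearMap.mem_ker, LieAlgebra.ad_apply] at this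
    have he2 : ⁅e, b - pf b⁆ = 0 := by
      have := hpf2 b; rwa [LinearMap.mem_ker, LieAlgebra.ad_apply] at this
    rw [hdecomp a b, hdecomp b a, hkerim _ _ he1, hkerim _ _ he2, hanti a b]
    ring
  -- basic facts about `ps`
  have hps : ∀ v : g, v = ps v + ⁅r, sg (ps v)⁆ := by
    intro v
    have := LinearMap.congr_fun hps1 v
    simp only [Module.End.mul_apply, LinearMap.add_apply, Module.End.one_apply,
      LieAlgebra.ad_apply] at this
    exact this.symm
  have hPhiv : ∀ v : g, Phi v = ps v - pf (ps v) := by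
    intro v
    rw [hPhi]
    simp only [Module.End.mul_apply, LinearMap.sub_apply, Module.End.one_apply]
  -- for `p ∈ g^f`, `B p (pf c) = 0`
  have hpfkill : ∀ p c : g, ⁅f, p⁆ = 0 → B p (pf c) = 0 := by
    intro p c hfp
    have hpf' : ⁅p, f⁆ = 0 := by rw [← lie_skew, hfp, neg_zero]
    rw [← hsg2 c, ← hBinv p f (sg c), hpf', map_zero, LinearMap.zero_apply]
  -- main computation, assuming `⁅e, p⁆ = 0`
  have main : ∀ p q : g, ⁅f, p⁆ = 0 → ⁅e, p⁆ = 0 → B p (Phi ⁅q, r⁆) = B ⁅p, q⁆ r := by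
    intro p q hfp hep
    set u := ps ⁅q, r⁆ with hu
    have h1 : ⁅q, r⁆ = u + ⁅r, sg u⁆ := hps ⁅q, r⁆
    have hL : B p (Phi ⁅q, r⁆) = B p u - B p (pf u) := by
      rw [hPhiv]; exact map_sub _ _ _
    have hkill : B p (pf u) = 0 := hpfkill p u hfp
    have hR := congrArg (B p) h1
    rw [map_add] at hR
    have h2 : B p ⁅r, sg u⁆ = 0 := by
      obtain ⟨z, hz⟩ := hsg1 u
      rw [LieAlgebra.ad_apply] at hz
      have ha : B ⁅p, r⁆ (sg u) = B p ⁅r, sg u⁆ := hBinv p r (sg u)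
      have hb : B ⁅⁅p, r⁆, e⁆ z = B ⁅p, r⁆ ⁅e, z⁆ := hBinv ⁅p, r⁆ e z
      have hc : ⁅⁅p, r⁆, e⁆ = 0 := by
        rw [← lie_skew, leibniz_lie, hep, hre, zero_lie, lie_zero, add_zero, neg_zero]
      rw [← ha, ← hz, ← hb, hc, map_zero, LinearMap.zero_apply]
    have hinv : B ⁅p, q⁆ r = B p ⁅q, r⁆ := hBinv p q r
    linear_combination hL - hinv - hR - hkill - h2
  -- skew-symmetry of the slice bracket
  have skew : ∀ p q : g, ⁅f, p⁆ = 0 → ⁅f, q⁆ = 0 →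
      B p (Phi ⁅q, r⁆) = - B q (Phi ⁅p, r⁆) := by
    intro p q hfp hfq
    set m := ps ⁅q, r⁆ with hm
    set n := ps ⁅p, r⁆ with hn
    have hq' : ⁅q, r⁆ = m + ⁅r, sg m⁆ := hps ⁅q, r⁆
    have hp' : ⁅p, r⁆ = n + ⁅r, sg n⁆ := hps ⁅p, r⁆
    have hL1 : B p (Phi ⁅q, r⁆) = B p m - B p (pf m) := by
      rw [hPhiv]; exact map_sub _ _ _
    have hL2 : B q (Phi ⁅p, r⁆) = B q n - B q (pf n) := by
      rw [hPhiv]; exact map_sub _ _ _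
    have kill1 : B p (pf m) = 0 := hpfkill p m hfp
    have kill2 : B q (pf n) = 0 := hpfkill q n hfq
    have c1 := congrArg (B p) hq'
    rw [map_add] at c1
    have c2 := congrArg (B q) hp'
    rw [map_add] at c2
    have i1 : B ⁅p, q⁆ r = B p ⁅q, r⁆ := hBinv p q r
    have i2 : B ⁅q, p⁆ r = B q ⁅p, r⁆ := hBinv q p r
    have i3 : B ⁅p, r⁆ (sg m) = B p ⁅r, sg m⁆ := hBinv p r (sg m)
    have i4 : B ⁅q, r⁆ (sg n) = B q ⁅r, sg n⁆ := hBinv q r (sg n)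
    have j7 : B ⁅q, p⁆ r = - B ⁅p, q⁆ r := by
      rw [← lie_skew p q, map_neg, LinearMap.neg_apply, neg_neg]
    have e1 : B ⁅p, r⁆ (sg m) = B n (sg m) + B ⁅r, sg n⁆ (sg m) := by
      rw [hp', map_add, LinearMap.add_apply]
    have e2 : B ⁅q, r⁆ (sg n) = B m (sg n) + B ⁅r, sg m⁆ (sg n) := by
      rw [hq', map_add, LinearMap.add_apply]
    have a1 : B ⁅r, sg n⁆ (sg m) = B r ⁅sg n, sg m⁆ := hBinv r (sg n) (sg m)
    have a2 : B ⁅r, sg m⁆ (sg n) = B r ⁅sg m, sg n⁆ := hBinv r (sg m) (sg n)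
    have a3 : B r ⁅sg m, sg n⁆ = - B r ⁅sg n, sg m⁆ := by
      rw [← lie_skew (sg n) (sg m), map_neg, neg_neg]
    have e4 : B n (sg m) + B m (sg n) = 0 := hsgskew n m
    linear_combination hL1 - kill1 + hL2 - kill2 - c1 - c2 - i1 - i2 + j7 + i3 + i4
      - e1 - e2 - e4 - a1 - a2 - a3
  intro p q hfp hfq hcase
  rcases hcase with hxp | hxq
  · exact main p q hfp (aux_ep_zero e x f hxe hef p hfp hxp)
  · have heq : ⁅e, q⁆ = 0 := aux_ep_zero e x f hxe hef q hfq hxq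
    rw [skew p q hfp hfq, main q p hfq heq, ← lie_skew q p, map_neg,
      LinearMap.neg_apply, neg_neg]
end
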